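/- arXiv:2006.11226 — 7 statements merged into one kernel-verified Lean document; each statement's English description precedes it below -/
import Mathlib

section
/- Let f : ℝ^d → ℝ be convex and differentiable, and let (w_t)_{t≥0} be gradient descent iterates w_{t+1} := w_t − η∇f(w_t) with step size η > 0 satisfying f(w_{t+1}) − f(w_t) ≤ −(η/2)‖∇f(w_t)‖² for all t ≥ 0. Then for every w ∈ ℝ^d and every t, ‖w_{t+1} − w‖² ≤ ‖w_t − w‖² + 2η(f(w) − f(w_{t+1})); consequently lim_{t→∞} f(w_t) = inf_{w∈ℝ^d} f(w), and if the infimum of f is not attained then lim_{t→∞} ‖w_t‖ = ∞. -/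
open Filter Topology RealInnerProductSpace

lemma convex_grad_ineq {d : ℕ} {f : EuclideanSpace ℝ (Fin d) → ℝ}
    (hconv : ConvexOn ℝ Set.univ f) (hdiff : Differentiable ℝ f)
    (x y : EuclideanSpace ℝ (Fin d)) :
    ⟪gradient f x, y - x⟫ ≤ f y - f x := by
  set g : ℝ → ℝ := fun s => f (s • (y - x) + x) with hgdef
  have hline : ∀ s : ℝ, HasDerivAt (fun s : ℝ => s • (y - x) + x) (y - x) s := by
    intro s
    simpa using ((hasDerivAt_id s).smul_const (y - x)).add_const x
  have hg0 : HasDerivAt g (⟪gradient f x, y - x⟫) 0 := by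
    have hfd := ((hdiff x).hasGradientAt).hasFDerivAt
    have hfd' : HasFDerivAt f ((InnerProductSpace.toDual ℝ _) (gradient f x))
        ((fun s : ℝ => s • (y - x) + x) 0) := by simpa using hfd
    have := hfd'.comp_hasDerivAt 0 (hline 0)
    rw [InnerProductSpace.toDual_apply_apply] at this
    exact this
  have hgc : ConvexOn ℝ Set.univ g := by
    have h := hconv.comp_affineMap (AffineMap.lineMap (k := ℝ) x y)
    simp only [Set.preimage_univ] at h
    have heq : (f ∘ (AffineMap.lineMap (k := ℝ) x y)) = g := by
      funext s
      simp [hgdef, AffineMap.lineMap_apply]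
    rwa [heq] at h
  have hslope := hgc.le_slope_of_hasDerivAt (Set.mem_univ (0:ℝ)) (Set.mem_univ (1:ℝ))
    zero_lt_one hg0
  have : slope g 0 1 = f y - f x := by
    rw [slope_def_field]
    simp [hgdef]
  linarith [hslope.trans_eq this]

/-- Basic properties of gradient descent on a convex
differentiable function `f : ℝ^d → ℝ` with step size `η > 0` satisfying the
descent condition `f(w_{t+1}) − f(w_t) ≤ −(η/2)‖∇f(w_t)‖²`:
(a) for every `w` and `t`, `‖w_{t+1} − w‖² ≤ ‖w_t − w‖² + 2η(f(w) − f(w_{t+1}))`;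
(b) `f(w_t)` converges to `inf f` (phrased: it eventually goes below any value
that is not a lower bound of `f`);
(c) if the infimum of `f` is not attained then `‖w_t‖ → ∞`. -/
theorem gradient_descent_basic_properties
    {d : ℕ} (f : EuclideanSpace ℝ (Fin d) → ℝ)
    (hconv : ConvexOn ℝ Set.univ f)
    (hdiff : Differentiable ℝ f)
    (η : ℝ) (hη : 0 < η)
    (w : ℕ → EuclideanSpace ℝ (Fin d))
    (hgd : ∀ t : ℕ, w (t + 1) = w t - η • gradient f (w t))
    (hdesc : ∀ t : ℕ, f (w (t + 1)) - f (w t) ≤ -(η / 2) * ‖gradient f (w t)‖ ^ 2) :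
    (∀ (v : EuclideanSpace ℝ (Fin d)) (t : ℕ),
        ‖w (t + 1) - v‖ ^ 2 ≤ ‖w t - v‖ ^ 2 + 2 * η * (f v - f (w (t + 1)))) ∧
    (∀ c : ℝ, (∃ v, f v < c) → ∀ᶠ t in atTop, f (w t) < c) ∧
    ((∀ u, ∃ v, f v < f u) →
        Tendsto (fun t : ℕ => ‖w t‖) atTop atTop) := by
  have key : ∀ (v : EuclideanSpace ℝ (Fin d)) (t : ℕ),
      ‖w (t + 1) - v‖ ^ 2 ≤ ‖w t - v‖ ^ 2 + 2 * η * (f v - f (w (t + 1))) := by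
    intro v t
    set G := gradient f (w t) with hG
    set a := w t - v with ha
    have h1 : ⟪G, v - w t⟫ ≤ f v - f (w t) := convex_grad_ineq hconv hdiff (w t) v
    have h2 := hdesc t
    have hwt : w (t + 1) - v = a - η • G := by rw [hgd t, ha]; abel
    have hexp : ‖a - η • G‖ ^ 2 = ‖a‖ ^ 2 - 2 * (η * ⟪G, a⟫) + η ^ 2 * ‖G‖ ^ 2 := by
      rw [norm_sub_sq_real, real_inner_smul_right, real_inner_comm, norm_smul]
      simp [mul_pow, sq_abs]
    have hia : ⟪G, v - w t⟫ = -⟪G, a⟫ := by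
      rw [ha, ← inner_neg_right]; congr 1; abel
    rw [hwt, hexp]
    rw [hia] at h1
    nlinarith [h1, h2, hη]
  have hanti : Antitone (fun t => f (w t)) := by
    apply antitone_nat_of_succ_le
    intro t
    nlinarith [hdesc t, sq_nonneg ‖gradient f (w t)‖, hη.le,
      mul_nonneg (le_of_lt (half_pos hη)) (sq_nonneg ‖gradient f (w t)‖)]
  have partb : ∀ c : ℝ, (∃ v, f v < c) → ∀ᶠ t in atTop, f (w t) < c := by
    rintro c ⟨v, hv⟩
    have hT : ∃ T, f (w T) < c := by
      by_contra hT
      push_neg at hT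
      have hpos : 0 < 2 * η * (c - f v) := by
        apply mul_pos (by linarith) (by linarith)
      have step : ∀ t, ‖w (t + 1) - v‖ ^ 2 ≤ ‖w t - v‖ ^ 2 - 2 * η * (c - f v) := by
        intro t
        have := key v t
        have := hT (t + 1)
        nlinarith [hη]
      have bound : ∀ t : ℕ, ‖w t - v‖ ^ 2 ≤ ‖w 0 - v‖ ^ 2 - t * (2 * η * (c - f v)) := by
        intro t
        induction t with
        | zero => simp
        | succ n ih =>
          have := step n
          push_cast
          push_cast at ih
          linarith
      obtain ⟨n, hn⟩ := exists_nat_gt (‖w 0 - v‖ ^ 2 / (2 * η * (c - f v)))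
      have hn' : ‖w 0 - v‖ ^ 2 < n * (2 * η * (c - f v)) := by
        rw [div_lt_iff₀ hpos] at hn
        linarith
      have := bound n
      nlinarith [sq_nonneg ‖w n - v‖]
    obtain ⟨T, hTlt⟩ := hT
    filter_upwards [eventually_ge_atTop T] with t ht
    exact lt_of_le_of_lt (hanti ht) hTlt
  refine ⟨key, partb, ?_⟩
  intro hna
  rw [tendsto_atTop]
  by_contra hcon
  push_neg at hcon
  obtain ⟨b, hb⟩ := hcon
  obtain ⟨φ, hφmono, hφ⟩ := Filter.extraction_of_frequently_atTop hb
  have hmem : ∀ n, w (φ n) ∈ Metric.closedBall (0 : EuclideanSpace ℝ (Fin d)) b := by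
    intro n
    simp only [Metric.mem_closedBall, dist_zero_right]
    exact (hφ n).le
  obtain ⟨u, _, ψ, hψmono, hψtend⟩ :=
    (isCompact_closedBall (0 : EuclideanSpace ℝ (Fin d)) b).tendsto_subseq hmem
  have hf_tend : Tendsto (fun k => f (w (φ (ψ k)))) atTop (𝓝 (f u)) :=
    (hdiff.continuous.tendsto u).comp hψtend
  have hlb : ∀ t, f u ≤ f (w t) := by
    intro t
    apply le_of_tendsto hf_tend
    filter_upwards [eventually_ge_atTop t] with k hk
    have h1 : t ≤ φ (ψ k) := le_trans hk (le_trans (hψmono.le_apply) (hφmono.le_apply))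
    exact hanti h1
  obtain ⟨v, hv⟩ := hna u
  have hc : ∃ v', f v' < (f v + f u) / 2 := ⟨v, by linarith⟩
  obtain ⟨t, ht⟩ := (partb _ hc).exists
  have := hlb t
  linarith
end

section
/- Suppose the infimum of the empirical risk R over ℝ^d is not attained. Then for every B > 0 the regularized solution satisfies w̄(B)/B = −∇R(w̄(B))/‖∇R(w̄(B))‖; conversely, if ‖w‖ = B and w/B = −∇R(w)/‖∇R(w)‖, then w = w̄(B). -/
open Filter RealInnerProductSpace Set Topology

variable {F : Type*} [NormedAddCommGroup F] [InnerProductSpace ℝ F] [CompleteSpace F]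

lemma aux_inner_gradient (f : F → ℝ) (w u : F) :
    ⟪gradient f w, u⟫ = fderiv ℝ f w u := by
  rw [gradient, InnerProductSpace.toDual_symm_apply]

lemma aux_lineDeriv {f : F → ℝ} (hf : Differentiable ℝ f) (w v : F) (t : ℝ) :
    HasDerivAt (fun s : ℝ => f (w + s • (v - w)))
      (fderiv ℝ f (w + t • (v - w)) (v - w)) t := by
  have hγ : HasDerivAt (fun s : ℝ => w + s • (v - w)) (v - w) t := by
    simpa using ((hasDerivAt_id t).smul_const (v - w)).const_add w
  exact ((hf _).hasFDerivAt.comp_hasDerivAt t hγ)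

lemma aux_line_convex {f : F → ℝ} (hconv : ConvexOn ℝ Set.univ f) (w v : F) :
    ConvexOn ℝ Set.univ (fun s : ℝ => f (w + s • (v - w))) := by
  refine ⟨convex_univ, fun p _ q _ a b ha hb hab => ?_⟩
  have h1 : w + (a * p + b * q) • (v - w)
      = a • (w + p • (v - w)) + b • (w + q • (v - w)) := by
    rw [show w + (a * p + b * q) • (v - w)
        = (a + b) • w + (a * p + b * q) • (v - w) by rw [hab, one_smul]]
    module
  simp only [smul_eq_mul, h1]
  have := hconv.2 (mem_univ (w + p • (v - w))) (mem_univ (w + q • (v - w))) ha hb hab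
  simpa using this

lemma aux_grad_ineq {f : F → ℝ} (hconv : ConvexOn ℝ Set.univ f)
    (hf : Differentiable ℝ f) (w v : F) :
    f w + ⟪gradient f w, v - w⟫ ≤ f v := by
  have hd : HasDerivAt (fun s : ℝ => f (w + s • (v - w))) (⟪gradient f w, v - w⟫) 0 := by
    have := aux_lineDeriv hf w v 0
    rw [aux_inner_gradient]
    simpa using this
  have hs := (aux_line_convex hconv w v).le_slope_of_hasDerivAt (mem_univ (0:ℝ))
    (mem_univ (1:ℝ)) one_pos hd
  rw [slope_def_field] at hs
  simp at hs
  linarith [aux_inner_gradient f w (v - w), map_sub (fderiv ℝ f w) v w]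

lemma aux_dir_nonneg {f : F → ℝ} (hf : Differentiable ℝ f) {w v : F}
    (hmin : ∀ t : ℝ, t ∈ Set.Icc (0:ℝ) 1 → f w ≤ f (w + t • (v - w))) :
    0 ≤ ⟪gradient f w, v - w⟫ := by
  have hd : HasDerivAt (fun s : ℝ => f (w + s • (v - w))) (⟪gradient f w, v - w⟫) 0 := by
    have := aux_lineDeriv hf w v 0
    rw [aux_inner_gradient]
    simpa using this
  have hslope := hasDerivAt_iff_tendsto_slope.mp hd
  have h2 : Tendsto (slope (fun s : ℝ => f (w + s • (v - w))) 0) (𝓝[>] 0)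
      (𝓝 ⟪gradient f w, v - w⟫) :=
    hslope.mono_left (nhdsWithin_mono 0 (fun t ht => by simpa using ne_of_gt ht))
  refine ge_of_tendsto h2 ?_
  filter_upwards [Ioc_mem_nhdsGT_of_mem (Set.left_mem_Ico.mpr one_pos)] with t ht
  rw [slope_def_field]
  have h1 := hmin t ⟨ht.1.le, ht.2⟩
  have h0 : f (w + (0:ℝ) • (v - w)) = f w := by simp
  apply div_nonneg
  · simp only [h0]; linarith
  · linarith [ht.1]

section
set_option maxHeartbeats 1000000

/-- If the infimum of the empirical risk `R` is not attained,
then for every `B > 0` the regularized solution is collinear with the negative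
risk gradient: `w̄(B)/B = −∇R(w̄(B))/‖∇R(w̄(B))‖`; conversely, if `‖w‖ = B` and
`w/B = −∇R(w)/‖∇R(w)‖`, then `w = w̄(B)`. -/
theorem regularized_solution_collinear_with_gradient
    {d n : ℕ} (hn : 0 < n)
    (x : Fin n → EuclideanSpace ℝ (Fin d)) (y : Fin n → ℝ)
    (hx : ∀ i, ‖x i‖ ≤ 1) (hy : ∀ i, y i = 1 ∨ y i = -1)
    (ℓ : ℝ → ℝ)
    (hconv : ConvexOn ℝ Set.univ ℓ)
    (hdiff : Differentiable ℝ ℓ)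
    (hanti : StrictAnti ℓ)
    (hlim0 : Tendsto ℓ atTop (nhds 0))
    (R : EuclideanSpace ℝ (Fin d) → ℝ)
    (hR : R = fun w => (1 / (n : ℝ)) * ∑ i, ℓ (y i * ⟪w, x i⟫))
    (hunatt : ∀ u, ∃ v, R v < R u)
    (wbar : ℝ → EuclideanSpace ℝ (Fin d))
    (hwbar : ∀ B : ℝ, 0 ≤ B → ‖wbar B‖ ≤ B ∧ ∀ v, ‖v‖ ≤ B → R (wbar B) ≤ R v) :
    (∀ B : ℝ, 0 < B →
      B⁻¹ • wbar B = -(‖gradient R (wbar B)‖⁻¹ • gradient R (wbar B))) ∧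
    (∀ (B : ℝ) (v : EuclideanSpace ℝ (Fin d)), 0 < B → ‖v‖ = B →
      B⁻¹ • v = -(‖gradient R v‖⁻¹ • gradient R v) → v = wbar B) := by
  have hRdiff : Differentiable ℝ R := by
    rw [hR]
    apply Differentiable.const_mul
    apply Differentiable.fun_sum
    intro i _
    exact hdiff.comp ((differentiable_id.inner ℝ (differentiable_const (x i))).const_mul (y i))
  have hRconv : ConvexOn ℝ Set.univ R := by
    refine ⟨convex_univ, fun u _ v _ a b ha hb hab => ?_⟩
    simp only [hR, smul_eq_mul]
    have hterm : ∀ i, ℓ (y i * ⟪a • u + b • v, x i⟫)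
        ≤ a * ℓ (y i * ⟪u, x i⟫) + b * ℓ (y i * ⟪v, x i⟫) := by
      intro i
      have harg : y i * ⟪a • u + b • v, x i⟫
          = a • (y i * ⟪u, x i⟫) + b • (y i * ⟪v, x i⟫) := by
        rw [inner_add_left, real_inner_smul_left, real_inner_smul_left, smul_eq_mul,
          smul_eq_mul]
        ring
      rw [harg]
      simpa using hconv.2 (Set.mem_univ _) (Set.mem_univ _) ha hb hab
    calc (1 / (n:ℝ)) * ∑ i, ℓ (y i * ⟪a • u + b • v, x i⟫)
        ≤ (1 / (n:ℝ)) * ∑ i, (a * ℓ (y i * ⟪u, x i⟫) + b * ℓ (y i * ⟪v, x i⟫)) := by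
          apply mul_le_mul_of_nonneg_left (Finset.sum_le_sum fun i _ => hterm i)
            (by positivity)
      _ = a * ((1 / (n:ℝ)) * ∑ i, ℓ (y i * ⟪u, x i⟫))
          + b * ((1 / (n:ℝ)) * ∑ i, ℓ (y i * ⟪v, x i⟫)) := by
          rw [Finset.sum_add_distrib, ← Finset.mul_sum, ← Finset.mul_sum]
          ring
  have gi : ∀ w v, R w + ⟪gradient R w, v - w⟫ ≤ R v :=
    fun w v => aux_grad_ineq hRconv hRdiff w v
  have grad_ne : ∀ u, gradient R u ≠ 0 := by
    intro u h
    obtain ⟨v, hv⟩ := hunatt u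
    have := gi u v
    rw [h, inner_zero_left] at this
    linarith
  have hloc : ∀ (m : EuclideanSpace ℝ (Fin d)) (B : ℝ), ‖m‖ < B →
      (∀ u, ‖u‖ ≤ B → R m ≤ R u) → False := by
    intro m B hm hmin
    have hlm : IsLocalMin R m := by
      filter_upwards [Metric.ball_mem_nhds m (show (0:ℝ) < B - ‖m‖ by linarith)] with u hu
      apply hmin
      rw [Metric.mem_ball, dist_eq_norm] at hu
      calc ‖u‖ = ‖(u - m) + m‖ := by rw [sub_add_cancel]
        _ ≤ ‖u - m‖ + ‖m‖ := norm_add_le _ _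
        _ ≤ B := by linarith
    have hg0 : gradient R m = 0 := by
      rw [gradient, hlm.fderiv_eq_zero, map_zero]
    exact grad_ne m hg0
  constructor
  · intro B hB
    obtain ⟨hwle, hwmin⟩ := hwbar B hB.le
    set w := wbar B with hw
    set g := gradient R w with hg
    have hgne : g ≠ 0 := grad_ne w
    have hgpos : (0:ℝ) < ‖g‖ := norm_pos_iff.mpr hgne
    have hwnorm : ‖w‖ = B := by
      by_contra hne
      exact hloc w B (lt_of_le_of_ne hwle hne) hwmin
    have hdir : ∀ v, ‖v‖ ≤ B → 0 ≤ ⟪g, v - w⟫ := by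
      intro v hv
      apply aux_dir_nonneg hRdiff
      intro t ht
      apply hwmin
      calc ‖w + t • (v - w)‖ = ‖(1 - t) • w + t • v‖ := by congr 1; module
        _ ≤ ‖(1 - t) • w‖ + ‖t • v‖ := norm_add_le _ _
        _ = (1 - t) * ‖w‖ + t * ‖v‖ := by
            rw [norm_smul, norm_smul, Real.norm_eq_abs, Real.norm_eq_abs,
              abs_of_nonneg (by linarith [ht.2]), abs_of_nonneg ht.1]
        _ ≤ (1 - t) * B + t * B := by
            have h1 : (0:ℝ) ≤ 1 - t := by linarith [ht.2]
            have := mul_le_mul_of_nonneg_left hwle h1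
            have := mul_le_mul_of_nonneg_left hv ht.1
            linarith
        _ = B := by ring
    have hvnorm : ‖(B * ‖g‖⁻¹) • (-g)‖ = B := by
      rw [norm_smul, norm_neg, Real.norm_eq_abs, abs_of_nonneg (by positivity)]
      field_simp
    have h1 := hdir _ hvnorm.le
    rw [inner_sub_right] at h1
    have h2 : ⟪g, (B * ‖g‖⁻¹) • (-g)⟫ = -(B * ‖g‖) := by
      rw [real_inner_smul_right, inner_neg_right, real_inner_self_eq_norm_sq]
      field_simp
    have h3 : ⟪g, w⟫ ≤ -(B * ‖g‖) := by rw [h2] at h1; linarith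
    have hcs : ⟪-g, w⟫ = ‖-g‖ * ‖w‖ := by
      have hub := real_inner_le_norm (-g) w
      rw [inner_neg_left, norm_neg, hwnorm] at hub
      rw [inner_neg_left, norm_neg, hwnorm]
      linarith
    have key := inner_eq_norm_mul_iff_real.mp hcs
    rw [hwnorm, norm_neg] at key
    have hww : w = (‖g‖⁻¹ * B) • (-g) := by
      calc w = ‖g‖⁻¹ • (‖g‖ • w) := by
            rw [smul_smul, inv_mul_cancel₀ hgpos.ne', one_smul]
        _ = ‖g‖⁻¹ • (B • (-g)) := by rw [← key]
        _ = (‖g‖⁻¹ * B) • (-g) := by rw [smul_smul]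
    rw [hww, smul_smul, show B⁻¹ * (‖g‖⁻¹ * B) = ‖g‖⁻¹ by field_simp, smul_neg]
  · intro B v hB hvB hveq
    set g := gradient R v with hg
    have hgne : g ≠ 0 := grad_ne v
    have hgpos : (0:ℝ) < ‖g‖ := norm_pos_iff.mpr hgne
    have hv : v = (B * ‖g‖⁻¹) • (-g) := by
      calc v = B • (B⁻¹ • v) := by rw [smul_smul, mul_inv_cancel₀ hB.ne', one_smul]
        _ = B • (-(‖g‖⁻¹ • g)) := by rw [hveq]
        _ = (B * ‖g‖⁻¹) • (-g) := by rw [smul_neg, smul_smul, smul_neg]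
    have hinner_gv : ⟪g, v⟫ = -(B * ‖g‖) := by
      rw [hv, real_inner_smul_right, inner_neg_right, real_inner_self_eq_norm_sq]
      field_simp
    have hminv : ∀ u, ‖u‖ ≤ B → R v ≤ R u := by
      intro u hu
      have h1 := gi v u
      rw [inner_sub_right, hinner_gv] at h1
      have h2 : -(‖g‖ * B) ≤ ⟪g, u⟫ := by
        have h3 := real_inner_le_norm (-g) u
        rw [inner_neg_left, norm_neg] at h3
        nlinarith [norm_nonneg g]
      linarith
    obtain ⟨hwle, hwmin⟩ := hwbar B hB.le
    have heq : R v = R (wbar B) := le_antisymm (hminv _ hwle) (hwmin v hvB.le)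
    by_contra hne
    set m := (2:ℝ)⁻¹ • (v + wbar B) with hm
    have hpar := parallelogram_law_with_norm ℝ v (wbar B)
    have hsubpos : (0:ℝ) < ‖v - wbar B‖ := norm_pos_iff.mpr (sub_ne_zero.mpr hne)
    have hmlt : ‖m‖ < B := by
      have hmn : ‖m‖ = 2⁻¹ * ‖v + wbar B‖ := by
        rw [hm, norm_smul, Real.norm_eq_abs]
        norm_num
      have hwb : ‖wbar B‖ ≤ B := hwle
      have hwbsq : ‖wbar B‖ * ‖wbar B‖ ≤ B * B :=
        mul_self_le_mul_self (norm_nonneg _) hwb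
      rw [hvB] at hpar
      have h4 : ‖v + wbar B‖ * ‖v + wbar B‖ < (2*B) * (2*B) := by
        nlinarith [mul_pos hsubpos hsubpos]
      have h5 : ‖v + wbar B‖ < 2 * B := by
        nlinarith [norm_nonneg (v + wbar B), hB]
      rw [hmn]; linarith
    have hmmin : ∀ u, ‖u‖ ≤ B → R m ≤ R u := by
      intro u hu
      have hc := hRconv.2 (Set.mem_univ v) (Set.mem_univ (wbar B))
        (by norm_num : (0:ℝ) ≤ 2⁻¹) (by norm_num : (0:ℝ) ≤ 2⁻¹) (by norm_num)
      simp only [smul_eq_mul] at hc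
      have hme : m = (2:ℝ)⁻¹ • v + (2:ℝ)⁻¹ • wbar B := by rw [hm, smul_add]
      rw [← hme] at hc
      have := hminv u hu
      linarith [hc, heq]
    exact hloc m B hmlt hmmin

end
end

section
/- Suppose the training data is linearly separable, and the step size satisfies η ≤ 1/(2R(w_0)) and R(w_{t+1}) − R(w_t) ≤ −(η/2)‖∇R(w_t)‖² for all t. Then the limit lim_{t→∞} w_t/‖w_t‖ of the gradient descent direction exists if and only if the limit lim_{B→∞} w̄(B)/B of the regularization-path direction exists, and when they exist they are equal. -/
open Filter RealInnerProductSpace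
open Set


lemma sum_convexOn {F : Type*} [NormedAddCommGroup F] [InnerProductSpace ℝ F]
    {ι : Type*} (s : Finset ι) (g : ι → F → ℝ) (hg : ∀ i ∈ s, ConvexOn ℝ Set.univ (g i)) :
    ConvexOn ℝ Set.univ (fun w => ∑ i ∈ s, g i w) := by
  classical
  induction s using Finset.induction_on with
  | empty => simpa using convexOn_const (0:ℝ) convex_univ
  | insert a t hni ih =>
    have h1 := hg a (Finset.mem_insert_self a t)
    have h2 := ih (fun i hi => hg i (Finset.mem_insert_of_mem hi))
    have := h1.add h2
    simpa [Finset.sum_insert hni, Pi.add_def] using this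

lemma R_convex {F : Type*} [NormedAddCommGroup F] [InnerProductSpace ℝ F]
    {n : ℕ} (x : Fin n → F) (y : Fin n → ℝ) {ℓ : ℝ → ℝ} (hconv : ConvexOn ℝ Set.univ ℓ) :
    ConvexOn ℝ Set.univ (fun w : F => (1 / (n : ℝ)) * ∑ i, ℓ (y i * ⟪w, x i⟫)) := by
  have hterm : ∀ i : Fin n, ConvexOn ℝ Set.univ (fun w : F => ℓ (y i * ⟪w, x i⟫)) := by
    intro i
    let L : F →ₗ[ℝ] ℝ :=
      { toFun := fun w => y i * ⟪w, x i⟫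
        map_add' := by intro a b; simp only [inner_add_left]; ring
        map_smul' := by intro c a; simp only [LinearMap.coe_mk, AddHom.coe_mk, real_inner_smul_left, RingHom.id_apply, smul_eq_mul]; ring }
    have := hconv.comp_linearMap L
    simpa [L, Function.comp_def] using this
  have hsum := sum_convexOn Finset.univ (fun i (w : F) => ℓ (y i * ⟪w, x i⟫))
    (fun i _ => hterm i)
  have := hsum.smul (c := 1 / (n:ℝ)) (by positivity)
  simpa [smul_eq_mul] using this

lemma R_diff {F : Type*} [NormedAddCommGroup F] [InnerProductSpace ℝ F]
    {n : ℕ} (x : Fin n → F) (y : Fin n → ℝ) {ℓ : ℝ → ℝ} (hdiff : Differentiable ℝ ℓ) :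
    Differentiable ℝ (fun w : F => (1 / (n : ℝ)) * ∑ i, ℓ (y i * ⟪w, x i⟫)) := by
  apply Differentiable.const_mul
  apply Differentiable.fun_sum
  intro i _
  apply hdiff.comp
  apply Differentiable.const_mul
  have : (fun w : F => ⟪w, x i⟫) = fun w : F => ⟪x i, w⟫ := by
    funext w; exact real_inner_comm _ _
  rw [this]
  exact (innerSL ℝ (x i)).differentiable


lemma grad_ineq {F : Type*} [NormedAddCommGroup F] [InnerProductSpace ℝ F] [CompleteSpace F]
    {f : F → ℝ} (hconv : ConvexOn ℝ Set.univ f) (hdiff : Differentiable ℝ f) (w z : F) :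
    ⟪gradient f w, z - w⟫ ≤ f z - f w := by
  set v := z - w with hv
  have hg : HasDerivAt (fun s : ℝ => w + s • v) v 0 := by
    simpa using ((hasDerivAt_id (0:ℝ)).smul_const v).const_add w
  have hφ : HasDerivAt (fun s : ℝ => f (w + s • v)) (⟪gradient f w, v⟫) 0 := by
    have hf' : HasFDerivAt f (InnerProductSpace.toDual ℝ F (gradient f w)) w :=
      (hdiff w).hasGradientAt.hasFDerivAt
    have h2 : HasFDerivAt f (InnerProductSpace.toDual ℝ F (gradient f w)) (w + (0:ℝ) • v) := by
      simpa using hf'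
    have := h2.comp_hasDerivAt 0 hg
    simpa [Function.comp_def, InnerProductSpace.toDual_apply_apply] using this
  -- slope bound on (0,1)
  have key : ∀ s : ℝ, s ∈ Ioo (0:ℝ) 1 →
      slope (fun s : ℝ => f (w + s • v)) 0 s ≤ f z - f w := by
    intro s hs
    have h0 : (0:ℝ) ≤ 1 - s := by linarith [hs.2]
    have h1 : (0:ℝ) ≤ s := le_of_lt hs.1
    have hcv := hconv.2 (Set.mem_univ w) (Set.mem_univ z) h0 h1 (by ring)
    have harg : (1 - s) • w + s • z = w + s • v := by
      rw [hv]; module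
    rw [harg] at hcv
    rw [slope_def_field]
    have hw0 : w + (0:ℝ) • v = w := by simp
    rw [hw0, sub_zero, div_le_iff₀ hs.1]
    have hcv' : f (w + s • v) ≤ (1 - s) * f w + s * f z := by
      simpa [smul_eq_mul] using hcv
    nlinarith [hcv']
  have htend : Tendsto (slope (fun s : ℝ => f (w + s • v)) 0) (nhdsWithin 0 (Ioi 0)) (nhds (⟪gradient f w, v⟫)) := by
    have := hasDerivAt_iff_tendsto_slope.1 hφ
    exact this.mono_left (nhdsWithin_mono 0 (fun x hx => ne_of_gt hx))
  have hev : ∀ᶠ s in nhdsWithin (0:ℝ) (Ioi 0), slope (fun s : ℝ => f (w + s • v)) 0 s ≤ f z - f w := by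
    filter_upwards [Ioo_mem_nhdsGT_of_mem (by constructor <;> norm_num : (0:ℝ) ∈ Ico (0:ℝ) 1)] with s hs
    exact key s hs
  exact le_of_tendsto htend hev


set_option maxHeartbeats 1000000 in
lemma dir1 {F : Type*} [NormedAddCommGroup F] [InnerProductSpace ℝ F]
    (R : F → ℝ) (w : ℕ → F) (wbar : ℝ → F)
    (hRpos : ∀ v, 0 < R v)
    (hRanti : ∀ s t : ℕ, s ≤ t → R (w t) ≤ R (w s))
    (hKW : ∀ (z : F) (t₁ t₂ : ℕ), t₁ ≤ t₂ → R z ≤ R (w t₂) →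
      (‖w t₂‖^2 - ‖w t₁‖^2)/2 ≤ ⟪w t₂ - w t₁, z⟫)
    (hF1 : ∀ B : ℝ, 0 ≤ B → ∀ v, R v ≤ R (wbar B) → B^2 ≤ ⟪v, wbar B⟫)
    (hNORMEQ : ∀ B : ℝ, 0 ≤ B → ‖wbar B‖ = B)
    (hR0 : Tendsto (fun t => R (w t)) atTop (nhds 0))
    (hh : Tendsto (fun t => ‖w t‖) atTop atTop)
    (hSTEP : ∀ t, ‖w (t+1)‖ ≤ ‖w t‖ + 1)
    (hrB0 : Tendsto (fun B : ℝ => R (wbar B)) atTop (nhds 0))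
    (u : F) (hu : Tendsto (fun t : ℕ => ‖w t‖⁻¹ • w t) atTop (nhds u)) :
    Tendsto (fun B : ℝ => B⁻¹ • wbar B) atTop (nhds u) := by
  classical
  -- ‖u‖ = 1
  have hu1 : ‖u‖ = 1 := by
    have h1 : Tendsto (fun t : ℕ => ‖‖w t‖⁻¹ • w t‖) atTop (nhds ‖u‖) := hu.norm
    have h2 : ∀ᶠ t : ℕ in atTop, ‖‖w t‖⁻¹ • w t‖ = 1 := by
      filter_upwards [hh.eventually_ge_atTop 1] with t ht
      have ht0 : ‖w t‖ ≠ 0 := by positivity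
      rw [norm_smul, norm_inv, norm_norm, inv_mul_cancel₀ ht0]
    have h3 : Tendsto (fun _ : ℕ => (1:ℝ)) atTop (nhds ‖u‖) := h1.congr' h2
    exact tendsto_nhds_unique h3 tendsto_const_nhds
  rw [Metric.tendsto_nhds]
  intro ε hε
  set ε' : ℝ := min 1 (ε^2/4) with hε'def
  have hε'pos : 0 < ε' := by
    apply lt_min one_pos; positivity
  have hε'le1 : ε' ≤ 1 := min_le_left _ _
  set κ : ℝ := ε'/4 with hκdef
  have hκpos : 0 < κ := by positivity
  have hκle : κ ≤ 1/4 := by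
    rw [hκdef]; linarith only [hε'le1]
  set eh : ℝ := κ * ε' / 64 with hehdef
  have hehpos : 0 < eh := by positivity
  -- thresholds
  obtain ⟨Tdir, hTdir⟩ := eventually_atTop.mp (hu.eventually (Metric.ball_mem_nhds u hehpos) :
      ∀ᶠ t : ℕ in atTop, ‖w t‖⁻¹ • w t ∈ Metric.ball u eh)
  set M : ℝ := max (64/ε') ((1+κ) * (‖w Tdir‖ + ‖w 0‖ + 2)) with hMdef
  have hM64 : 64/ε' ≤ M := le_max_left _ _
  have hMpos : 0 < M := lt_of_lt_of_le (by positivity) hM64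
  obtain ⟨TM, hTM⟩ := eventually_atTop.mp (hh.eventually_ge_atTop M)
  set T₁ : ℕ := max Tdir TM with hT₁def
  -- eventual conditions on B
  have hevB : ∀ᶠ B : ℝ in atTop, (max 1 (64/ε') ≤ B) ∧ (R (wbar B) ≤ R (w 0)) ∧ (R (wbar B) ≤ R (w T₁)) := by
    have e1 : ∀ᶠ B : ℝ in atTop, max 1 (64/ε') ≤ B := eventually_ge_atTop _
    have e2 : ∀ᶠ B : ℝ in atTop, R (wbar B) ≤ R (w 0) := by
      filter_upwards [hrB0.eventually (eventually_lt_nhds (hRpos (w 0)))] with B hB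
      exact le_of_lt hB
    have e3 : ∀ᶠ B : ℝ in atTop, R (wbar B) ≤ R (w T₁) := by
      filter_upwards [hrB0.eventually (eventually_lt_nhds (hRpos (w T₁)))] with B hB
      exact le_of_lt hB
    filter_upwards [e1, e2, e3] with B h1 h2 h3
    exact ⟨h1, h2, h3⟩
  filter_upwards [hevB] with B hB
  obtain ⟨hB1', hB2, hB3⟩ := hB
  have hB1 : (1:ℝ) ≤ B := le_trans (le_max_left _ _) hB1'
  have hB64 : 64/ε' ≤ B := le_trans (le_max_right _ _) hB1'
  have hBpos : (0:ℝ) < B := lt_of_lt_of_le one_pos hB1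
  have hB0 : (0:ℝ) ≤ B := le_of_lt hBpos
  -- time horizon
  have hrBpos : 0 < R (wbar B) := hRpos _
  obtain ⟨TB, hTB⟩ := (hR0.eventually (eventually_lt_nhds hrBpos)).exists
  set P : ℕ → Prop := fun t => R (wbar B) ≤ R (w t) with hPdef
  set t₂ : ℕ := Nat.findGreatest P TB with ht₂def
  have hP0 : P 0 := hB2
  have hnPTB : ¬ P TB := not_le.mpr hTB
  have ht₂spec : P t₂ := Nat.findGreatest_spec (Nat.zero_le TB) hP0
  have ht₂le : t₂ ≤ TB := Nat.findGreatest_le TB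
  have ht₂lt : t₂ < TB := lt_of_le_of_ne ht₂le (by intro h; exact hnPTB (h ▸ ht₂spec))
  have ht₃ : ¬ P (t₂ + 1) := Nat.findGreatest_is_greatest (Nat.lt_succ_self t₂) ht₂lt
  have hT₁leTB : T₁ ≤ TB := by
    by_contra h
    push_neg at h
    exact absurd (le_trans hB3 (hRanti TB T₁ (le_of_lt h))) (not_le.mpr hTB)
  have hT₁let₂ : T₁ ≤ t₂ := Nat.le_findGreatest hT₁leTB hB3
  have hTdirlet₂ : Tdir ≤ t₂ := le_trans (le_max_left _ _) hT₁let₂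
  have hTMlet₂ : TM ≤ t₂ := le_trans (le_max_right _ _) hT₁let₂
  set h₂ : ℝ := ‖w t₂‖ with hh₂def
  have hh₂M : M ≤ h₂ := hTM t₂ hTMlet₂
  have hh₂pos : 0 < h₂ := lt_of_lt_of_le hMpos hh₂M
  -- t₁
  set Q : ℕ → Prop := fun t => (1+κ) * ‖w t‖ ≤ h₂ with hQdef
  have hQ0 : Q 0 := by
    have : (1+κ) * ‖w 0‖ ≤ M := by
      calc (1+κ) * ‖w 0‖ ≤ (1+κ) * (‖w Tdir‖ + ‖w 0‖ + 2) := by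
            apply mul_le_mul_of_nonneg_left _ (by linarith only [hκpos] : (0:ℝ) ≤ 1+κ)
            have := norm_nonneg (w Tdir); linarith only [this]
        _ ≤ M := le_max_right _ _
    exact le_trans this hh₂M
  set t₁ : ℕ := Nat.findGreatest Q t₂ with ht₁def
  have ht₁spec : Q t₁ := Nat.findGreatest_spec (Nat.zero_le t₂) hQ0
  have ht₁le : t₁ ≤ t₂ := Nat.findGreatest_le t₂
  have hnQt₂ : ¬ Q t₂ := by
    rw [hQdef]
    push_neg
    have : 0 < κ * h₂ := mul_pos hκpos hh₂pos
    linarith only [this, hh₂pos]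
  have ht₁lt : t₁ < t₂ := lt_of_le_of_ne ht₁le (by intro h; exact hnQt₂ (h ▸ ht₁spec))
  have ht₁succ : ¬ Q (t₁ + 1) := Nat.findGreatest_is_greatest (Nat.lt_succ_self t₁) ht₁lt
  have hTdirlet₁ : Tdir ≤ t₁ := by
    apply Nat.le_findGreatest hTdirlet₂
    rw [hQdef]
    calc (1+κ) * ‖w Tdir‖ ≤ (1+κ) * (‖w Tdir‖ + ‖w 0‖ + 2) := by
          apply mul_le_mul_of_nonneg_left _ (by linarith only [hκpos] : (0:ℝ) ≤ 1+κ)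
          have := norm_nonneg (w 0); linarith only [this]
      _ ≤ M := le_max_right _ _
      _ ≤ h₂ := hh₂M
  set h₁ : ℝ := ‖w t₁‖ with hh₁def
  have hh₁0 : 0 ≤ h₁ := norm_nonneg _
  have hQspec : (1+κ) * h₁ ≤ h₂ := ht₁spec
  have hh₁lb : h₂ - (1+κ) ≤ (1+κ) * h₁ := by
    have hstep := hSTEP t₁
    have hgt : h₂ < (1+κ) * ‖w (t₁+1)‖ := not_le.mp ht₁succ
    have hmul : (1+κ) * ‖w (t₁+1)‖ ≤ (1+κ) * (h₁ + 1) :=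
      mul_le_mul_of_nonneg_left hstep (by linarith only [hκpos] : (0:ℝ) ≤ 1+κ)
    have hexp : (1+κ) * (h₁ + 1) = (1+κ) * h₁ + (1+κ) := by ring
    linarith only [hgt, hmul, hexp.le]
  -- deviation bound
  have hdev : ∀ t : ℕ, Tdir ≤ t → 0 < ‖w t‖ → ‖w t - ‖w t‖ • u‖ ≤ ‖w t‖ * eh := by
    intro t ht hpos
    have h1 : ‖‖w t‖⁻¹ • w t - u‖ < eh := by
      have := hTdir t ht
      rwa [Metric.mem_ball, dist_eq_norm] at this
    have h2 : ‖w t - ‖w t‖ • u‖ = ‖w t‖ * ‖‖w t‖⁻¹ • w t - u‖ := by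
      rw [← Real.norm_of_nonneg (norm_nonneg (w t)), ← norm_smul, smul_sub,
        Real.norm_of_nonneg (norm_nonneg (w t)), smul_inv_smul₀ hpos.ne']
    rw [h2]
    exact mul_le_mul_of_nonneg_left h1.le (norm_nonneg _)
  -- p
  set p : ℝ := ⟪u, B⁻¹ • wbar B⟫ with hpdef
  have hBp : ⟪u, wbar B⟫ = B * p := by
    rw [hpdef, real_inner_smul_right]
    field_simp
  have hnuB : ‖B⁻¹ • wbar B‖ = 1 := by
    rw [norm_smul, norm_inv, Real.norm_of_nonneg hB0, hNORMEQ B hB0, inv_mul_cancel₀ hBpos.ne']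
  have hple1 : p ≤ 1 := by
    calc p ≤ ‖u‖ * ‖B⁻¹ • wbar B‖ := real_inner_le_norm _ _
      _ = 1 := by rw [hu1, hnuB, one_mul]
  -- decomposition
  have hdec : ∀ t : ℕ, Tdir ≤ t → 0 < ‖w t‖ →
      |⟪w t, wbar B⟫ - ‖w t‖ * (B * p)| ≤ ‖w t‖ * eh * B := by
    intro t ht hpos
    have h1 : ⟪w t, wbar B⟫ - ‖w t‖ * (B * p) = ⟪w t - ‖w t‖ • u, wbar B⟫ := by
      rw [inner_sub_left, real_inner_smul_left, hBp]
    rw [h1]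
    calc |⟪w t - ‖w t‖ • u, wbar B⟫| ≤ ‖w t - ‖w t‖ • u‖ * ‖wbar B‖ := abs_real_inner_le_norm _ _
      _ ≤ (‖w t‖ * eh) * B := by
          rw [hNORMEQ B hB0]
          exact mul_le_mul_of_nonneg_right (hdev t ht hpos) hB0
      _ = ‖w t‖ * eh * B := by ring
  have hM64' : (64:ℝ) ≤ M := by
    have : (64:ℝ) ≤ 64/ε' := by
      rw [le_div_iff₀ hε'pos]; linarith only [hε'le1, hε'pos]
    linarith only [this, hM64]
  have hh₁pos : 0 < h₁ := by
    have h2 : (0:ℝ) < 1+κ := by linarith only [hκpos]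
    have h3 : 0 < (1+κ) * h₁ := by linarith only [hh₁lb, hh₂M, hM64', hκle]
    by_contra hle
    push_neg at hle
    have : (1+κ) * h₁ ≤ 0 := mul_nonpos_of_nonneg_of_nonpos h2.le hle
    linarith only [this, h3]
  have hehB : 0 ≤ eh * B := mul_nonneg hehpos.le hB0
  -- Raw1 : KW window inequality
  have hRaw1 : (h₂^2 - h₁^2)/2 ≤ ⟪w t₂ - w t₁, wbar B⟫ :=
    hKW (wbar B) t₁ t₂ ht₁le ht₂spec
  have hdec₁ := abs_le.mp (hdec t₁ hTdirlet₁ hh₁pos)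
  have hdec₂ := abs_le.mp (hdec t₂ (le_trans (le_max_left _ _) hT₁let₂) hh₂pos)
  have hRaw1' : (h₂ - h₁)*(h₁ + h₂)/2 ≤ (h₂ - h₁)*(B*p) + (h₁+h₂)*(eh*B) := by
    have e1 : ⟪w t₂ - w t₁, wbar B⟫ = ⟪w t₂, wbar B⟫ - ⟪w t₁, wbar B⟫ := inner_sub_left _ _ _
    have := hRaw1
    rw [e1] at this
    linarith only [this, hdec₁.1, hdec₂.2]
  -- S1
  have hκ1 : (0:ℝ) < 1 + κ := by linarith only [hκpos]
  have hS_ub : h₁ ≤ h₂ := by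
    have : 0 ≤ κ * h₁ := mul_nonneg hκpos.le hh₁0
    linarith only [hQspec, this]
  have hS1 : (2+κ)*h₂ ≤ (1+κ)*(2+ε'/8)*B + 2 := by
    by_cases hcase : h₁ + h₂ ≤ 2*B
    · have e2 : (1+κ)*(h₁+h₂) ≤ (1+κ)*(2*B) :=
        mul_le_mul_of_nonneg_left hcase hκ1.le
      have e3 : (0:ℝ) ≤ (1+κ)*(ε'/8)*B := by positivity
      linarith only [hh₁lb, e2, e3, hκle]
    · push_neg at hcase
      have hD0 : 0 ≤ h₂ - h₁ := by linarith only [hS_ub]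
      have e1 : (h₂ - h₁)*(B*p) ≤ (h₂ - h₁)*B := by
        have := mul_le_mul_of_nonneg_left hple1 (mul_nonneg hD0 hB0)
        linarith only [this]
      have e2 : (h₂ - h₁)*((h₁+h₂)/2 - B) ≤ (h₁+h₂)*(eh*B) := by
        linarith only [hRaw1', e1]
      have e3 : (h₁+h₂)*(eh*B) ≤ (2*h₂)*(eh*B) := by
        apply mul_le_mul_of_nonneg_right _ hehB
        linarith only [hS_ub]
      have hD1 : κ*h₂ ≤ (1+κ)*(h₂ - h₁) := by linarith only [hQspec]
      have e4 : (κ*h₂)*((h₁+h₂)/2 - B) ≤ ((1+κ)*(h₂-h₁))*((h₁+h₂)/2 - B) := by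
        apply mul_le_mul_of_nonneg_right hD1
        linarith only [hcase]
      have e5 : ((1+κ)*(h₂-h₁))*((h₁+h₂)/2 - B) ≤ (1+κ)*((2*h₂)*(eh*B)) := by
        calc ((1+κ)*(h₂-h₁))*((h₁+h₂)/2 - B) = (1+κ)*((h₂-h₁)*((h₁+h₂)/2 - B)) := by ring
          _ ≤ (1+κ)*((h₁+h₂)*(eh*B)) := mul_le_mul_of_nonneg_left e2 hκ1.le
          _ ≤ (1+κ)*((2*h₂)*(eh*B)) := mul_le_mul_of_nonneg_left e3 hκ1.le
      have e6 : h₂*(κ*((h₁+h₂)/2 - B)) ≤ h₂*(2*(1+κ)*(eh*B)) := by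
        linarith only [e4, e5]
      have e7 : κ*((h₁+h₂)/2 - B) ≤ 2*(1+κ)*(eh*B) := le_of_mul_le_mul_left e6 hh₂pos
      have e8 : 2*(1+κ)*(eh*B) ≤ κ*((ε'/16)*B) := by
        rw [hehdef]
        have hpr : 0 ≤ κ*ε'*B*(1-2*κ) := by
          apply mul_nonneg (mul_nonneg (mul_nonneg hκpos.le hε'pos.le) hB0)
          linarith only [hκle]
        have hpr2 : 0 ≤ κ*κ*ε'*B := by positivity
        linarith only [hpr, hpr2]
      have e9 : κ*((h₁+h₂)/2 - B) ≤ κ*((ε'/16)*B) := le_trans e7 e8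
      have e10 : (h₁+h₂)/2 - B ≤ (ε'/16)*B := le_of_mul_le_mul_left e9 hκpos
      have e12 : (1+κ)*(h₁+h₂) ≤ (1+κ)*(2*B + (ε'/8)*B) := by
        apply mul_le_mul_of_nonneg_left _ hκ1.le
        linarith only [e10]
      linarith only [hh₁lb, e12, hκle]
  -- S1'
  have h64B : (64:ℝ) ≤ B * ε' := (div_le_iff₀ hε'pos).mp hB64
  have hS1' : (2+κ)*(h₂+1) ≤ (1+κ)*(2+ε'/4)*B := by
    have k1 : (0:ℝ) ≤ κ*(ε'/8)*B := by positivity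
    have k2 : (8:ℝ) ≤ (ε'/8)*B := by linarith only [h64B]
    linarith only [hS1, hκle, k1, k2]
  -- Raw2 via F1
  have ht₃R : R (w (t₂+1)) ≤ R (wbar B) := le_of_lt (not_le.mp ht₃)
  have hRaw2 : B^2 ≤ ⟪w (t₂+1), wbar B⟫ := hF1 B hB0 _ ht₃R
  set h₃ : ℝ := ‖w (t₂+1)‖ with hh₃def
  have hh₃pos : 0 < h₃ := lt_of_lt_of_le hMpos (hTM _ (le_trans hTMlet₂ (Nat.le_succ t₂)))
  have hdec₃ := abs_le.mp (hdec (t₂+1) (le_trans hTdirlet₂ (Nat.le_succ t₂)) hh₃pos)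
  have hRaw2' : B*B ≤ (h₃*(p+eh))*B := by
    linarith only [hRaw2, hdec₃.2, sq_nonneg B]
  have hBle : B ≤ h₃*(p+eh) := le_of_mul_le_mul_right hRaw2' hBpos
  have hpeh_pos : 0 < p + eh := by
    by_contra hc
    push_neg at hc
    have : h₃*(p+eh) ≤ 0 := mul_nonpos_of_nonneg_of_nonpos hh₃pos.le hc
    linarith only [this, hBle, hBpos]
  have hstep₂ : h₃ ≤ h₂ + 1 := hSTEP t₂
  have hBle2 : B ≤ (h₂+1)*(p+eh) :=
    le_trans hBle (mul_le_mul_of_nonneg_right hstep₂ hpeh_pos.le)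
  have hfin1 : (2+κ)*B ≤ ((1+κ)*(2+ε'/4)*(p+eh))*B := by
    have a1 : (2+κ)*B ≤ (2+κ)*((h₂+1)*(p+eh)) :=
      mul_le_mul_of_nonneg_left hBle2 (by linarith only [hκpos] : (0:ℝ) ≤ 2+κ)
    have a3 : ((2+κ)*(h₂+1))*(p+eh) ≤ ((1+κ)*(2+ε'/4)*B)*(p+eh) :=
      mul_le_mul_of_nonneg_right hS1' hpeh_pos.le
    linarith only [a1, a3]
  have hfin2 : (2+κ) ≤ (1+κ)*(2+ε'/4)*(p+eh) := le_of_mul_le_mul_right hfin1 hBpos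
  have hfin3 : 1 ≤ (1+κ)*(p+eh) := by
    have b2 : (2+κ)*1 ≤ (2+κ)*((1+κ)*(p+eh)) := by
      have e : (1+κ)*(2+ε'/4)*(p+eh) = (2+κ)*((1+κ)*(p+eh)) := by
        rw [hκdef]; ring
      linarith only [hfin2, e.le, e.ge]
    exact le_of_mul_le_mul_left b2 (by linarith only [hκpos] : (0:ℝ) < 2+κ)
  have hκp : κ*p ≤ κ := by
    have := mul_le_mul_of_nonneg_left hple1 hκpos.le
    linarith only [this]
  have hkeh : κ*eh ≤ eh := by
    have : (1-κ)*eh ≥ 0 := mul_nonneg (by linarith only [hκle]) hehpos.le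
    linarith only [this]
  have heh' : eh ≤ ε'/64 := by
    rw [hehdef]
    have : (1-κ)*(ε'/64) ≥ 0 := mul_nonneg (by linarith only [hκle]) (by positivity)
    linarith only [this]
  have hpfinal : 1 - ε' ≤ p := by
    have c1 : (1+κ)*(p+eh) = p + eh + κ*p + κ*eh := by ring
    have hκe : κ = ε'/4 := hκdef
    linarith only [hfin3, c1.le, c1.ge, hκp, hkeh, heh', hκe.le, hκe.ge, hε'pos]
  -- conclude
  rw [dist_eq_norm]
  have n1 : ‖B⁻¹ • wbar B - u‖^2 = ‖B⁻¹ • wbar B‖^2 - 2*⟪B⁻¹ • wbar B, u⟫ + ‖u‖^2 :=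
    norm_sub_sq_real _ _
  have n2 : ⟪B⁻¹ • wbar B, u⟫ = p := real_inner_comm _ _
  have n3 : ‖B⁻¹ • wbar B - u‖^2 = 2 - 2*p := by
    rw [n1, n2, hnuB, hu1]; ring
  have n4 : ‖B⁻¹ • wbar B - u‖^2 < ε^2 := by
    have : ε' ≤ ε^2/4 := min_le_right _ _
    have h5 : 2 - 2*p ≤ 2*ε' := by linarith only [hpfinal]
    have h6 : (0:ℝ) < ε^2 := by positivity
    linarith only [n3.le, n3.ge, h5, this, h6]
  exact lt_of_pow_lt_pow_left₀ 2 hε.le n4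


set_option maxHeartbeats 1000000 in
lemma dir2 {F : Type*} [NormedAddCommGroup F] [InnerProductSpace ℝ F]
    (R : F → ℝ) (w : ℕ → F) (wbar : ℝ → F)
    (hKW : ∀ (z : F) (t₁ t₂ : ℕ), t₁ ≤ t₂ → R z ≤ R (w t₂) →
      (‖w t₂‖^2 - ‖w t₁‖^2)/2 ≤ ⟪w t₂ - w t₁, z⟫)
    (hwmin : ∀ B : ℝ, 0 ≤ B → ∀ v, ‖v‖ ≤ B → R (wbar B) ≤ R v)
    (hNORMEQ : ∀ B : ℝ, 0 ≤ B → ‖wbar B‖ = B)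
    (hh : Tendsto (fun t => ‖w t‖) atTop atTop)
    (hSTEP : ∀ t, ‖w (t+1)‖ ≤ ‖w t‖ + 1)
    (u' : F) (hu' : Tendsto (fun B : ℝ => B⁻¹ • wbar B) atTop (nhds u')) :
    Tendsto (fun t : ℕ => ‖w t‖⁻¹ • w t) atTop (nhds u') := by
  classical
  have hu1 : ‖u'‖ = 1 := by
    have h1 : Tendsto (fun B : ℝ => ‖B⁻¹ • wbar B‖) atTop (nhds ‖u'‖) := hu'.norm
    have h2 : ∀ᶠ B : ℝ in atTop, ‖B⁻¹ • wbar B‖ = 1 := by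
      filter_upwards [eventually_ge_atTop (1:ℝ)] with B hB
      have hBpos : (0:ℝ) < B := lt_of_lt_of_le one_pos hB
      rw [norm_smul, norm_inv, Real.norm_of_nonneg hBpos.le, hNORMEQ B hBpos.le,
        inv_mul_cancel₀ hBpos.ne']
    have h3 : Tendsto (fun _ : ℝ => (1:ℝ)) atTop (nhds ‖u'‖) := h1.congr' h2
    exact tendsto_nhds_unique h3 tendsto_const_nhds
  set Y : ℕ → ℝ := fun t => ⟪w t, u'⟫ / ‖w t‖ with hYdef
  have hYabs : ∀ᶠ t : ℕ in atTop, |Y t| ≤ 1 := by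
    filter_upwards [hh.eventually_ge_atTop 1] with t ht
    have hpos : (0:ℝ) < ‖w t‖ := lt_of_lt_of_le one_pos ht
    rw [hYdef]
    simp only []
    rw [abs_div, abs_of_pos hpos, div_le_one hpos]
    calc |⟪w t, u'⟫| ≤ ‖w t‖ * ‖u'‖ := abs_real_inner_le_norm _ _
      _ = ‖w t‖ := by rw [hu1, mul_one]
  have hbdd1 : IsBoundedUnder (· ≤ ·) atTop Y :=
    isBoundedUnder_of_eventually_le (a := 1) (by filter_upwards [hYabs] with t ht; exact (abs_le.mp ht).2)
  have hbdd2 : IsBoundedUnder (· ≥ ·) atTop Y :=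
    isBoundedUnder_of_eventually_ge (a := -1) (by filter_upwards [hYabs] with t ht; exact (abs_le.mp ht).1)
  set L : ℝ := liminf Y atTop with hLdef
  -- main quantitative estimate
  have hLmain : ∀ ε' : ℝ, 0 < ε' → ε' ≤ 1 → 1 - ε' ≤ L := by
    intro ε' hε' hε'1
    have hδpos : (0:ℝ) < ε'^2/64 := by positivity
    -- thresholds
    have hevY : ∀ᶠ t : ℕ in atTop, L - ε'^2/64 < Y t :=
      eventually_lt_of_lt_liminf (by linarith) hbdd2
    obtain ⟨Tδ, hTδ⟩ := eventually_atTop.mp hevY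
    obtain ⟨Bhat, hBhat⟩ := eventually_atTop.mp
      (hu'.eventually (Metric.ball_mem_nhds u' hδpos))
    set M : ℝ := max (max (16/ε'^2) Bhat) ((1+ε'/2) * (‖w Tδ‖ + ‖w 0‖ + 2)) with hMdef
    have hM16 : 16/ε'^2 ≤ M := le_trans (le_max_left _ _) (le_max_left _ _)
    have hMB : Bhat ≤ M := le_trans (le_max_right _ _) (le_max_left _ _)
    have hMpos : 0 < M := lt_of_lt_of_le (by positivity) hM16
    obtain ⟨TM, hTM⟩ := eventually_atTop.mp (hh.eventually_ge_atTop M)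
    -- pick t₂
    have hfreq : ∃ᶠ t : ℕ in atTop, Y t < L + ε'^2/64 :=
      frequently_lt_of_liminf_lt (hbdd1.isCoboundedUnder_ge) (by linarith)
    obtain ⟨t₂, ht₂good, hYt₂⟩ :=
      ((eventually_ge_atTop (max TM Tδ)).and_frequently hfreq).exists
    have hTMt₂ : TM ≤ t₂ := le_trans (le_max_left _ _) ht₂good
    have hTδt₂ : Tδ ≤ t₂ := le_trans (le_max_right _ _) ht₂good
    set h₂ : ℝ := ‖w t₂‖ with hh₂def
    have hh₂M : M ≤ h₂ := hTM t₂ hTMt₂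
    have hh₂pos : 0 < h₂ := lt_of_lt_of_le hMpos hh₂M
    -- t₁
    set Q : ℕ → Prop := fun t => (1+ε'/2) * ‖w t‖ ≤ h₂ with hQdef
    have hQ0 : Q 0 := by
      have : (1+ε'/2) * ‖w 0‖ ≤ M := by
        calc (1+ε'/2) * ‖w 0‖ ≤ (1+ε'/2) * (‖w Tδ‖ + ‖w 0‖ + 2) := by
              apply mul_le_mul_of_nonneg_left _ (by linarith : (0:ℝ) ≤ 1+ε'/2)
              have := norm_nonneg (w Tδ); linarith
          _ ≤ M := le_max_right _ _
      exact le_trans this hh₂M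
    set t₁ : ℕ := Nat.findGreatest Q t₂ with ht₁def
    have ht₁spec : Q t₁ := Nat.findGreatest_spec (Nat.zero_le t₂) hQ0
    have ht₁le : t₁ ≤ t₂ := Nat.findGreatest_le t₂
    have hnQt₂ : ¬ Q t₂ := by
      rw [hQdef]
      push_neg
      have h5 : 0 < (ε'/2) * h₂ := by positivity
      linarith
    have ht₁lt : t₁ < t₂ := lt_of_le_of_ne ht₁le (by intro h; exact hnQt₂ (h ▸ ht₁spec))
    have ht₁succ : ¬ Q (t₁ + 1) := Nat.findGreatest_is_greatest (Nat.lt_succ_self t₁) ht₁lt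
    have hTδlet₁ : Tδ ≤ t₁ := by
      apply Nat.le_findGreatest hTδt₂
      rw [hQdef]
      calc (1+ε'/2) * ‖w Tδ‖ ≤ (1+ε'/2) * (‖w Tδ‖ + ‖w 0‖ + 2) := by
            apply mul_le_mul_of_nonneg_left _ (by linarith : (0:ℝ) ≤ 1+ε'/2)
            have := norm_nonneg (w 0); linarith
        _ ≤ M := le_max_right _ _
        _ ≤ h₂ := hh₂M
    set h₁ : ℝ := ‖w t₁‖ with hh₁def
    have hh₁0 : 0 ≤ h₁ := norm_nonneg _
    have hQspec : (1+ε'/2) * h₁ ≤ h₂ := ht₁spec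
    have hh₁lb : h₂ - (1+ε'/2) ≤ (1+ε'/2) * h₁ := by
      have hstep := hSTEP t₁
      have hgt : h₂ < (1+ε'/2) * ‖w (t₁+1)‖ := not_le.mp ht₁succ
      have hmul : (1+ε'/2) * ‖w (t₁+1)‖ ≤ (1+ε'/2) * (h₁ + 1) :=
        mul_le_mul_of_nonneg_left hstep (by linarith : (0:ℝ) ≤ 1+ε'/2)
      nlinarith [hgt, hmul]
    -- KW window with z = wbar h₂
    have hcond : R (wbar h₂) ≤ R (w t₂) := hwmin h₂ hh₂pos.le (w t₂) (le_refl _)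
    have hW : (h₂^2 - h₁^2)/2 ≤ ⟪w t₂ - w t₁, wbar h₂⟫ := hKW (wbar h₂) t₁ t₂ ht₁le hcond
    -- decompose
    have hsm : ⟪w t₂ - w t₁, wbar h₂⟫ = h₂ * ⟪w t₂ - w t₁, h₂⁻¹ • wbar h₂⟫ := by
      rw [real_inner_smul_right]
      have : h₂ * (h₂⁻¹ * ⟪w t₂ - w t₁, wbar h₂⟫) = (h₂ * h₂⁻¹) * ⟪w t₂ - w t₁, wbar h₂⟫ := by ring
      rw [this, mul_inv_cancel₀ hh₂pos.ne', one_mul]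
    have hνclose : ‖h₂⁻¹ • wbar h₂ - u'‖ ≤ ε'^2/64 := by
      have := hBhat h₂ (le_trans hMB hh₂M)
      rw [dist_eq_norm] at this
      exact this.le
    have hsplit : ⟪w t₂ - w t₁, h₂⁻¹ • wbar h₂⟫ ≤ ⟪w t₂ - w t₁, u'⟫ + (h₁ + h₂) * (ε'^2/64) := by
      have e1 : ⟪w t₂ - w t₁, h₂⁻¹ • wbar h₂⟫ - ⟪w t₂ - w t₁, u'⟫
          = ⟪w t₂ - w t₁, h₂⁻¹ • wbar h₂ - u'⟫ := by rw [inner_sub_right]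
      have e2 : ⟪w t₂ - w t₁, h₂⁻¹ • wbar h₂ - u'⟫ ≤ ‖w t₂ - w t₁‖ * ‖h₂⁻¹ • wbar h₂ - u'‖ :=
        real_inner_le_norm _ _
      have e3 : ‖w t₂ - w t₁‖ ≤ h₂ + h₁ := norm_sub_le _ _
      have e4 : ‖w t₂ - w t₁‖ * ‖h₂⁻¹ • wbar h₂ - u'‖ ≤ (h₂ + h₁) * (ε'^2/64) := by
        apply mul_le_mul e3 hνclose (norm_nonneg _) (by linarith [norm_nonneg (w t₂), hh₁0])
      linarith [e1.le, e1.ge, e2, e4]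
    -- X values
    have hh₁pos : 0 < h₁ := by
      have h3 : 0 < (1+ε'/2) * h₁ := by
        have : (16:ℝ) ≤ 16/ε'^2 := by
          rw [le_div_iff₀ (by positivity)]
          nlinarith
        linarith [hh₁lb, hh₂M, hM16]
      nlinarith [h3]
    have hX₂ : ⟪w t₂, u'⟫ = Y t₂ * h₂ := by
      rw [hYdef]; exact (div_mul_cancel₀ _ hh₂pos.ne').symm
    have hX₁ : ⟪w t₁, u'⟫ = Y t₁ * h₁ := by
      rw [hYdef]; exact (div_mul_cancel₀ _ hh₁pos.ne').symm
    have hY₁ : L - ε'^2/64 < Y t₁ := hTδ t₁ hTδlet₁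
    -- master inequality
    have hXsplit : ⟪w t₂ - w t₁, u'⟫ = Y t₂ * h₂ - Y t₁ * h₁ := by
      rw [inner_sub_left, hX₂, hX₁]
    have hmaster : (h₂^2 - h₁^2)/2 ≤ h₂ * (Y t₂ * h₂ - Y t₁ * h₁ + (h₁ + h₂) * (ε'^2/64)) := by
      rw [hsm] at hW
      have := mul_le_mul_of_nonneg_left (le_trans hsplit (by rw [hXsplit])) hh₂pos.le
      calc (h₂^2 - h₁^2)/2 ≤ h₂ * ⟪w t₂ - w t₁, h₂⁻¹ • wbar h₂⟫ := hW
        _ ≤ h₂ * (Y t₂ * h₂ - Y t₁ * h₁ + (h₁ + h₂) * (ε'^2/64)) := this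
    -- replace Y by L bounds
    have hY₂L : Y t₂ ≤ L + ε'^2/64 := hYt₂.le
    have hY₁L : L - ε'^2/64 ≤ Y t₁ := hY₁.le
    have hp0 : 0 ≤ (ε'/2) * h₁ := by positivity
    have hD0 : 0 ≤ h₂ - h₁ := by linarith only [hQspec, hp0]
    have hmaster2 : (h₂-h₁) * (h₁ + h₂) / 2 ≤ L * (h₂ * (h₂-h₁)) + (ε'^2/32) * (h₂*h₂) + (ε'^2/32) * (h₁*h₂) := by
      have b1 : h₂ * (Y t₂ * h₂) ≤ h₂ * ((L + ε'^2/64) * h₂) := by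
        apply mul_le_mul_of_nonneg_left _ hh₂pos.le
        exact mul_le_mul_of_nonneg_right hY₂L hh₂pos.le
      have b2 : h₂ * ((L - ε'^2/64) * h₁) ≤ h₂ * (Y t₁ * h₁) := by
        apply mul_le_mul_of_nonneg_left _ hh₂pos.le
        exact mul_le_mul_of_nonneg_right hY₁L hh₁0
      linarith only [hmaster, b1, b2]
    have hS_ub : h₁ ≤ h₂ := by linarith only [hQspec, hp0]
    have hq1 : (ε'^2/32)*(h₁*h₂) ≤ (ε'^2/32)*(h₂*h₂) :=
      mul_le_mul_of_nonneg_left (mul_le_mul_of_nonneg_right hS_ub hh₂pos.le) (by positivity)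
    have hmaster3 : (h₂-h₁)*(h₁+h₂)/2 ≤ L*(h₂*(h₂-h₁)) + (ε'^2/16)*(h₂*h₂) := by
      linarith only [hmaster2, hq1]
    have hSlb : (2+ε'/2)*h₂ - (1+ε'/2) ≤ (1+ε'/2)*(h₁+h₂) := by
      linarith only [hh₁lb]
    have c1 : (h₂-h₁)*((2+ε'/2)*h₂ - (1+ε'/2)) ≤ (h₂-h₁)*((1+ε'/2)*(h₁+h₂)) :=
      mul_le_mul_of_nonneg_left hSlb hD0
    have hA : (2+ε')*((h₂-h₁)*(h₁+h₂)/2) ≤ (2+ε')*(L*(h₂*(h₂-h₁)) + (ε'^2/16)*(h₂*h₂)) :=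
      mul_le_mul_of_nonneg_left hmaster3 (by linarith only [hε'] : (0:ℝ) ≤ 2+ε')
    have q1 : 0 ≤ ε'*(h₂-h₁) := mul_nonneg hε'.le hD0
    have r1 : 0 ≤ (1-ε')*(h₂-h₁) := mul_nonneg (by linarith only [hε'1]) hD0
    have hD4 : ε'*h₂ ≤ 4*(h₂-h₁) := by
      linarith only [hQspec, q1, r1, hD0]
    have c3 : ((3/2)*ε'*h₂)*(ε'*h₂) ≤ ((3/2)*ε'*h₂)*(4*(h₂-h₁)) :=
      mul_le_mul_of_nonneg_left hD4 (by positivity)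
    have c4 : 16 ≤ h₂ * ε'^2 := (div_le_iff₀ (by positivity)).mp (le_trans hM16 hh₂M)
    have c5 : 16*h₂ ≤ (h₂*ε'^2)*h₂ := mul_le_mul_of_nonneg_right c4 hh₂pos.le
    have p1 : 0 ≤ (ε'*ε')*((h₂-h₁)*h₂) :=
      mul_nonneg (by positivity) (mul_nonneg hD0 hh₂pos.le)
    have p2 : 0 ≤ (1-ε'/2)*(h₂-h₁) := mul_nonneg (by linarith only [hε'1]) hD0
    have p3 : 0 ≤ (1-ε')*(ε'^2*(h₂*h₂)) := mul_nonneg (by linarith only [hε'1]) (by positivity)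
    have key : (2+ε')*((1-ε')*(h₂*(h₂-h₁))) ≤ (2+ε')*(L*(h₂*(h₂-h₁))) := by
      linarith only [hA, c1, c3, c5, hh₁0, hh₂pos.le, hD0, p1, p2, p3]
    have hL' : (1-ε')*(h₂*(h₂-h₁)) ≤ L*(h₂*(h₂-h₁)) :=
      le_of_mul_le_mul_left key (by linarith only [hε'] : (0:ℝ) < 2+ε')
    have hDpos : 0 < h₂ - h₁ := by
      have : 0 < ε'*h₂ := by positivity
      linarith only [this, hD4]
    exact le_of_mul_le_mul_right hL' (mul_pos hh₂pos hDpos)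
  -- conclude 1 ≤ L
  have hL1 : (1:ℝ) ≤ L := by
    by_contra hc
    push_neg at hc
    have he1 : 0 < min 1 ((1-L)/2) := lt_min one_pos (by linarith)
    have he2 : min 1 ((1-L)/2) ≤ 1 := min_le_left _ _
    have := hLmain (min 1 ((1-L)/2)) he1 he2
    have h3 : min 1 ((1-L)/2) ≤ (1-L)/2 := min_le_right _ _
    linarith
  have hU : limsup Y atTop ≤ 1 :=
    limsup_le_of_le (hbdd2.isCoboundedUnder_le)
      (by filter_upwards [hYabs] with t ht; exact (abs_le.mp ht).2)
  have hYtend : Tendsto Y atTop (nhds 1) :=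
    tendsto_of_le_liminf_of_limsup_le hL1 hU hbdd1 hbdd2
  -- final assembly
  rw [Metric.tendsto_nhds]
  intro ε hε
  have hm : (0:ℝ) < min 1 (ε^2) / 4 := by
    have : (0:ℝ) < min 1 (ε^2) := lt_min one_pos (by positivity)
    linarith
  have hev2 : ∀ᶠ t : ℕ in atTop, 1 - min 1 (ε^2)/4 < Y t :=
    hYtend.eventually (eventually_gt_nhds (by linarith))
  filter_upwards [hh.eventually_ge_atTop 1, hev2] with t ht hYt
  have hpos : (0:ℝ) < ‖w t‖ := lt_of_lt_of_le one_pos ht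
  rw [dist_eq_norm]
  have n2 : ⟪‖w t‖⁻¹ • w t, u'⟫ = Y t := by
    rw [real_inner_smul_left, hYdef]
    simp only []
    rw [inv_mul_eq_div]
  have n3 : ‖‖w t‖⁻¹ • w t‖ = 1 := by
    rw [norm_smul, norm_inv, norm_norm, inv_mul_cancel₀ hpos.ne']
  have n1 : ‖‖w t‖⁻¹ • w t - u'‖^2 = 2 - 2*(Y t) := by
    rw [norm_sub_sq_real, n2, n3, hu1]; ring
  have n4 : ‖‖w t‖⁻¹ • w t - u'‖^2 < ε^2 := by
    have hmle : min 1 (ε^2) ≤ ε^2 := min_le_right _ _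
    have hm1 : min 1 (ε^2) ≤ 1 := min_le_left _ _
    have : (0:ℝ) < min 1 (ε^2) := lt_min one_pos (by positivity)
    linarith only [n1.le, n1.ge, hYt, hmle, hm1, this]
  exact lt_of_pow_lt_pow_left₀ 2 hε.le n4

set_option maxHeartbeats 1000000 in
/-- For linearly separable data, with step size satisfying
`η ≤ 1/(2R(w₀))` and the descent condition, the gradient-descent direction
`w_t/‖w_t‖` converges iff the regularization-path direction `w̄(B)/B`
converges, and when both exist they are equal. -/
theorem gd_direction_converges_iff_regularization_path_converges
    {d n : ℕ} (hn : 0 < n)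
    (x : Fin n → EuclideanSpace ℝ (Fin d)) (y : Fin n → ℝ)
    (hx : ∀ i, ‖x i‖ ≤ 1) (hy : ∀ i, y i = 1 ∨ y i = -1)
    (hsep : ∃ (u : EuclideanSpace ℝ (Fin d)) (γ : ℝ), ‖u‖ = 1 ∧ 0 < γ ∧
      ∀ i, γ ≤ y i * ⟪u, x i⟫)
    (ℓ : ℝ → ℝ)
    (hconv : ConvexOn ℝ Set.univ ℓ)
    (hdiff : Differentiable ℝ ℓ)
    (hanti : StrictAnti ℓ)
    (hlim0 : Tendsto ℓ atTop (nhds 0))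
    (R : EuclideanSpace ℝ (Fin d) → ℝ)
    (hR : R = fun w => (1 / (n : ℝ)) * ∑ i, ℓ (y i * ⟪w, x i⟫))
    (η : ℝ) (hη : 0 < η)
    (w : ℕ → EuclideanSpace ℝ (Fin d))
    (hgd : ∀ t : ℕ, w (t + 1) = w t - η • gradient R (w t))
    (hη2 : η ≤ 1 / (2 * R (w 0)))
    (hdesc : ∀ t : ℕ, R (w (t + 1)) - R (w t) ≤ -(η / 2) * ‖gradient R (w t)‖ ^ 2)
    (wbar : ℝ → EuclideanSpace ℝ (Fin d))
    (hwbar : ∀ B : ℝ, 0 ≤ B → ‖wbar B‖ ≤ B ∧ ∀ v, ‖v‖ ≤ B → R (wbar B) ≤ R v) :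
    ((∃ u, Tendsto (fun t : ℕ => ‖w t‖⁻¹ • w t) atTop (nhds u)) ↔
      (∃ u, Tendsto (fun B : ℝ => B⁻¹ • wbar B) atTop (nhds u))) ∧
    (∀ u u' : EuclideanSpace ℝ (Fin d),
      Tendsto (fun t : ℕ => ‖w t‖⁻¹ • w t) atTop (nhds u) →
      Tendsto (fun B : ℝ => B⁻¹ • wbar B) atTop (nhds u') → u = u') := by
  classical
  obtain ⟨u₀, γ, hu₀, hγ, hsep'⟩ := hsep
  -- positivity of ℓ
  have hlpos : ∀ s : ℝ, 0 < ℓ s := by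
    intro s
    have hev : ∀ᶠ z : ℝ in atTop, ℓ z ≤ ℓ (s+1) := by
      filter_upwards [eventually_ge_atTop (s+1)] with z hz
      exact hanti.antitone hz
    have h0 : 0 ≤ ℓ (s+1) := le_of_tendsto hlim0 hev
    have := hanti (lt_add_one s)
    linarith
  -- positivity of R
  have hnpos : (0:ℝ) < (n:ℝ) := by exact_mod_cast hn
  have hRpos : ∀ v, 0 < R v := by
    intro v
    rw [hR]
    apply mul_pos (by positivity)
    apply Finset.sum_pos (fun i _ => hlpos _)
    exact ⟨⟨0, hn⟩, Finset.mem_univ _⟩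
  -- convexity and differentiability of R
  have hconvR : ConvexOn ℝ Set.univ R := by rw [hR]; exact R_convex x y hconv
  have hdiffR : Differentiable ℝ R := by rw [hR]; exact R_diff x y hdiff
  have hgradineq : ∀ a z : EuclideanSpace ℝ (Fin d),
      ⟪gradient R a, z - a⟫ ≤ R z - R a := fun a z => grad_ineq hconvR hdiffR a z
  -- monotonicity
  have hMONO : ∀ t, R (w (t+1)) ≤ R (w t) := by
    intro t
    have h1 := hdesc t
    have h2 : 0 ≤ (η/2) * ‖gradient R (w t)‖^2 := by positivity
    linarith only [h1, h2]
  have hRantiA : Antitone (fun t : ℕ => R (w t)) :=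
    antitone_nat_of_succ_le (fun t => hMONO t)
  have hRanti : ∀ s t : ℕ, s ≤ t → R (w t) ≤ R (w s) := fun s t hst => hRantiA hst
  have hsq : ∀ t, η^2 * ‖gradient R (w t)‖^2 ≤ 2*η*(R (w t) - R (w (t+1))) := by
    intro t
    have h1 := hdesc t
    have h2 : (2*η) * ((η/2) * ‖gradient R (w t)‖^2) ≤ (2*η) * (R (w t) - R (w (t+1))) := by
      apply mul_le_mul_of_nonneg_left _ (by positivity)
      linarith only [h1]
    have h3 : (2*η) * ((η/2) * ‖gradient R (w t)‖^2) = η^2 * ‖gradient R (w t)‖^2 := by ring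
    linarith only [h2, h3.le, h3.ge]
  -- inner product identities
  have hID : ∀ t (z : EuclideanSpace ℝ (Fin d)),
      ⟪w (t+1) - w t, z⟫ = -(η * ⟪gradient R (w t), z⟫) := by
    intro t z
    have h1 : w (t+1) - w t = -(η • gradient R (w t)) := by
      rw [hgd t]; abel
    rw [h1, inner_neg_left, real_inner_smul_left]
  have hNORMSQ : ∀ t, ‖w (t+1)‖^2
      = ‖w t‖^2 - 2*η*⟪gradient R (w t), w t⟫ + η^2*‖gradient R (w t)‖^2 := by
    intro t
    rw [hgd t]
    rw [norm_sub_sq_real, real_inner_smul_right, norm_smul, Real.norm_of_nonneg hη.le,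
      real_inner_comm]
    ring
  -- the key window inequality
  have hKW : ∀ (z : EuclideanSpace ℝ (Fin d)) (t₁ t₂ : ℕ), t₁ ≤ t₂ → R z ≤ R (w t₂) →
      (‖w t₂‖^2 - ‖w t₁‖^2)/2 ≤ ⟪w t₂ - w t₁, z⟫ := by
    intro z t₁ t₂ hle hz
    induction t₂, hle using Nat.le_induction with
    | base => simp
    | succ m hm ih =>
      have hz' : R z ≤ R (w m) := le_trans hz (hMONO m)
      have ihn := ih hz'
      have step : (‖w (m+1)‖^2 - ‖w m‖^2)/2 ≤ ⟪w (m+1) - w m, z⟫ := by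
        have g2 := hID m z
        have g3 : η * ⟪gradient R (w m), z⟫
            = η * ⟪gradient R (w m), z - w m⟫ + η * ⟪gradient R (w m), w m⟫ := by
          rw [inner_sub_right]; ring
        have g4 := hNORMSQ m
        have g5 := hsq m
        have g7 : η * ⟪gradient R (w m), z - w m⟫ ≤ η * (R z - R (w m)) :=
          mul_le_mul_of_nonneg_left (hgradineq (w m) z) hη.le
        have g8 : 0 ≤ η * (R (w (m+1)) - R z) := mul_nonneg hη.le (by linarith only [hz])
        linarith only [g2.le, g2.ge, g3.le, g3.ge, g4.le, g4.ge, g5, g7, g8]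
      have hsum : ⟪w (m+1) - w t₁, z⟫ = ⟪w (m+1) - w m, z⟫ + ⟪w m - w t₁, z⟫ := by
        rw [← inner_add_left]
        congr 1
        abel
      linarith only [ihn, step, hsum.le, hsum.ge]
  -- regret inequality
  have hREG : ∀ (z : EuclideanSpace ℝ (Fin d)) (T : ℕ),
      ‖w T - z‖^2 + 2*η*T*(R (w T) - R z) ≤ ‖w 0 - z‖^2 := by
    intro z T
    induction T with
    | zero => simp
    | succ m ih =>
      have hstepid : w (m+1) - z = (w m - z) - η • gradient R (w m) := by
        rw [hgd m]; abel
      have hps : ‖w (m+1) - z‖^2 ≤ ‖w m - z‖^2 - 2*η*(R (w (m+1)) - R z) := by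
        have e1 : ‖w (m+1) - z‖^2 = ‖w m - z‖^2
            - 2*η*⟪gradient R (w m), w m - z⟫ + η^2*‖gradient R (w m)‖^2 := by
          rw [hstepid, norm_sub_sq_real, real_inner_smul_right, norm_smul,
            Real.norm_of_nonneg hη.le, real_inner_comm]
          ring
        have e2 : ⟪gradient R (w m), w m - z⟫ = -⟪gradient R (w m), z - w m⟫ := by
          rw [← inner_neg_right]
          congr 1
          abel
        have e3 : η * ⟪gradient R (w m), z - w m⟫ ≤ η * (R z - R (w m)) :=
          mul_le_mul_of_nonneg_left (hgradineq (w m) z) hη.le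
        have e2' : η * ⟪gradient R (w m), w m - z⟫ = -(η * ⟪gradient R (w m), z - w m⟫) := by
          rw [e2]; ring
        have e4 := hsq m
        linarith only [e1.le, e1.ge, e2'.le, e2'.ge, e3, e4]
      have hmcast : ((m+1 : ℕ) : ℝ) = (m:ℝ) + 1 := by push_cast; ring
      have hpn : 2*η*(m:ℝ)*(R (w (m+1)) - R z) ≤ 2*η*(m:ℝ)*(R (w m) - R z) := by
        apply mul_le_mul_of_nonneg_left _ (by positivity)
        linarith only [hMONO m]
      calc ‖w (m+1) - z‖^2 + 2*η*((m+1 : ℕ):ℝ)*(R (w (m+1)) - R z)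
          = ‖w (m+1) - z‖^2 + 2*η*(m:ℝ)*(R (w (m+1)) - R z) + 2*η*(R (w (m+1)) - R z) := by
            rw [hmcast]; ring
        _ ≤ ‖w m - z‖^2 + 2*η*(m:ℝ)*(R (w m) - R z) := by linarith only [hps, hpn]
        _ ≤ ‖w 0 - z‖^2 := ih
  -- step bound
  have hSTEP : ∀ t, ‖w (t+1)‖ ≤ ‖w t‖ + 1 := by
    intro t
    have h2η : η * (2 * R (w 0)) ≤ 1 := (le_div_iff₀ (by have := hRpos (w 0); linarith only [this] : (0:ℝ) < 2 * R (w 0))).mp hη2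
    have hgle : (η*‖gradient R (w t)‖)^2 ≤ 1 := by
      have q1 : 0 < 2*η*R (w (t+1)) := mul_pos (by positivity) (hRpos _)
      have q2 : 2*η*(R (w t)) ≤ 2*η*(R (w 0)) :=
        mul_le_mul_of_nonneg_left (hRanti 0 t (Nat.zero_le t)) (by positivity)
      have q3 := hsq t
      have e : (η*‖gradient R (w t)‖)^2 = η^2*‖gradient R (w t)‖^2 := by ring
      linarith only [q1, q2, q3, h2η, e.le, e.ge]
    have hg0 : 0 ≤ η*‖gradient R (w t)‖ := by positivity
    have hg1 : η*‖gradient R (w t)‖ ≤ 1 := by nlinarith only [hgle, hg0]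
    have hns : ‖w (t+1)‖ ≤ ‖w t‖ + ‖η • gradient R (w t)‖ := by
      rw [hgd t]; exact norm_sub_le _ _
    rw [norm_smul, Real.norm_of_nonneg hη.le] at hns
    linarith only [hns, hg1]
  -- loss along the separating ray
  have hRu : ∀ s : ℝ, 0 ≤ s → R (s • u₀) ≤ ℓ (s*γ) := by
    intro s hs
    rw [hR]
    have hterm : ∀ i : Fin n, ℓ (y i * ⟪s • u₀, x i⟫) ≤ ℓ (s*γ) := by
      intro i
      apply hanti.antitone
      rw [real_inner_smul_left]
      have h1 := mul_le_mul_of_nonneg_left (hsep' i) hs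
      nlinarith only [h1]
    calc (1/(n:ℝ)) * ∑ i, ℓ (y i * ⟪s • u₀, x i⟫)
        ≤ (1/(n:ℝ)) * ∑ _i : Fin n, ℓ (s*γ) := by
          apply mul_le_mul_of_nonneg_left _ (by positivity)
          exact Finset.sum_le_sum (fun i _ => hterm i)
      _ = ℓ (s*γ) := by
          rw [Finset.sum_const, Finset.card_univ, Fintype.card_fin, nsmul_eq_mul]
          field_simp
  have hsγ : Tendsto (fun s : ℝ => s*γ) atTop atTop := Tendsto.atTop_mul_const hγ tendsto_id
  have hℓγ : Tendsto (fun s : ℝ => ℓ (s*γ)) atTop (nhds 0) := hlim0.comp hsγ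
  -- loss tends to zero
  have hR0seq : Tendsto (fun t => R (w t)) atTop (nhds 0) := by
    rw [Metric.tendsto_atTop]
    intro ε hε
    obtain ⟨s₀, hs₀⟩ := eventually_atTop.mp
      (hℓγ.eventually (eventually_lt_nhds (by positivity : (0:ℝ) < ε/2)))
    have hzb : R ((max s₀ 0) • u₀) < ε/2 :=
      lt_of_le_of_lt (hRu _ (le_max_right _ _)) (hs₀ _ (le_max_left _ _))
    refine ⟨⌈(‖w 0 - (max s₀ 0) • u₀‖^2)/(η*(ε/2))⌉₊ + 1, fun T hT => ?_⟩
    have hTpos : 0 < T := lt_of_lt_of_le (Nat.succ_pos _) hT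
    have hTR : (0:ℝ) < T := by exact_mod_cast hTpos
    have hTreal : (‖w 0 - (max s₀ 0) • u₀‖^2)/(η*(ε/2)) ≤ (T:ℝ) := by
      calc (‖w 0 - (max s₀ 0) • u₀‖^2)/(η*(ε/2)) ≤ (⌈(‖w 0 - (max s₀ 0) • u₀‖^2)/(η*(ε/2))⌉₊ : ℝ) :=
            Nat.le_ceil _
        _ ≤ (T:ℝ) := by exact_mod_cast le_trans (Nat.le_succ _) hT
    have hC : ‖w 0 - (max s₀ 0) • u₀‖^2 ≤ η*(ε/2)*(T:ℝ) := by
      rw [div_le_iff₀ (by positivity)] at hTreal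
      linarith only [hTreal]
    have hreg := hREG ((max s₀ 0) • u₀) T
    rw [Real.dist_eq, sub_zero, abs_of_pos (hRpos _)]
    by_contra hge
    push_neg at hge
    have hmul : 2*η*(T:ℝ)*(ε/2) ≤ 2*η*(T:ℝ)*(R (w T) - R ((max s₀ 0) • u₀)) := by
      apply mul_le_mul_of_nonneg_left _ (by positivity)
      linarith only [hge, hzb]
    have hnn : 0 ≤ ‖w T - (max s₀ 0) • u₀‖^2 := sq_nonneg _
    have hpos2 : 0 < η*(ε/2)*(T:ℝ) := mul_pos (mul_pos hη (by positivity)) hTR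
    linarith only [hreg, hmul, hC, hnn, hpos2]
  -- the norm lemma : points at least as good as wbar B have norm ≥ B
  have hNORMlem : ∀ B : ℝ, 0 ≤ B → ∀ z, R z ≤ R (wbar B) → B ≤ ‖z‖ := by
    intro B hB z hz
    by_contra hlt
    push_neg at hlt
    have hε : 0 < B - ‖z‖ := by linarith only [hlt]
    have hnorm' : ‖z + (B - ‖z‖) • u₀‖ ≤ B := by
      calc ‖z + (B - ‖z‖) • u₀‖ ≤ ‖z‖ + ‖(B - ‖z‖) • u₀‖ := norm_add_le _ _
        _ = ‖z‖ + (B - ‖z‖) := by rw [norm_smul, Real.norm_of_nonneg hε.le, hu₀, mul_one]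
        _ = B := by ring
    have hterm : ∀ i : Fin n, ℓ (y i * ⟪z + (B - ‖z‖) • u₀, x i⟫) < ℓ (y i * ⟪z, x i⟫) := by
      intro i
      apply hanti
      rw [inner_add_left, real_inner_smul_left]
      have h1 := mul_le_mul_of_nonneg_left (hsep' i) hε.le
      have h2 : 0 < (B - ‖z‖)*γ := mul_pos hε hγ
      nlinarith only [h1, h2]
    have hsum : R (z + (B - ‖z‖) • u₀) < R z := by
      rw [hR]
      apply mul_lt_mul_of_pos_left _ (by positivity)
      exact Finset.sum_lt_sum_of_nonempty ⟨⟨0,hn⟩, Finset.mem_univ _⟩ (fun i _ => hterm i)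
    have hmin := (hwbar B hB).2 (z + (B - ‖z‖) • u₀) hnorm'
    linarith only [hmin, hsum, hz]
  have hNORMEQ : ∀ B : ℝ, 0 ≤ B → ‖wbar B‖ = B := fun B hB =>
    le_antisymm (hwbar B hB).1 (hNORMlem B hB _ (le_refl _))
  -- first order optimality of the path
  have hF1 : ∀ B : ℝ, 0 ≤ B → ∀ v, R v ≤ R (wbar B) → B^2 ≤ ⟪v, wbar B⟫ := by
    intro B hB v hv
    have hPB : ‖wbar B‖ = B := hNORMEQ B hB
    have hip : 0 ≤ ⟪wbar B, v - wbar B⟫ := by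
      by_contra hneg
      push_neg at hneg
      have hne : v - wbar B ≠ 0 := by
        intro h
        rw [h, inner_zero_right] at hneg
        exact lt_irrefl 0 hneg
      have hnpos' : 0 < ‖v - wbar B‖ := norm_pos_iff.mpr hne
      have hnsq : 0 < ‖v - wbar B‖^2 := by positivity
      have hcneg : 0 < -⟪wbar B, v - wbar B⟫ := by linarith only [hneg]
      set s : ℝ := min 1 (-⟪wbar B, v - wbar B⟫/‖v - wbar B‖^2) with hsdef
      have hspos : 0 < s := lt_min one_pos (div_pos hcneg hnsq)
      have hs1 : s ≤ 1 := min_le_left _ _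
      have hsc : s*‖v - wbar B‖^2 ≤ -⟪wbar B, v - wbar B⟫ := by
        have hmin := min_le_right (1:ℝ) (-⟪wbar B, v - wbar B⟫/‖v - wbar B‖^2)
        calc s*‖v - wbar B‖^2 ≤ (-⟪wbar B, v - wbar B⟫/‖v - wbar B‖^2)*‖v - wbar B‖^2 := by
              rw [hsdef]
              exact mul_le_mul_of_nonneg_right hmin (by positivity)
          _ = -⟪wbar B, v - wbar B⟫ := by field_simp
      have hq : R (wbar B + s • (v - wbar B)) ≤ R (wbar B) := by
        have hcomb := hconvR.2 (Set.mem_univ (wbar B)) (Set.mem_univ v)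
          (by linarith only [hs1] : (0:ℝ) ≤ 1 - s) hspos.le (by ring)
        have hid : (1-s) • wbar B + s • v = wbar B + s • (v - wbar B) := by module
        rw [hid] at hcomb
        have hrv : s * R v ≤ s * R (wbar B) := mul_le_mul_of_nonneg_left hv hspos.le
        have hexp : (1-s) • R (wbar B) + s • R v = R (wbar B) - s*R (wbar B) + s*R v := by
          simp only [smul_eq_mul]; ring
        linarith only [hcomb, hrv, hexp.le, hexp.ge]
      have hnormq : B ≤ ‖wbar B + s • (v - wbar B)‖ := hNORMlem B hB _ hq
      have hexp2 : ‖wbar B + s • (v - wbar B)‖^2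
          = B^2 + 2*(s*⟪wbar B, v - wbar B⟫) + s^2*‖v - wbar B‖^2 := by
        rw [norm_add_sq_real, real_inner_smul_right, norm_smul, Real.norm_of_nonneg hspos.le, hPB]
        ring
      have hsq' : B^2 ≤ ‖wbar B + s • (v - wbar B)‖^2 := by
        have := mul_self_le_mul_self hB hnormq
        nlinarith only [this]
      have h0 : s*0 ≤ s*(2*⟪wbar B, v - wbar B⟫ + s*‖v - wbar B‖^2) := by
        nlinarith only [hsq', hexp2.le, hexp2.ge]
      have h1 : 0 ≤ 2*⟪wbar B, v - wbar B⟫ + s*‖v - wbar B‖^2 :=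
        le_of_mul_le_mul_left h0 hspos
      linarith only [h1, hsc, hneg]
    have hdecomp : ⟪wbar B, v⟫ = ⟪wbar B, wbar B⟫ + ⟪wbar B, v - wbar B⟫ := by
      rw [inner_sub_right]; ring
    have hself : ⟪wbar B, wbar B⟫ = B^2 := by
      rw [real_inner_self_eq_norm_sq, hPB]
    have hcm : ⟪v, wbar B⟫ = ⟪wbar B, v⟫ := real_inner_comm _ _
    linarith only [hip, hdecomp.le, hdecomp.ge, hself.le, hself.ge, hcm.le, hcm.ge]
  -- path loss tends to zero
  have hrB0 : Tendsto (fun B : ℝ => R (wbar B)) atTop (nhds 0) := by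
    apply squeeze_zero' (g := fun B : ℝ => ℓ (B*γ))
    · filter_upwards with B
      exact (hRpos _).le
    · filter_upwards [eventually_ge_atTop (0:ℝ)] with B hB
      calc R (wbar B) ≤ R (B • u₀) := (hwbar B hB).2 _
            (by rw [norm_smul, Real.norm_of_nonneg hB, hu₀, mul_one])
        _ ≤ ℓ (B*γ) := hRu B hB
    · exact hℓγ
  -- norms tend to infinity
  have hhinf : Tendsto (fun t => ‖w t‖) atTop atTop := by
    rw [tendsto_atTop]
    intro M
    filter_upwards [hR0seq.eventually (eventually_lt_nhds (hRpos (wbar (max M 0))))] with t ht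
    have := hNORMlem (max M 0) (le_max_right _ _) (w t) ht.le
    linarith only [this, le_max_left M 0]
  -- assemble the three claims from dir1 and dir2
  constructor
  · constructor
    · rintro ⟨u, hu⟩
      exact ⟨u, dir1 R w wbar hRpos hRanti hKW hF1 hNORMEQ hR0seq hhinf hSTEP hrB0 u hu⟩
    · rintro ⟨u', hu'⟩
      exact ⟨u', dir2 R w wbar hKW (fun B hB v hv => (hwbar B hB).2 v hv) hNORMEQ hhinf hSTEP u' hu'⟩
  · intro u u' hu hu'
    exact tendsto_nhds_unique
      (dir1 R w wbar hRpos hRanti hKW hF1 hNORMEQ hR0seq hhinf hSTEP hrB0 u hu) hu'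
end

section
/- Suppose the training data is linearly separable and the regularization path converges in direction: lim_{B→∞} w̄(B)/B = ū for some unit vector ū. Then the margin γ̄ := min_{1≤i≤n} y_i⟨ū, x_i⟩ satisfies γ̄ ≥ γ̂²/(2n) > 0, where γ̂ := max_{‖u‖=1} min_{1≤i≤n} y_i⟨u, x_i⟩ is the maximum margin. -/
open Filter RealInnerProductSpace

private lemma slope_tendsto (ℓ : ℝ → ℝ) (hdiff : Differentiable ℝ ℓ) (a d : ℝ) :
    Filter.Tendsto (fun s : ℝ => (ℓ (a + s * d) - ℓ a) / s) (nhdsWithin 0 (Set.Ioi 0))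
      (nhds (deriv ℓ a * d)) := by
  have h1 : HasDerivAt (fun s : ℝ => a + s * d) d 0 := by
    simpa using ((hasDerivAt_id (0 : ℝ)).mul_const d).const_add a
  have h2 : HasDerivAt ℓ (deriv ℓ a) (a + 0 * d) := by
    simpa using (hdiff a).hasDerivAt
  have hD : HasDerivAt (fun s : ℝ => ℓ (a + s * d)) (deriv ℓ a * d) 0 := by
    have := h2.comp (0 : ℝ) h1
    exact this
  have h3 := hasDerivAt_iff_tendsto_slope.1 hD
  have h4 : Filter.Tendsto (slope (fun s : ℝ => ℓ (a + s * d)) 0) (nhdsWithin 0 (Set.Ioi 0))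
      (nhds (deriv ℓ a * d)) :=
    h3.mono_left (nhdsWithin_mono _ fun s hs => ne_of_gt hs)
  refine h4.congr fun s => ?_
  simp [slope_def_field]

private lemma grad_ineq_s6 (ℓ : ℝ → ℝ) (hconv : ConvexOn ℝ Set.univ ℓ)
    (hdiff : Differentiable ℝ ℓ) (x y : ℝ) :
    deriv ℓ x * (y - x) ≤ ℓ y - ℓ x := by
  refine le_of_tendsto (slope_tendsto ℓ hdiff x (y - x)) ?_
  filter_upwards [Ioc_mem_nhdsGT_of_mem (Set.left_mem_Ico.2 zero_lt_one)] with s hs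
  obtain ⟨hs0, hs1⟩ := hs
  have hc := hconv.2 (Set.mem_univ x) (Set.mem_univ y)
    (by linarith : (0:ℝ) ≤ 1 - s) hs0.le (by ring)
  have harg : (1 - s) • x + s • y = x + s * (y - x) := by
    simp only [smul_eq_mul]; ring
  rw [harg] at hc
  simp only [smul_eq_mul] at hc
  rw [div_le_iff₀ hs0]
  linarith

private lemma opt_ineq {d n : ℕ} (x : Fin n → EuclideanSpace ℝ (Fin d)) (y : Fin n → ℝ)
    (ℓ : ℝ → ℝ) (hdiff : Differentiable ℝ ℓ)
    (w u : EuclideanSpace ℝ (Fin d)) (B : ℝ) (hB : 0 < B) (hu : ‖u‖ = 1) (hw : ‖w‖ ≤ B)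
    (hopt : ∀ v : EuclideanSpace ℝ (Fin d), ‖v‖ ≤ B →
      (∑ i, ℓ (y i * ⟪w, x i⟫)) ≤ ∑ i, ℓ (y i * ⟪v, x i⟫)) :
    0 ≤ ∑ i, deriv ℓ (y i * ⟪w, x i⟫) * (B * (y i * ⟪u, x i⟫) - y i * ⟪w, x i⟫) := by
  have hTend : Filter.Tendsto
      (fun s : ℝ => ∑ i, (ℓ (y i * ⟪w, x i⟫ + s * (B * (y i * ⟪u, x i⟫) - y i * ⟪w, x i⟫))
        - ℓ (y i * ⟪w, x i⟫)) / s)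
      (nhdsWithin 0 (Set.Ioi 0))
      (nhds (∑ i, deriv ℓ (y i * ⟪w, x i⟫) * (B * (y i * ⟪u, x i⟫) - y i * ⟪w, x i⟫))) :=
    tendsto_finset_sum _ fun i _ => slope_tendsto ℓ hdiff _ _
  refine ge_of_tendsto hTend ?_
  filter_upwards [Ioc_mem_nhdsGT_of_mem (Set.left_mem_Ico.2 zero_lt_one)] with s hs
  obtain ⟨hs0, hs1⟩ := hs
  set v : EuclideanSpace ℝ (Fin d) := (1 - s) • w + (s * B) • u with hv
  have hvnorm : ‖v‖ ≤ B := by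
    have h1 : ‖v‖ ≤ ‖(1 - s) • w‖ + ‖(s * B) • u‖ := norm_add_le _ _
    have h2 : ‖(1 - s) • w‖ = (1 - s) * ‖w‖ := by
      rw [norm_smul, Real.norm_of_nonneg (by linarith)]
    have h3 : ‖(s * B) • u‖ = s * B := by
      rw [norm_smul, hu, Real.norm_of_nonneg (by nlinarith), mul_one]
    nlinarith [norm_nonneg w]
  have hmargin : ∀ i, y i * ⟪v, x i⟫
      = y i * ⟪w, x i⟫ + s * (B * (y i * ⟪u, x i⟫) - y i * ⟪w, x i⟫) := by
    intro i
    rw [hv, inner_add_left, real_inner_smul_left, real_inner_smul_left]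
    ring
  have hsum' : (∑ i, ℓ (y i * ⟪w, x i⟫)) ≤
      ∑ i, ℓ (y i * ⟪w, x i⟫ + s * (B * (y i * ⟪u, x i⟫) - y i * ⟪w, x i⟫)) :=
    (hopt v hvnorm).trans (le_of_eq (Finset.sum_congr rfl fun i _ => by rw [hmargin i]))
  rw [← Finset.sum_div]
  apply div_nonneg _ hs0.le
  rw [Finset.sum_sub_distrib]
  linarith
set_option maxHeartbeats 8000000 in
/-- For linearly separable data, if the regularization path
converges in direction to a unit vector `ū`, then the margin
`γ̄ = minᵢ yᵢ⟨ū, xᵢ⟩` satisfies `γ̄ ≥ γ̂²/(2n) > 0`, where `γ̂` is the maximum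
margin. -/
theorem regularization_direction_margin_lower_bound
    {d n : ℕ} (hn : 0 < n)
    (x : Fin n → EuclideanSpace ℝ (Fin d)) (y : Fin n → ℝ)
    (hx : ∀ i, ‖x i‖ ≤ 1) (hy : ∀ i, y i = 1 ∨ y i = -1)
    (hsep : ∃ (u : EuclideanSpace ℝ (Fin d)) (γ : ℝ), ‖u‖ = 1 ∧ 0 < γ ∧
      ∀ i, γ ≤ y i * ⟪u, x i⟫)
    (ℓ : ℝ → ℝ)
    (hconv : ConvexOn ℝ Set.univ ℓ)
    (hdiff : Differentiable ℝ ℓ)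
    (hanti : StrictAnti ℓ)
    (hlim0 : Tendsto ℓ atTop (nhds 0))
    (R : EuclideanSpace ℝ (Fin d) → ℝ)
    (hR : R = fun w => (1 / (n : ℝ)) * ∑ i, ℓ (y i * ⟪w, x i⟫))
    (wbar : ℝ → EuclideanSpace ℝ (Fin d))
    (hwbar : ∀ B : ℝ, 0 ≤ B → ‖wbar B‖ ≤ B ∧ ∀ v, ‖v‖ ≤ B → R (wbar B) ≤ R v)
    (ubar : EuclideanSpace ℝ (Fin d)) (hubar : ‖ubar‖ = 1)
    (hlim : Tendsto (fun B : ℝ => B⁻¹ • wbar B) atTop (nhds ubar))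
    (γhat : ℝ)
    (hγhat : IsGreatest
      {g : ℝ | ∃ v : EuclideanSpace ℝ (Fin d), ‖v‖ = 1 ∧ g = ⨅ i, y i * ⟪v, x i⟫}
      γhat) :
    γhat ^ 2 / (2 * n) ≤ (⨅ i, y i * ⟪ubar, x i⟫) ∧ 0 < γhat ^ 2 / (2 * n) := by
  classical
  subst hR
  haveI : Nonempty (Fin n) := ⟨⟨0, hn⟩⟩
  have hn' : (0 : ℝ) < n := Nat.cast_pos.2 hn
  have hn1 : (1 : ℝ) ≤ n := by exact_mod_cast hn
  have h2n : (0 : ℝ) < 2 * n := by linarith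
  obtain ⟨⟨ustar, hustar, hγeq⟩, hub⟩ := hγhat
  have hbdd : ∀ v : EuclideanSpace ℝ (Fin d),
      BddBelow (Set.range fun i => y i * ⟪v, x i⟫) :=
    fun v => (Set.finite_range _).bddBelow
  have hγi : ∀ i, γhat ≤ y i * ⟪ustar, x i⟫ := by
    intro i; rw [hγeq]; exact ciInf_le (hbdd ustar) i
  obtain ⟨u0, γ0, hu0, hγ0pos, hsep'⟩ := hsep
  have hγpos : 0 < γhat :=
    lt_of_lt_of_le hγ0pos ((le_ciInf hsep').trans (hub ⟨u0, hu0, rfl⟩))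
  have hy1 : ∀ i, |y i| = 1 := by intro i; rcases hy i with h | h <;> simp [h]
  have hmarg1 : ∀ v : EuclideanSpace ℝ (Fin d), ‖v‖ = 1 → ∀ i, y i * ⟪v, x i⟫ ≤ 1 := by
    intro v hv i
    calc y i * ⟪v, x i⟫ ≤ |y i * ⟪v, x i⟫| := le_abs_self _
      _ = |⟪v, x i⟫| := by rw [abs_mul, hy1 i, one_mul]
      _ ≤ ‖v‖ * ‖x i‖ := abs_real_inner_le_norm _ _
      _ ≤ 1 := by rw [hv, one_mul]; exact hx i
  have hγ1 : γhat ≤ 1 := (hγi ⟨0, hn⟩).trans (hmarg1 ustar hustar _)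
  set m : Fin n → ℝ := fun i => y i * ⟪ubar, x i⟫ with hm
  have hpos : 0 < γhat ^ 2 / (2 * n) := div_pos (pow_pos hγpos 2) h2n
  refine ⟨?_, hpos⟩
  -- limits of normalized margins
  have htendm : ∀ i, Tendsto (fun B : ℝ => B⁻¹ * (y i * ⟪wbar B, x i⟫)) atTop (nhds (m i)) := by
    intro i
    have h1 : Tendsto (fun B : ℝ => (⟪B⁻¹ • wbar B, x i⟫ : ℝ)) atTop (nhds ⟪ubar, x i⟫) :=
      hlim.inner tendsto_const_nhds
    refine (h1.const_mul (y i)).congr fun B => ?_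
    rw [real_inner_smul_left]; ring
  -- basic facts about ℓ
  have hq_pos : ∀ t : ℝ, 0 < -(deriv ℓ t) := by
    intro t
    have h1 := grad_ineq_s6 ℓ hconv hdiff t (t + 1)
    have h2 : ℓ (t + 1) < ℓ t := hanti (lt_add_one t)
    nlinarith
  have hq_anti : ∀ s t : ℝ, s ≤ t → -(deriv ℓ t) ≤ -(deriv ℓ s) := by
    intro s t hst
    rcases eq_or_lt_of_le hst with rfl | h
    · exact le_rfl
    · have h1 := grad_ineq_s6 ℓ hconv hdiff s t
      have h2 := grad_ineq_s6 ℓ hconv hdiff t s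
      nlinarith
  have hl_nonneg : ∀ t, 0 ≤ ℓ t := by
    intro t
    refine le_of_tendsto hlim0 ?_
    exact eventually_atTop.2 ⟨t, fun z hz => hanti.antitone hz⟩
  -- first-order optimality
  have hA : ∀ B : ℝ, 0 < B →
      0 ≤ ∑ i, (-(deriv ℓ (y i * ⟪wbar B, x i⟫))) * (y i * ⟪wbar B, x i⟫ - B * γhat) := by
    intro B hB
    have hw := hwbar B hB.le
    have hopt' : ∀ v : EuclideanSpace ℝ (Fin d), ‖v‖ ≤ B →
        (∑ i, ℓ (y i * ⟪wbar B, x i⟫)) ≤ ∑ i, ℓ (y i * ⟪v, x i⟫) := by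
      intro v hv
      have h : (1 / (n : ℝ)) * ∑ i, ℓ (y i * ⟪wbar B, x i⟫)
          ≤ (1 / (n : ℝ)) * ∑ i, ℓ (y i * ⟪v, x i⟫) := hw.2 v hv
      have hpos' : (0 : ℝ) < 1 / n := by positivity
      exact le_of_mul_le_mul_left h hpos'
    have h0 := opt_ineq x y ℓ hdiff (wbar B) ustar B hB hustar hw.1 hopt'
    have key : ∀ i : Fin n,
        (-(deriv ℓ (y i * ⟪wbar B, x i⟫))) * (y i * ⟪wbar B, x i⟫ - B * γhat)
        = deriv ℓ (y i * ⟪wbar B, x i⟫)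
            * (B * (y i * ⟪ustar, x i⟫) - y i * ⟪wbar B, x i⟫)
          + (-(deriv ℓ (y i * ⟪wbar B, x i⟫))) * (B * (y i * ⟪ustar, x i⟫) - B * γhat) := by
      intro i; ring
    rw [Finset.sum_congr rfl fun i _ => key i, Finset.sum_add_distrib]
    refine add_nonneg h0 (Finset.sum_nonneg fun i _ => ?_)
    have h1 := hγi i
    have h2 := (hq_pos (y i * ⟪wbar B, x i⟫)).le
    nlinarith [mul_nonneg h2 (mul_nonneg hB.le (sub_nonneg.2 h1))]
  -- approximation of margins
  have happrox : ∀ η : ℝ, 0 < η → ∃ B0 : ℝ, 1 ≤ B0 ∧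
      ∀ B, B0 ≤ B → ∀ i, |B⁻¹ * (y i * ⟪wbar B, x i⟫) - m i| ≤ η := by
    intro η hη
    have h1 : ∀ i : Fin n, ∃ N : ℝ, ∀ B, N ≤ B →
        |B⁻¹ * (y i * ⟪wbar B, x i⟫) - m i| ≤ η := by
      intro i
      obtain ⟨N, hN⟩ := Metric.tendsto_atTop.1 (htendm i) η hη
      exact ⟨N, fun B hB => by
        have := hN B hB; rw [Real.dist_eq] at this; exact this.le⟩
    choose N hN using h1
    refine ⟨max 1 (Finset.univ.sup' Finset.univ_nonempty N), le_max_left _ _, ?_⟩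
    intro B hB i
    exact hN i B
      (le_trans (le_trans (Finset.le_sup' N (Finset.mem_univ i)) (le_max_right _ _)) hB)
  have hup : ∀ B : ℝ, 0 < B → ∀ (i : Fin n) (η : ℝ),
      |B⁻¹ * (y i * ⟪wbar B, x i⟫) - m i| ≤ η →
      y i * ⟪wbar B, x i⟫ ≤ B * (m i + η) := by
    intro B hB i η h
    have h1 := (abs_le.1 h).2
    have h2 : B⁻¹ * (y i * ⟪wbar B, x i⟫) ≤ m i + η := by linarith
    calc y i * ⟪wbar B, x i⟫ = B * (B⁻¹ * (y i * ⟪wbar B, x i⟫)) := by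
          field_simp
      _ ≤ B * (m i + η) := mul_le_mul_of_nonneg_left h2 hB.le
  have hlow : ∀ B : ℝ, 0 < B → ∀ (i : Fin n) (η : ℝ),
      |B⁻¹ * (y i * ⟪wbar B, x i⟫) - m i| ≤ η →
      B * (m i - η) ≤ y i * ⟪wbar B, x i⟫ := by
    intro B hB i η h
    have h1 := (abs_le.1 h).1
    have h2 : m i - η ≤ B⁻¹ * (y i * ⟪wbar B, x i⟫) := by linarith
    calc B * (m i - η) ≤ B * (B⁻¹ * (y i * ⟪wbar B, x i⟫)) :=
          mul_le_mul_of_nonneg_left h2 hB.le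
      _ = y i * ⟪wbar B, x i⟫ := by field_simp
  -- contradiction setup
  by_contra hcon
  push_neg at hcon
  obtain ⟨j, hjmin⟩ := Finite.exists_min m
  have hmj : m j < γhat ^ 2 / (2 * n) := (le_ciInf hjmin).trans_lt hcon
  set T : ℝ := γhat / (2 * n) with hT
  have hT2n : T * (2 * n) = γhat := div_mul_cancel₀ _ h2n.ne'
  have hTpos : 0 < T := div_pos hγpos h2n
  have hmjT : m j < T := by
    refine hmj.trans_le ?_
    rw [hT, div_le_div_iff₀ h2n h2n]
    nlinarith
  rcases eq_or_ne (Finset.univ.filter fun i => T < m i) ∅ with hSc | hSc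
  -- Case A : all margins are at most T
  · have hall : ∀ i, m i ≤ T := by
      intro i
      by_contra h
      push_neg at h
      have hmem : i ∈ Finset.univ.filter fun i => T < m i :=
        Finset.mem_filter.2 ⟨Finset.mem_univ i, h⟩
      rw [hSc] at hmem
      exact absurd hmem (Finset.notMem_empty i)
    obtain ⟨B0, hB01, hB0⟩ := happrox (γhat / 4) (by positivity)
    have hBpos : (0 : ℝ) < B0 := lt_of_lt_of_le one_pos hB01
    have hAB := hA B0 hBpos
    have hneg : ∑ i, (-(deriv ℓ (y i * ⟪wbar B0, x i⟫)))
        * (y i * ⟪wbar B0, x i⟫ - B0 * γhat) < 0 := by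
      have hzero : ∑ _i : Fin n, (0 : ℝ) = 0 := by simp
      rw [← hzero]
      refine Finset.sum_lt_sum_of_nonempty Finset.univ_nonempty fun i _ => ?_
      · have h1 : y i * ⟪wbar B0, x i⟫ ≤ B0 * (m i + γhat / 4) :=
          hup B0 hBpos i _ (hB0 B0 le_rfl i)
        have h2 : m i ≤ T := hall i
        have hT2 : T ≤ γhat / 2 := by
          rw [hT, div_le_div_iff₀ h2n (by norm_num : (0:ℝ) < 2)]
          nlinarith
        have hqp := hq_pos (y i * ⟪wbar B0, x i⟫)
        have harg : y i * ⟪wbar B0, x i⟫ - B0 * γhat < 0 := by nlinarith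
        exact mul_neg_of_pos_of_neg hqp harg
    linarith
  -- Case B : some margin exceeds T
  · have hne : (Finset.univ.filter fun i => T < m i).Nonempty :=
      Finset.nonempty_iff_ne_empty.2 hSc
    obtain ⟨i2, hi2mem, hi2min⟩ := Finset.exists_min_image _ m hne
    have hm2T : T < m i2 := (Finset.mem_filter.1 hi2mem).2
    have hjne : j ∉ Finset.univ.filter fun i => T < m i := by
      intro hmem
      exact absurd (Finset.mem_filter.1 hmem).2 (not_lt.2 hmjT.le)
    have hn2 : (2 : ℝ) ≤ n := by
      have h12 : i2 ≠ j := fun h => hjne (h ▸ hi2mem)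
      have h1n : 1 < n := by
        by_contra hc2
        push_neg at hc2
        interval_cases n
        exact h12 (Subsingleton.elim i2 j)
      exact_mod_cast h1n
    set η : ℝ := min (γhat / (4 * (n + 1))) ((m i2 - T) / 3) with hηdef
    have hηpos : 0 < η := lt_min (by positivity) (by linarith)
    have hη1 : η * (4 * (n + 1)) ≤ γhat := by
      have h1 : η ≤ γhat / (4 * (n + 1)) := min_le_left _ _
      have h2 : (0:ℝ) < 4 * (n + 1) := by positivity
      calc η * (4 * (n + 1)) ≤ γhat / (4 * (n + 1)) * (4 * (n + 1)) :=
            mul_le_mul_of_nonneg_right h1 h2.le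
        _ = γhat := div_mul_cancel₀ _ h2.ne'
    have hη2 : 3 * η ≤ m i2 - T := by
      have h1 : η ≤ (m i2 - T) / 3 := min_le_right _ _
      linarith
    set Tp : ℝ := T + η with hTpdef
    have hTppos : 0 < Tp := by rw [hTpdef]; linarith
    have hTpγ : (n + 1) * Tp ≤ γhat := by
      rw [hTpdef]
      nlinarith [hT2n, hη1, hηpos.le, hTpos.le]
    have hγTp : Tp < γhat := by nlinarith [hTppos]
    set r : ℝ := (m i2 - η) / Tp with hrdef
    have hr1 : r * Tp = m i2 - η := div_mul_cancel₀ _ hTppos.ne'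
    have hrgt1 : 1 < r := by
      rw [hrdef, lt_div_iff₀ hTppos, one_mul, hTpdef]
      linarith
    obtain ⟨B0, hB01, hB0⟩ := happrox η hηpos
    have hB0pos : (0 : ℝ) < B0 := lt_of_lt_of_le one_pos hB01
    -- the chain step
    have step : ∀ B : ℝ, B0 ≤ B → ∃ B' : ℝ, r * B ≤ B' ∧
        (-(deriv ℓ (B * Tp))) * (B * Tp) ≤ (-(deriv ℓ (B' * Tp))) * (B' * Tp) := by
      intro B hB
      have hBpos : 0 < B := lt_of_lt_of_le one_pos (hB01.trans hB)
      have hAB := hA B hBpos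
      rw [← Finset.sum_filter_add_sum_filter_not Finset.univ (fun i => T < m i)] at hAB
      -- bound the small-margin part
      have hterm : ∀ i ∈ Finset.univ.filter fun i => ¬ T < m i,
          y i * ⟪wbar B, x i⟫ ≤ B * Tp ∧ y i * ⟪wbar B, x i⟫ - B * γhat ≤ 0 := by
        intro i hi
        have hmi : m i ≤ T := not_lt.1 (Finset.mem_filter.1 hi).2
        have h1 : y i * ⟪wbar B, x i⟫ ≤ B * (m i + η) := hup B hBpos i _ (hB0 B hB i)
        have h2 : y i * ⟪wbar B, x i⟫ ≤ B * Tp := by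
          refine h1.trans ?_
          rw [hTpdef]
          nlinarith
        exact ⟨h2, by nlinarith⟩
      have hjmem : j ∈ Finset.univ.filter fun i => ¬ T < m i :=
        Finset.mem_filter.2 ⟨Finset.mem_univ j, not_lt.2 hmjT.le⟩
      have hcomp : (∑ i ∈ Finset.univ.filter fun i => ¬ T < m i,
          (-(deriv ℓ (y i * ⟪wbar B, x i⟫))) * (y i * ⟪wbar B, x i⟫ - B * γhat))
          ≤ (-(deriv ℓ (B * Tp))) * (B * Tp - B * γhat) := by
        have e1 : (∑ i ∈ Finset.univ.filter fun i => ¬ T < m i,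
            (-(deriv ℓ (y i * ⟪wbar B, x i⟫))) * (y i * ⟪wbar B, x i⟫ - B * γhat))
            = (-(deriv ℓ (y j * ⟪wbar B, x j⟫))) * (y j * ⟪wbar B, x j⟫ - B * γhat)
              + ∑ i ∈ (Finset.univ.filter fun i => ¬ T < m i).erase j,
                (-(deriv ℓ (y i * ⟪wbar B, x i⟫))) * (y i * ⟪wbar B, x i⟫ - B * γhat) :=
          (Finset.add_sum_erase _ _ hjmem).symm
        rw [e1]
        have h2 : (∑ i ∈ (Finset.univ.filter fun i => ¬ T < m i).erase j,
            (-(deriv ℓ (y i * ⟪wbar B, x i⟫))) * (y i * ⟪wbar B, x i⟫ - B * γhat)) ≤ 0 := by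
          refine Finset.sum_nonpos fun i hi => ?_
          obtain ⟨_, h3⟩ := hterm i (Finset.mem_of_mem_erase hi)
          exact mul_nonpos_of_nonneg_of_nonpos (hq_pos _).le h3
        obtain ⟨hj2, hj3⟩ := hterm j hjmem
        have hqj : -(deriv ℓ (B * Tp)) ≤ -(deriv ℓ (y j * ⟪wbar B, x j⟫)) := hq_anti _ _ hj2
        have hneg2 : B * Tp - B * γhat ≤ 0 := by nlinarith
        have s1 : (-(deriv ℓ (y j * ⟪wbar B, x j⟫))) * (y j * ⟪wbar B, x j⟫ - B * γhat)
            ≤ (-(deriv ℓ (y j * ⟪wbar B, x j⟫))) * (B * Tp - B * γhat) :=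
          mul_le_mul_of_nonneg_left (by linarith) (hq_pos _).le
        have s2 : (-(deriv ℓ (y j * ⟪wbar B, x j⟫))) * (B * Tp - B * γhat)
            ≤ (-(deriv ℓ (B * Tp))) * (B * Tp - B * γhat) :=
          mul_le_mul_of_nonpos_right hqj hneg2
        linarith
      have hmain0 : (-(deriv ℓ (B * Tp))) * (B * (γhat - Tp)) ≤
          ∑ i ∈ Finset.univ.filter fun i => T < m i,
            (-(deriv ℓ (y i * ⟪wbar B, x i⟫))) * (y i * ⟪wbar B, x i⟫) := by
        have hsum2 : (∑ i ∈ Finset.univ.filter fun i => T < m i,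
            (-(deriv ℓ (y i * ⟪wbar B, x i⟫))) * (y i * ⟪wbar B, x i⟫ - B * γhat))
            ≤ ∑ i ∈ Finset.univ.filter fun i => T < m i,
              (-(deriv ℓ (y i * ⟪wbar B, x i⟫))) * (y i * ⟪wbar B, x i⟫) := by
          refine Finset.sum_le_sum fun i _ => ?_
          have hq := (hq_pos (y i * ⟪wbar B, x i⟫)).le
          nlinarith [mul_nonneg hq (mul_nonneg hBpos.le hγpos.le)]
        nlinarith [hAB, hcomp, hsum2]
      obtain ⟨c, hc⟩ : ∃ c' : ℝ, c' = (-(deriv ℓ (B * Tp))) * (B * (γhat - Tp)) := ⟨_, rfl⟩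
      have hcpos : 0 < c := by
        rw [hc]; exact mul_pos (hq_pos _) (mul_pos hBpos (by linarith))
      have hmain : c ≤ ∑ i ∈ Finset.univ.filter fun i => T < m i,
          (-(deriv ℓ (y i * ⟪wbar B, x i⟫))) * (y i * ⟪wbar B, x i⟫) := hc ▸ hmain0
      have hpig : ∃ i ∈ Finset.univ.filter fun i => T < m i,
          c / n ≤ (-(deriv ℓ (y i * ⟪wbar B, x i⟫))) * (y i * ⟪wbar B, x i⟫) := by
        by_contra hno
        push_neg at hno
        have hlt := Finset.sum_lt_sum_of_nonempty hne
          (g := fun _ : Fin n => c / n) hno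
        rw [Finset.sum_const, nsmul_eq_mul] at hlt
        have hcard : ((Finset.univ.filter fun i => T < m i).card : ℝ) ≤ n := by
          have := Finset.card_filter_le Finset.univ (fun i => T < m i)
          rw [Finset.card_univ, Fintype.card_fin] at this
          exact_mod_cast this
        have hcn : (0 : ℝ) < c / n := div_pos hcpos hn'
        have : ((Finset.univ.filter fun i => T < m i).card : ℝ) * (c / n) ≤ n * (c / n) :=
          mul_le_mul_of_nonneg_right hcard hcn.le
        rw [mul_div_cancel₀ _ hn'.ne'] at this
        linarith [hmain]
      obtain ⟨i, hiS, hi⟩ := hpig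
      have hmi2 : m i2 ≤ m i := hi2min i hiS
      have hai_low : B * (m i2 - η) ≤ y i * ⟪wbar B, x i⟫ := by
        refine le_trans ?_ (hlow B hBpos i _ (hB0 B hB i))
        nlinarith
      refine ⟨(y i * ⟪wbar B, x i⟫) / Tp, ?_, ?_⟩
      · rw [le_div_iff₀ hTppos]
        calc r * B * Tp = B * (r * Tp) := by ring
          _ = B * (m i2 - η) := by rw [hr1]
          _ ≤ y i * ⟪wbar B, x i⟫ := hai_low
      · rw [div_mul_cancel₀ _ hTppos.ne']
        have hle : (-(deriv ℓ (B * Tp))) * (B * Tp) ≤ c / n := by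
          rw [hc, le_div_iff₀ hn']
          have h1 : n * Tp ≤ γhat - Tp := by linarith [hTpγ]
          have hq := (hq_pos (B * Tp)).le
          nlinarith
        exact hle.trans hi
    -- build the chain
    choose f hf1 hf2 using step
    have hfB0 : ∀ B (h : B0 ≤ B), B0 ≤ f B h := by
      intro B h
      have hBpos : 0 < B := lt_of_lt_of_le one_pos (hB01.trans h)
      have hrB : B ≤ r * B := by nlinarith
      linarith [hf1 B h]
    set F : ℝ → ℝ := fun B => if h : B0 ≤ B then f B h else B0 with hF
    set seq : ℕ → ℝ := fun k => F^[k] B0 with hseq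
    have hseq0 : seq 0 = B0 := rfl
    have hinv : ∀ k, B0 ≤ seq k := by
      intro k
      induction k with
      | zero => exact le_rfl
      | succ k ih =>
        have hflip : seq (k + 1) = F (seq k) := by
          simp only [hseq]
          exact Function.iterate_succ_apply' F k B0
        rw [hflip, hF]
        simp only
        rw [dif_pos ih]
        exact hfB0 _ ih
    have hstep' : ∀ k, seq (k + 1) = f (seq k) (hinv k) := by
      intro k
      have hflip : seq (k + 1) = F (seq k) := by
        simp only [hseq]
        exact Function.iterate_succ_apply' F k B0
      rw [hflip, hF]
      simp only
      rw [dif_pos (hinv k)]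
    have hgrow : ∀ k, r * seq k ≤ seq (k + 1) := by
      intro k; rw [hstep' k]; exact hf1 _ (hinv k)
    have hgm : ∀ k, (-(deriv ℓ (seq k * Tp))) * (seq k * Tp)
        ≤ (-(deriv ℓ (seq (k + 1) * Tp))) * (seq (k + 1) * Tp) := by
      intro k; rw [hstep' k]; exact hf2 _ (hinv k)
    have hG : ∀ k, (-(deriv ℓ (B0 * Tp))) * (B0 * Tp)
        ≤ (-(deriv ℓ (seq k * Tp))) * (seq k * Tp) := by
      intro k
      induction k with
      | zero => exact le_rfl
      | succ k ih => exact ih.trans (hgm k)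
    obtain ⟨G0, hG0⟩ : ∃ G0' : ℝ, G0' = (-(deriv ℓ (B0 * Tp))) * (B0 * Tp) := ⟨_, rfl⟩
    have hG0pos : 0 < G0 := by
      rw [hG0]; exact mul_pos (hq_pos _) (mul_pos hB0pos hTppos)
    have hG' : ∀ k, G0 ≤ (-(deriv ℓ (seq k * Tp))) * (seq k * Tp) := fun k => hG0 ▸ hG k
    have hrpos : (0 : ℝ) < r := by linarith
    obtain ⟨c0, hc0⟩ : ∃ c0' : ℝ, c0' = G0 * (r - 1) / r := ⟨_, rfl⟩
    have hc0pos : 0 < c0 := by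
      rw [hc0]; exact div_pos (mul_pos hG0pos (by linarith)) hrpos
    have hdrop : ∀ k, c0 ≤ ℓ (seq k * Tp) - ℓ (seq (k + 1) * Tp) := by
      intro k
      have hGI := grad_ineq_s6 ℓ hconv hdiff (seq (k + 1) * Tp) (seq k * Tp)
      have hq := (hq_pos (seq (k + 1) * Tp)).le
      have hGk := hG' (k + 1)
      have h2 : r * (seq k * Tp) ≤ seq (k + 1) * Tp := by
        have h := mul_le_mul_of_nonneg_right (hgrow k) hTppos.le
        linarith [h]
      have h3 : (-(deriv ℓ (seq (k + 1) * Tp))) * (r * (seq k * Tp))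
          ≤ (-(deriv ℓ (seq (k + 1) * Tp))) * (seq (k + 1) * Tp) :=
        mul_le_mul_of_nonneg_left h2 hq
      have h1 : (-(deriv ℓ (seq (k + 1) * Tp))) * (seq (k + 1) * Tp - seq k * Tp)
          ≤ ℓ (seq k * Tp) - ℓ (seq (k + 1) * Tp) := by linarith [hGI]
      have hkey : G0 * (r - 1) ≤ r * (ℓ (seq k * Tp) - ℓ (seq (k + 1) * Tp)) := by
        nlinarith [h1, h3, hGk, mul_le_mul_of_nonneg_left h1 hrpos.le,
          mul_le_mul_of_nonneg_right hGk (by linarith : (0:ℝ) ≤ r - 1)]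
      rw [hc0, div_le_iff₀ hrpos]
      linarith [hkey]
    have htel : ∀ K : ℕ, (K : ℝ) * c0 ≤ ℓ (B0 * Tp) - ℓ (seq K * Tp) := by
      intro K
      induction K with
      | zero => simp [hseq0]
      | succ K ih =>
        have h1 := hdrop K
        push_cast
        linarith
    obtain ⟨K, hK⟩ := exists_nat_gt (ℓ (B0 * Tp) / c0)
    have h1 := htel K
    have h2 := hl_nonneg (seq K * Tp)
    rw [div_lt_iff₀ hc0pos] at hK
    linarith
end

section
/- Suppose the training data is linearly separable and lim_{B→∞} w̄(B)/B = ū for some unit vector ū. Then for every α > 0 there exists ρ(α) > 0 such that for every w ∈ ℝ^d with ‖w‖ > ρ(α), R((1+α)‖w‖ ū) ≤ R(w). -/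
set_option maxHeartbeats 1000000

open Filter RealInnerProductSpace

section AuxStatement8

variable {ℓ : ℝ → ℝ}

lemma aux_deriv_mono (hconv : ConvexOn ℝ Set.univ ℓ) (hdiff : Differentiable ℝ ℓ) :
    Monotone (deriv ℓ) := by
  have h := hconv.monotoneOn_deriv (fun z _ => hdiff z)
  exact fun a b hab => h (Set.mem_univ a) (Set.mem_univ b) hab

lemma aux_tangent (hdiff : Differentiable ℝ ℓ) (hmono : Monotone (deriv ℓ))
    (a b : ℝ) : ℓ a + deriv ℓ a * (b - a) ≤ ℓ b := by
  rcases lt_trichotomy a b with h | h | h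
  · obtain ⟨c, hc, hceq⟩ := exists_deriv_eq_slope ℓ h hdiff.continuous.continuousOn
      (fun z _ => (hdiff z).differentiableWithinAt)
    have h1 : deriv ℓ a ≤ deriv ℓ c := hmono hc.1.le
    have hne : b - a ≠ 0 := by intro hh; rw [sub_eq_zero] at hh; exact h.ne hh.symm
    have h2 : deriv ℓ c * (b - a) = ℓ b - ℓ a := by
      rw [eq_div_iff hne] at hceq
      linarith [hceq]
    nlinarith [mul_le_mul_of_nonneg_right h1 (sub_pos.mpr h).le]
  · subst h; simp
  · obtain ⟨c, hc, hceq⟩ := exists_deriv_eq_slope ℓ h hdiff.continuous.continuousOn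
      (fun z _ => (hdiff z).differentiableWithinAt)
    have h1 : deriv ℓ c ≤ deriv ℓ a := hmono hc.2.le
    have hne : a - b ≠ 0 := by intro hh; rw [sub_eq_zero] at hh; exact h.ne hh.symm
    have h2 : deriv ℓ c * (a - b) = ℓ a - ℓ b := by
      rw [eq_div_iff hne] at hceq
      linarith [hceq]
    nlinarith [mul_le_mul_of_nonneg_right h1 (sub_pos.mpr h).le]

lemma aux_deriv_neg (hdiff : Differentiable ℝ ℓ) (hmono : Monotone (deriv ℓ))
    (hanti : StrictAnti ℓ) (t : ℝ) : deriv ℓ t < 0 := by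
  obtain ⟨c, hc, hceq⟩ := exists_deriv_eq_slope ℓ (show t < t + 1 by linarith)
    hdiff.continuous.continuousOn (fun z _ => (hdiff z).differentiableWithinAt)
  have hlt : ℓ (t + 1) < ℓ t := hanti (by linarith)
  have hcneg : deriv ℓ c < 0 := by
    rw [hceq]
    apply div_neg_of_neg_of_pos <;> linarith
  exact lt_of_le_of_lt (hmono hc.1.le) hcneg

lemma aux_nonneg (hanti : StrictAnti ℓ) (hlim0 : Tendsto ℓ atTop (nhds 0)) (t : ℝ) :
    0 ≤ ℓ t :=
  le_of_tendsto hlim0 ((eventually_ge_atTop t).mono fun z hz => hanti.antitone hz)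

lemma aux_false (hdiff : Differentiable ℝ ℓ) (hmono : Monotone (deriv ℓ))
    (hneg : ∀ t, deriv ℓ t < 0) (hnn : ∀ t, 0 ≤ ℓ t)
    (C z₀ : ℝ) (hC : 1 ≤ C) (hz₀ : 0 < z₀)
    (hh : ∀ z, z₀ ≤ z → -deriv ℓ z ≤ C * (-deriv ℓ (2 * C * z))) : False := by
  set zs : ℕ → ℝ := fun m => z₀ * (2 * C) ^ m with hzs
  have h2C : (1 : ℝ) ≤ 2 * C := by linarith
  have hCpos : (0 : ℝ) < C := by linarith
  have hzs_ge : ∀ m, z₀ ≤ zs m := by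
    intro m
    have : (1 : ℝ) ≤ (2 * C) ^ m := one_le_pow₀ h2C
    calc z₀ = z₀ * 1 := by ring
    _ ≤ z₀ * (2 * C) ^ m := by nlinarith
  have hzs_succ : ∀ m, zs (m + 1) = 2 * C * zs m := by
    intro m; simp only [hzs, pow_succ]; ring
  have hzs_pos : ∀ m, 0 < zs m := fun m => lt_of_lt_of_le hz₀ (hzs_ge m)
  -- lower bound on -deriv at zs m
  have hlow : ∀ m, -deriv ℓ z₀ ≤ C ^ m * (-deriv ℓ (zs m)) := by
    intro m
    induction m with
    | zero => simp [hzs]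
    | succ m ih =>
      have h1 : -deriv ℓ (zs m) ≤ C * (-deriv ℓ (zs (m + 1))) := by
        rw [hzs_succ m]; exact hh (zs m) (hzs_ge m)
      have hCm : (0 : ℝ) ≤ C ^ m := by positivity
      calc -deriv ℓ z₀ ≤ C ^ m * (-deriv ℓ (zs m)) := ih
      _ ≤ C ^ m * (C * (-deriv ℓ (zs (m + 1)))) := by
          exact mul_le_mul_of_nonneg_left h1 hCm
      _ = C ^ (m + 1) * (-deriv ℓ (zs (m + 1))) := by ring
  set K : ℝ := (-deriv ℓ z₀) * z₀ with hK
  have hKpos : 0 < K := by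
    have := hneg z₀; rw [hK]; nlinarith
  -- decrease per step
  have hdec : ∀ m, ℓ (zs (m + 1)) ≤ ℓ (zs m) - K * 2 ^ m := by
    intro m
    have htan := aux_tangent hdiff hmono (zs (m + 1)) (zs m)
    -- ℓ (zs (m+1)) + deriv ℓ (zs (m+1)) * (zs m - zs (m+1)) ≤ ℓ (zs m)
    have hgap : zs (m + 1) - zs m = z₀ * (2 * C) ^ m * (2 * C - 1) := by
      rw [hzs_succ m]; simp only [hzs]; ring
    have hlow' := hlow (m + 1)
    -- need: K * 2^m ≤ (-deriv ℓ (zs (m+1))) * (zs (m+1) - zs m)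
    have hD : 0 < -deriv ℓ (zs (m + 1)) := by have := hneg (zs (m + 1)); linarith
    have hstep : K * 2 ^ m ≤ (-deriv ℓ (zs (m + 1))) * (zs (m + 1) - zs m) := by
      rw [hgap, hK]
      have e1 : (-deriv ℓ z₀) * z₀ * 2 ^ m ≤
          (C ^ (m + 1) * (-deriv ℓ (zs (m + 1)))) * z₀ * 2 ^ m := by
        have h2m : (0 : ℝ) ≤ 2 ^ m := by positivity
        nlinarith [hlow', mul_le_mul_of_nonneg_right hlow'
          (mul_nonneg hz₀.le h2m)]
      have e2 : (C ^ (m + 1) * (-deriv ℓ (zs (m + 1)))) * z₀ * 2 ^ m ≤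
          (-deriv ℓ (zs (m + 1))) * (z₀ * (2 * C) ^ m * (2 * C - 1)) := by
        have hmul : (2 * C) ^ m = 2 ^ m * C ^ m := by rw [mul_pow]
        rw [hmul]
        have key : C ^ (m + 1) * z₀ * 2 ^ m ≤ z₀ * (2 ^ m * C ^ m) * (2 * C - 1) := by
          have hCm : (0 : ℝ) < C ^ m := by positivity
          have h2m : (0 : ℝ) < (2 : ℝ) ^ m := by positivity
          have : C ^ (m + 1) = C ^ m * C := by ring
          rw [this]
          nlinarith [mul_pos hCm h2m, mul_pos (mul_pos hz₀ hCm) h2m]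
        nlinarith [key, hD]
      linarith
    nlinarith [htan, hstep]
  -- telescoping
  have hsum : ∀ m, ℓ (zs m) ≤ ℓ z₀ - K * (2 ^ m - 1) := by
    intro m
    induction m with
    | zero => simp [hzs]
    | succ m ih =>
      have := hdec m
      have h2 : (2 : ℝ) ^ (m + 1) = 2 * 2 ^ m := by ring
      rw [h2]; linarith
  -- contradiction
  obtain ⟨M, hM⟩ := exists_nat_gt (ℓ z₀ / K)
  have hMle : (M : ℝ) ≤ 2 ^ M - 1 := by
    have h := Nat.succ_le_of_lt (Nat.lt_two_pow_self (n := M))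
    have : (M : ℝ) + 1 ≤ 2 ^ M := by exact_mod_cast h
    linarith
  have h1 : K * (M : ℝ) ≤ K * (2 ^ M - 1) := mul_le_mul_of_nonneg_left hMle hKpos.le
  have h2 := hsum M
  have h3 := hnn (zs M)
  have h4 : ℓ z₀ / K < M := hM
  rw [div_lt_iff₀ hKpos] at h4
  nlinarith

lemma aux_key {d n : ℕ} (hn : 0 < n)
    (x : Fin n → EuclideanSpace ℝ (Fin d)) (y : Fin n → ℝ)
    (hx : ∀ i, ‖x i‖ ≤ 1) (hy : ∀ i, y i = 1 ∨ y i = -1)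
    (hdiff : Differentiable ℝ ℓ) (hmono : Monotone (deriv ℓ))
    (hanti : StrictAnti ℓ) (hneg : ∀ t, deriv ℓ t < 0)
    (R : EuclideanSpace ℝ (Fin d) → ℝ)
    (hR : R = fun w => (1 / (n : ℝ)) * ∑ i, ℓ (y i * ⟪w, x i⟫))
    (u : EuclideanSpace ℝ (Fin d)) (γ : ℝ) (hu : ‖u‖ = 1) (hγ : 0 < γ)
    (hγi : ∀ i, γ ≤ y i * ⟪u, x i⟫) (hγ1 : γ ≤ 1)
    (wB : EuclideanSpace ℝ (Fin d)) (B : ℝ) (hB : 0 < B) (hwB : ‖wB‖ ≤ B)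
    (hopt : ∀ v, ‖v‖ ≤ B → R wB ≤ R v)
    (j : Fin n) (δ : ℝ) (hδ : 0 < δ) (hδγ : δ ≤ γ / 4)
    (htj : y j * ⟪wB, x j⟫ ≤ δ / 4 * B) :
    -deriv ℓ (δ * B) ≤ 2 * n / γ * (-deriv ℓ (γ * B)) := by
  set s : ℝ := 3 * δ / 8 with hs
  have hs0 : 0 < s := by rw [hs]; linarith
  have hs1 : s ≤ 1 := by rw [hs]; linarith
  set t : Fin n → ℝ := fun i => y i * ⟪wB, x i⟫ with ht
  set g : Fin n → ℝ := fun i => y i * ⟪u, x i⟫ with hg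
  set v : EuclideanSpace ℝ (Fin d) := (1 - s) • wB + (s * B) • u with hv
  have hy1 : ∀ i, |y i| = 1 := by
    intro i; rcases hy i with h | h <;> simp [h]
  have hvnorm : ‖v‖ ≤ B := by
    calc ‖v‖ ≤ ‖(1 - s) • wB‖ + ‖(s * B) • u‖ := norm_add_le _ _
    _ = |1 - s| * ‖wB‖ + |s * B| * ‖u‖ := by rw [norm_smul, norm_smul]; rfl
    _ = (1 - s) * ‖wB‖ + s * B * 1 := by
        rw [hu, abs_of_nonneg (by linarith : (0:ℝ) ≤ 1 - s),
          abs_of_nonneg (by positivity : (0:ℝ) ≤ s * B)]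
    _ ≤ (1 - s) * B + s * B * 1 := by nlinarith [hwB]
    _ = B := by ring
  have hvinner : ∀ i, y i * ⟪v, x i⟫ = (1 - s) * t i + s * B * g i := by
    intro i
    rw [hv]
    rw [inner_add_left, real_inner_smul_left, real_inner_smul_left]
    simp only [ht, hg]; ring
  have htB : ∀ i, t i ≤ B := by
    intro i
    calc t i ≤ |t i| := le_abs_self _
    _ = |y i| * |⟪wB, x i⟫| := abs_mul _ _
    _ = |⟪wB, x i⟫| := by rw [hy1 i, one_mul]
    _ ≤ ‖wB‖ * ‖x i‖ := abs_real_inner_le_norm _ _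
    _ ≤ B * 1 := by
        apply mul_le_mul hwB (hx i) (norm_nonneg _) (by linarith)
    _ = B := by ring
  have hgle : ∀ i, g i ≤ 1 := by
    intro i
    calc g i ≤ |g i| := le_abs_self _
    _ = |y i| * |⟪u, x i⟫| := abs_mul _ _
    _ = |⟪u, x i⟫| := by rw [hy1 i, one_mul]
    _ ≤ ‖u‖ * ‖x i‖ := abs_real_inner_le_norm _ _
    _ ≤ 1 * 1 := by rw [hu]; simpa using hx i
    _ = 1 := by ring
  have hγBpos : 0 < γ * B := by positivity
  have hDγ : 0 < -deriv ℓ (γ * B) := by have := hneg (γ * B); linarith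
  -- the sum inequality
  have hsum : ∑ i, ℓ (t i) ≤ ∑ i, ℓ ((1 - s) * t i + s * B * g i) := by
    have h0 := hopt v hvnorm
    rw [hR] at h0
    simp only at h0
    have hn' : (0 : ℝ) < 1 / (n : ℝ) := by positivity
    have h1 := (mul_le_mul_iff_right₀ hn').mp h0
    calc ∑ i, ℓ (t i) = ∑ i, ℓ (y i * ⟪wB, x i⟫) := by rfl
    _ ≤ ∑ i, ℓ (y i * ⟪v, x i⟫) := h1
    _ = ∑ i, ℓ ((1 - s) * t i + s * B * g i) := by
        apply Finset.sum_congr rfl; intro i _; rw [hvinner i]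
  -- claim 1 : uniform bound for each coordinate
  have claim1 : ∀ i, ℓ ((1 - s) * t i + s * B * g i) - ℓ (t i) ≤
      s * B * (-deriv ℓ (γ * B)) := by
    intro i
    by_cases hcase : t i ≤ B * g i
    · have hmove : t i ≤ (1 - s) * t i + s * B * g i := by nlinarith
      have hle := hanti.antitone hmove
      have : 0 ≤ s * B * (-deriv ℓ (γ * B)) := by positivity
      linarith
    · push_neg at hcase
      set a : ℝ := (1 - s) * t i + s * B * g i with ha
      have hage : γ * B ≤ a := by
        have h1 : γ ≤ g i := hγi i
        have h2 : B * g i ≤ a := by rw [ha]; nlinarith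
        nlinarith
      have htan := aux_tangent hdiff hmono a (t i)
      -- ℓ a + deriv ℓ a * (t i - a) ≤ ℓ (t i)
      have hda : -deriv ℓ a ≤ -deriv ℓ (γ * B) := by
        have := hmono hage; linarith
      have hta : t i - a = s * (t i - B * g i) := by rw [ha]; ring
      have h1 : 0 ≤ t i - B * g i := by linarith
      have h2 : t i - B * g i ≤ B := by
        have := htB i
        have hgiγ : γ ≤ g i := hγi i
        nlinarith
      have hDa : 0 < -deriv ℓ a := by have := hneg a; linarith
      have : ℓ a - ℓ (t i) ≤ (-deriv ℓ a) * (s * (t i - B * g i)) := by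
        rw [← hta]
        have e : (-deriv ℓ a) * (t i - a) = -(deriv ℓ a * (t i - a)) := by ring
        linarith [htan, e.ge]
      calc ℓ a - ℓ (t i) ≤ (-deriv ℓ a) * (s * (t i - B * g i)) := this
      _ ≤ (-deriv ℓ (γ * B)) * (s * B) := by
          apply mul_le_mul hda (by nlinarith) (by positivity) hDγ.le
      _ = s * B * (-deriv ℓ (γ * B)) := by ring
  -- claim 2 : bound for j from the sum inequality
  have hjmem : j ∈ Finset.univ := Finset.mem_univ j
  have hsplit1 : ℓ (t j) + ∑ i ∈ Finset.univ.erase j, ℓ (t i) = ∑ i, ℓ (t i) :=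
    Finset.add_sum_erase _ (fun i => ℓ (t i)) hjmem
  have hsplit2 : ℓ ((1 - s) * t j + s * B * g j) +
      ∑ i ∈ Finset.univ.erase j, ℓ ((1 - s) * t i + s * B * g i) =
      ∑ i, ℓ ((1 - s) * t i + s * B * g i) :=
    Finset.add_sum_erase _ (fun i => ℓ ((1 - s) * t i + s * B * g i)) hjmem
  have herase : ∑ i ∈ Finset.univ.erase j, (ℓ ((1 - s) * t i + s * B * g i) - ℓ (t i)) ≤
      (n : ℝ) * (s * B * (-deriv ℓ (γ * B))) := by
    have hcard : ((Finset.univ.erase j).card : ℝ) ≤ (n : ℝ) := by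
      have h2 : (Finset.univ.erase j).card ≤ n := by
        have h3 := Finset.card_le_card (Finset.erase_subset j (Finset.univ : Finset (Fin n)))
        simpa using h3
      exact_mod_cast h2
    have hbound := Finset.sum_le_card_nsmul (Finset.univ.erase j)
      (fun i => ℓ ((1 - s) * t i + s * B * g i) - ℓ (t i))
      (s * B * (-deriv ℓ (γ * B))) (fun i _ => claim1 i)
    rw [nsmul_eq_mul] at hbound
    have hcpos : 0 ≤ s * B * (-deriv ℓ (γ * B)) := by positivity
    calc ∑ i ∈ Finset.univ.erase j, (ℓ ((1 - s) * t i + s * B * g i) - ℓ (t i))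
        ≤ ((Finset.univ.erase j).card : ℝ) * (s * B * (-deriv ℓ (γ * B))) := hbound
    _ ≤ (n : ℝ) * (s * B * (-deriv ℓ (γ * B))) :=
        mul_le_mul_of_nonneg_right hcard hcpos
  have hsum_sub : ∑ i ∈ Finset.univ.erase j, (ℓ ((1 - s) * t i + s * B * g i) - ℓ (t i)) =
      (∑ i ∈ Finset.univ.erase j, ℓ ((1 - s) * t i + s * B * g i)) -
      ∑ i ∈ Finset.univ.erase j, ℓ (t i) := Finset.sum_sub_distrib _ _
  have claim2 : ℓ (t j) - ℓ ((1 - s) * t j + s * B * g j) ≤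
      (n : ℝ) * (s * B * (-deriv ℓ (γ * B))) := by linarith
  -- lower bound for the j-th gain
  set tv : ℝ := (1 - s) * t j + s * B * g j with htv
  have htvle : tv ≤ δ * B := by
    have h1 : (1 - s) * t j ≤ (1 - s) * (δ / 4 * B) :=
      mul_le_mul_of_nonneg_left htj (by linarith)
    have h2 : s * B * g j ≤ s * B * 1 :=
      mul_le_mul_of_nonneg_left (hgle j) (by positivity)
    have h3 : tv ≤ (1 - s) * (δ / 4 * B) + s * B := by rw [htv]; linarith
    have e : (1 - 3 * δ / 8) * (δ / 4 * B) + (3 * δ / 8) * B =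
        δ * B - (3 / 8) * (δ * B) - (3 / 32) * (δ * (δ * B)) := by ring
    have hp1 : 0 < δ * B := mul_pos hδ hB
    have hp2 : 0 ≤ δ * (δ * B) := by positivity
    rw [hs] at h3
    nlinarith [h3, e, hp1, hp2]
  have htvgap : s * (γ / 2) * B ≤ tv - t j := by
    have h1 : γ ≤ g j := hγi j
    have h2 : tv - t j = s * (B * g j - t j) := by rw [htv]; ring
    have h3 : B * γ ≤ B * g j := mul_le_mul_of_nonneg_left h1 hB.le
    have h4 : γ / 2 * B ≤ B * g j - t j := by nlinarith [htj, mul_pos hδ hB, mul_pos hγ hB]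
    have h5 : s * (γ / 2 * B) ≤ s * (B * g j - t j) := mul_le_mul_of_nonneg_left h4 hs0.le
    rw [h2]; linarith
  have hdtv : -deriv ℓ (δ * B) ≤ -deriv ℓ tv := by
    have := hmono htvle; linarith
  have htan := aux_tangent hdiff hmono tv (t j)
  -- ℓ tv + deriv ℓ tv * (t j - tv) ≤ ℓ (t j)
  have hgain : (-deriv ℓ (δ * B)) * (s * (γ / 2) * B) ≤ ℓ (t j) - ℓ tv := by
    have hDtv : 0 < -deriv ℓ tv := by have := hneg tv; linarith
    have h1 : (-deriv ℓ tv) * (tv - t j) ≤ ℓ (t j) - ℓ tv := by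
      have e : (-deriv ℓ tv) * (tv - t j) = deriv ℓ tv * (t j - tv) := by ring
      linarith [htan, e.le]
    have hDδ : 0 < -deriv ℓ (δ * B) := by have := hneg (δ * B); linarith
    calc (-deriv ℓ (δ * B)) * (s * (γ / 2) * B) ≤ (-deriv ℓ tv) * (tv - t j) := by
          apply mul_le_mul hdtv htvgap (by positivity) hDtv.le
    _ ≤ ℓ (t j) - ℓ tv := h1
  -- combine
  have hfinal : (-deriv ℓ (δ * B)) * (s * (γ / 2) * B) ≤
      (n : ℝ) * (s * B * (-deriv ℓ (γ * B))) := le_trans hgain claim2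
  have hsB : 0 < s * B := by positivity
  rw [div_mul_eq_mul_div, le_div_iff₀ hγ]
  have hn1 : (1 : ℝ) ≤ (n : ℝ) := by exact_mod_cast hn
  nlinarith [hfinal]

end AuxStatement8

/-- For linearly separable data, if the regularization path
converges in direction to a unit vector `ū`, then for every `α > 0` there is a
radius `ρ(α) > 0` such that for every `w` with `‖w‖ > ρ(α)`,
`R((1+α)‖w‖ ū) ≤ R(w)`. -/
theorem moving_along_limit_direction_nearly_optimal
    {d n : ℕ} (hn : 0 < n)
    (x : Fin n → EuclideanSpace ℝ (Fin d)) (y : Fin n → ℝ)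
    (hx : ∀ i, ‖x i‖ ≤ 1) (hy : ∀ i, y i = 1 ∨ y i = -1)
    (hsep : ∃ (u : EuclideanSpace ℝ (Fin d)) (γ : ℝ), ‖u‖ = 1 ∧ 0 < γ ∧
      ∀ i, γ ≤ y i * ⟪u, x i⟫)
    (ℓ : ℝ → ℝ)
    (hconv : ConvexOn ℝ Set.univ ℓ)
    (hdiff : Differentiable ℝ ℓ)
    (hanti : StrictAnti ℓ)
    (hlim0 : Tendsto ℓ atTop (nhds 0))
    (R : EuclideanSpace ℝ (Fin d) → ℝ)
    (hR : R = fun w => (1 / (n : ℝ)) * ∑ i, ℓ (y i * ⟪w, x i⟫))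
    (wbar : ℝ → EuclideanSpace ℝ (Fin d))
    (hwbar : ∀ B : ℝ, 0 ≤ B → ‖wbar B‖ ≤ B ∧ ∀ v, ‖v‖ ≤ B → R (wbar B) ≤ R v)
    (ubar : EuclideanSpace ℝ (Fin d)) (hubar : ‖ubar‖ = 1)
    (hlim : Tendsto (fun B : ℝ => B⁻¹ • wbar B) atTop (nhds ubar)) :
    ∀ α : ℝ, 0 < α → ∃ ρ : ℝ, 0 < ρ ∧
      ∀ w : EuclideanSpace ℝ (Fin d), ρ < ‖w‖ →
        R (((1 + α) * ‖w‖) • ubar) ≤ R w := by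
  have hmono : Monotone (deriv ℓ) := aux_deriv_mono hconv hdiff
  have hneg : ∀ t, deriv ℓ t < 0 := aux_deriv_neg hdiff hmono hanti
  have hnn : ∀ t, 0 ≤ ℓ t := aux_nonneg hanti hlim0
  obtain ⟨u, γ, hu, hγpos, hγi⟩ := hsep
  have hy1 : ∀ i, |y i| = 1 := by
    intro i; rcases hy i with h | h <;> simp [h]
  have hγ1 : γ ≤ 1 := by
    set i₀ : Fin n := ⟨0, hn⟩
    calc γ ≤ y i₀ * ⟪u, x i₀⟫ := hγi i₀
    _ ≤ |y i₀ * ⟪u, x i₀⟫| := le_abs_self _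
    _ = |⟪u, x i₀⟫| := by rw [abs_mul, hy1 i₀, one_mul]
    _ ≤ ‖u‖ * ‖x i₀‖ := abs_real_inner_le_norm _ _
    _ ≤ 1 * 1 := by rw [hu]; simpa using hx i₀
    _ = 1 := by ring
  set c : Fin n → ℝ := fun i => y i * ⟪ubar, x i⟫ with hc
  have hst : ∀ i, Tendsto (fun B : ℝ => y i * ⟪B⁻¹ • wbar B, x i⟫) atTop (nhds (c i)) := by
    intro i
    have h1 : Tendsto (fun B : ℝ => (⟪B⁻¹ • wbar B, x i⟫ : ℝ)) atTop
        (nhds (⟪ubar, x i⟫ : ℝ)) := hlim.inner tendsto_const_nhds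
    exact h1.const_mul (y i)
  have hinner_eq : ∀ (B : ℝ), B ≠ 0 → ∀ i,
      y i * ⟪wbar B, x i⟫ = B * (y i * ⟪B⁻¹ • wbar B, x i⟫) := by
    intro B hBne i
    rw [real_inner_smul_left]
    field_simp
  -- positivity of all margins of the limit direction
  have hcpos : ∀ i, 0 < c i := by
    by_contra hcon
    push_neg at hcon
    obtain ⟨j, hj⟩ := hcon
    set C : ℝ := 2 * n / γ with hCdef
    have hn1 : (1 : ℝ) ≤ (n : ℝ) := by exact_mod_cast hn
    have hC2 : 2 ≤ C := by
      rw [hCdef, le_div_iff₀ hγpos]; nlinarith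
    have hC1 : 1 ≤ C := by linarith
    have hCpos : 0 < C := by linarith
    set δ : ℝ := γ / (2 * C) with hδdef
    have hδpos : 0 < δ := by rw [hδdef]; positivity
    have hδγ : δ ≤ γ / 4 := by
      rw [hδdef, div_le_div_iff₀ (by linarith) (by norm_num)]
      nlinarith
    have hγδ : γ = 2 * C * δ := by
      rw [hδdef]; field_simp
    have hev : ∀ᶠ B in atTop, y j * ⟪B⁻¹ • wbar B, x j⟫ < δ / 4 :=
      (hst j).eventually_lt_const (by linarith : c j < δ / 4)
    obtain ⟨B₀, hB₀⟩ := eventually_atTop.mp (hev.and (eventually_ge_atTop 1))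
    have hz₀pos : 0 < δ * max B₀ 1 := by
      have : (0:ℝ) < max B₀ 1 := lt_of_lt_of_le zero_lt_one (le_max_right _ _)
      positivity
    apply aux_false hdiff hmono hneg hnn C (δ * max B₀ 1) hC1 hz₀pos
    intro z hz
    set B : ℝ := z / δ with hBdef
    have hBge : max B₀ 1 ≤ B := by
      rw [hBdef, le_div_iff₀ hδpos]
      calc max B₀ 1 * δ = δ * max B₀ 1 := by ring
      _ ≤ z := hz
    have hB1 : 1 ≤ B := le_trans (le_max_right _ _) hBge
    have hBpos : 0 < B := by linarith
    have hcond := hB₀ B (le_trans (le_max_left _ _) hBge)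
    have htj : y j * ⟪wbar B, x j⟫ ≤ δ / 4 * B := by
      rw [hinner_eq B (ne_of_gt hBpos) j]
      calc B * (y j * ⟪B⁻¹ • wbar B, x j⟫) ≤ B * (δ / 4) :=
        mul_le_mul_of_nonneg_left hcond.1.le hBpos.le
      _ = δ / 4 * B := by ring
    have hkey := aux_key hn x y hx hy hdiff hmono hanti hneg R hR u γ hu hγpos hγi hγ1
      (wbar B) B hBpos (hwbar B hBpos.le).1 (hwbar B hBpos.le).2 j δ hδpos hδγ htj
    have e1 : δ * B = z := by
      rw [hBdef]; field_simp
    have e2 : γ * B = 2 * C * z := by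
      rw [hγδ, hBdef]; field_simp
    rw [e1, e2] at hkey
    exact hkey
  -- main conclusion
  intro α hα
  have hev2 : ∀ᶠ B in atTop, ∀ i, y i * ⟪B⁻¹ • wbar B, x i⟫ < (1 + α) * c i := by
    rw [eventually_all]
    intro i
    exact (hst i).eventually_lt_const (by nlinarith [hcpos i])
  obtain ⟨B₀, hB₀⟩ := eventually_atTop.mp (hev2.and (eventually_ge_atTop 1))
  refine ⟨max B₀ 1, lt_of_lt_of_le zero_lt_one (le_max_right _ _), ?_⟩
  intro w hw
  set B : ℝ := ‖w‖ with hBdef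
  have hBge : max B₀ 1 ≤ B := le_of_lt hw
  have hB1 : 1 ≤ B := le_trans (le_max_right _ _) hBge
  have hBpos : 0 < B := by linarith
  have hcond := hB₀ B (le_trans (le_max_left _ _) hBge)
  have hterm : ∀ i, ℓ (y i * ⟪((1 + α) * B) • ubar, x i⟫) ≤ ℓ (y i * ⟪wbar B, x i⟫) := by
    intro i
    have e : y i * ⟪((1 + α) * B) • ubar, x i⟫ = B * ((1 + α) * c i) := by
      rw [real_inner_smul_left, hc]; ring
    have h1 : y i * ⟪wbar B, x i⟫ ≤ B * ((1 + α) * c i) := by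
      rw [hinner_eq B (ne_of_gt hBpos) i]
      exact mul_le_mul_of_nonneg_left (hcond.1 i).le hBpos.le
    rw [e]
    exact hanti.antitone h1
  have hRle : R (((1 + α) * B) • ubar) ≤ R (wbar B) := by
    rw [hR]
    apply mul_le_mul_of_nonneg_left _ (by positivity : (0:ℝ) ≤ 1 / (n:ℝ))
    exact Finset.sum_le_sum fun i _ => hterm i
  exact le_trans hRle ((hwbar B (norm_nonneg w)).2 w le_rfl)
end

section
/- Suppose the training data is linearly separable and the loss ℓ has an exponential tail: lim_{z→∞} ℓ(z)/(a·exp(−bz)) = 1 for some a, b > 0. Then lim_{B→∞} w̄(B)/B = û, where û is the unique maximum-margin solution, i.e. the unique unit vector maximizing min_{1≤i≤n} y_i⟨u, x_i⟩. -/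
open Filter RealInnerProductSpace

set_option maxHeartbeats 1000000 in
/-- For linearly separable data and a loss with exponential
tail `ℓ(z) ∼ a e^{−bz}`, the regularization path converges in direction to the
unique maximum-margin unit vector `û`. -/
theorem exponential_tail_converges_to_max_margin
    {d n : ℕ} (hn : 0 < n)
    (x : Fin n → EuclideanSpace ℝ (Fin d)) (y : Fin n → ℝ)
    (hx : ∀ i, ‖x i‖ ≤ 1) (hy : ∀ i, y i = 1 ∨ y i = -1)
    (hsep : ∃ (u : EuclideanSpace ℝ (Fin d)) (γ : ℝ), ‖u‖ = 1 ∧ 0 < γ ∧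
      ∀ i, γ ≤ y i * ⟪u, x i⟫)
    (ℓ : ℝ → ℝ)
    (hconv : ConvexOn ℝ Set.univ ℓ)
    (hdiff : Differentiable ℝ ℓ)
    (hanti : StrictAnti ℓ)
    (hlim0 : Tendsto ℓ atTop (nhds 0))
    (a b : ℝ) (ha : 0 < a) (hb : 0 < b)
    (htail : Tendsto (fun z : ℝ => ℓ z / (a * Real.exp (-b * z))) atTop (nhds 1))
    (R : EuclideanSpace ℝ (Fin d) → ℝ)
    (hR : R = fun w => (1 / (n : ℝ)) * ∑ i, ℓ (y i * ⟪w, x i⟫))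
    (wbar : ℝ → EuclideanSpace ℝ (Fin d))
    (hwbar : ∀ B : ℝ, 0 ≤ B → ‖wbar B‖ ≤ B ∧ ∀ v, ‖v‖ ≤ B → R (wbar B) ≤ R v)
    (uhat : EuclideanSpace ℝ (Fin d)) (huhat : ‖uhat‖ = 1)
    (hmax : ∀ v : EuclideanSpace ℝ (Fin d), ‖v‖ = 1 →
      (⨅ i, y i * ⟪v, x i⟫) ≤ ⨅ i, y i * ⟪uhat, x i⟫) :
    Tendsto (fun B : ℝ => B⁻¹ • wbar B) atTop (nhds uhat) ∧
    (∀ v : EuclideanSpace ℝ (Fin d), ‖v‖ = 1 →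
      (⨅ i, y i * ⟪v, x i⟫) = (⨅ i, y i * ⟪uhat, x i⟫) → v = uhat) := by
  haveI : Nonempty (Fin n) := ⟨⟨0, hn⟩⟩
  set f : EuclideanSpace ℝ (Fin d) → ℝ := fun w => ⨅ i, y i * ⟪w, x i⟫ with hf
  -- basic iInf facts
  have f_le : ∀ w i, f w ≤ y i * ⟪w, x i⟫ := fun w i =>
    ciInf_le (Set.Finite.bddBelow (Set.finite_range _)) i
  have f_ge : ∀ (w) (c : ℝ), (∀ i, c ≤ y i * ⟪w, x i⟫) → c ≤ f w := fun w c h => le_ciInf h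
  have f_attain : ∀ w, ∃ i0, f w = y i0 * ⟪w, x i0⟫ := by
    intro w
    obtain ⟨i0, h⟩ := Finite.exists_min (fun i => y i * ⟪w, x i⟫)
    exact ⟨i0, le_antisymm (f_le w i0) (le_ciInf h)⟩
  set γs : ℝ := f uhat with hγs
  have γpos : 0 < γs := by
    obtain ⟨u, γ, hu1, hγ, hsep'⟩ := hsep
    exact lt_of_lt_of_le hγ (le_trans (f_ge u γ hsep') (hmax u hu1))
  -- scaling
  have f_smul : ∀ (c : ℝ), 0 ≤ c → ∀ w, f (c • w) = c * f w := by
    intro c hc w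
    obtain ⟨i0, hi0⟩ := f_attain w
    have hterm : ∀ i, y i * ⟪c • w, x i⟫ = c * (y i * ⟪w, x i⟫) := by
      intro i; rw [real_inner_smul_left]; ring
    have h1 : f (c • w) ≤ c * f w := by
      rw [hi0]
      calc f (c • w) ≤ y i0 * ⟪c • w, x i0⟫ := f_le _ i0
        _ = c * (y i0 * ⟪w, x i0⟫) := hterm i0
    have h2 : c * f w ≤ f (c • w) := by
      apply f_ge
      intro i
      rw [hterm i]
      exact mul_le_mul_of_nonneg_left (f_le w i) hc
    exact le_antisymm h1 h2
  have f_le_norm : ∀ w, f w ≤ γs * ‖w‖ := by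
    intro w
    rcases eq_or_ne w 0 with rfl | hw
    · simp only [norm_zero, mul_zero]
      obtain ⟨i0, hi0⟩ := f_attain 0
      rw [hi0, inner_zero_left, mul_zero]
    · have hnw : (0:ℝ) < ‖w‖ := norm_pos_iff.2 hw
      set u := ‖w‖⁻¹ • w with hu
      have hu1 : ‖u‖ = 1 := by
        rw [hu, norm_smul, norm_inv, norm_norm, inv_mul_cancel₀ hnw.ne']
      have : f w = ‖w‖ * f u := by
        rw [← f_smul ‖w‖ hnw.le u, hu, smul_smul, mul_inv_cancel₀ hnw.ne', one_smul]
      rw [this, mul_comm]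
      exact mul_le_mul_of_nonneg_right (hmax u hu1) hnw.le
  -- superadditivity
  have f_add : ∀ v w, f v + f w ≤ f (v + w) := by
    intro v w
    apply f_ge
    intro i
    have : y i * ⟪v + w, x i⟫ = y i * ⟪v, x i⟫ + y i * ⟪w, x i⟫ := by
      rw [inner_add_left]; ring
    rw [this]
    exact add_le_add (f_le v i) (f_le w i)
  -- key quantitative uniqueness
  have key : ∀ v : EuclideanSpace ℝ (Fin d), ‖v‖ ≤ 1 → ∀ ε : ℝ, 0 ≤ ε →
      γs - ε ≤ f v → ‖v - uhat‖ ^ 2 ≤ 4 * ε / γs := by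
    intro v hv ε hε hfv
    have h1 : 2 * γs - ε ≤ f (v + uhat) := by
      have := f_add v uhat
      linarith
    have h2 : f (v + uhat) ≤ γs * ‖v + uhat‖ := f_le_norm _
    have h3 : 2 * γs - ε ≤ γs * ‖v + uhat‖ := le_trans h1 h2
    have hpar : ‖v - uhat‖ ^ 2 + ‖v + uhat‖ ^ 2 = 2 * ‖v‖ ^ 2 + 2 * ‖uhat‖ ^ 2 := by
      have := norm_add_sq_real v uhat
      have := norm_sub_sq_real v uhat
      nlinarith [this]
    rw [le_div_iff₀ γpos]
    have hv2 : ‖v‖ ^ 2 ≤ 1 := by nlinarith [norm_nonneg v]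
    have hA2 : ‖v + uhat‖ ≤ 2 := by
      calc ‖v + uhat‖ ≤ ‖v‖ + ‖uhat‖ := norm_add_le _ _
        _ ≤ 2 := by rw [huhat]; linarith
    have hS : ‖v - uhat‖ ^ 2 ≤ 4 - ‖v + uhat‖ ^ 2 := by rw [huhat] at hpar; nlinarith
    have h5 : γs * ‖v - uhat‖ ^ 2 ≤ γs * (4 - ‖v + uhat‖ ^ 2) :=
      mul_le_mul_of_nonneg_left hS γpos.le
    nlinarith [mul_nonneg (by linarith : (0:ℝ) ≤ γs * ‖v + uhat‖ - (2 * γs - ε))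
      (by positivity : (0:ℝ) ≤ 2 + ‖v + uhat‖), mul_le_mul_of_nonneg_left hA2 hε]
  -- positivity of loss
  have lpos : ∀ z : ℝ, 0 < ℓ z := by
    intro z
    have h1 : (0:ℝ) ≤ ℓ (z + 1) := by
      apply le_of_tendsto hlim0
      filter_upwards [eventually_ge_atTop (z + 1)] with t ht
      exact (hanti.antitone ht)
    linarith [hanti (by linarith : z < z + 1)]
  -- tail two-sided bounds
  obtain ⟨Z, hZb⟩ : ∃ Z : ℝ, ∀ z, Z ≤ z →
      (a / 2 * Real.exp (-b * z) ≤ ℓ z ∧ ℓ z ≤ 2 * a * Real.exp (-b * z)) := by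
    have h := htail.eventually (Ioo_mem_nhds (show (1:ℝ)/2 < 1 by norm_num)
      (show (1:ℝ) < 2 by norm_num))
    rw [eventually_atTop] at h
    obtain ⟨Z, hZ⟩ := h
    refine ⟨Z, fun z hz => ?_⟩
    have he : (0:ℝ) < a * Real.exp (-b * z) := by positivity
    obtain ⟨hlo, hhi⟩ := hZ z hz
    constructor
    · rw [lt_div_iff₀ he] at hlo; nlinarith
    · rw [div_lt_iff₀ he] at hhi; nlinarith
  -- comparison inequality
  have hnn : (0:ℝ) < (n:ℝ) := by exact_mod_cast hn
  have hcomp : ∀ B : ℝ, 0 ≤ B → ℓ (f (wbar B)) ≤ n * ℓ (γs * B) := by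
    intro B hB
    obtain ⟨hnorm, hopt⟩ := hwbar B hB
    have hBu : ‖B • uhat‖ ≤ B := by
      rw [norm_smul, huhat, mul_one, Real.norm_eq_abs, abs_of_nonneg hB]
    have hRw := hopt (B • uhat) hBu
    obtain ⟨i0, hi0⟩ := f_attain (wbar B)
    have hlow : (1/(n:ℝ)) * ℓ (f (wbar B)) ≤ R (wbar B) := by
      rw [hR, hi0]
      exact mul_le_mul_of_nonneg_left
        (Finset.single_le_sum (f := fun i => ℓ (y i * ⟪wbar B, x i⟫))
          (fun i _ => (lpos _).le) (Finset.mem_univ i0)) (by positivity)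
    have hup : R (B • uhat) ≤ ℓ (γs * B) := by
      rw [hR]
      have hterm : ∀ i, ℓ (y i * ⟪B • uhat, x i⟫) ≤ ℓ (γs * B) := by
        intro i
        apply hanti.antitone
        rw [real_inner_smul_left]
        calc γs * B = B * γs := mul_comm _ _
          _ ≤ B * (y i * ⟪uhat, x i⟫) := mul_le_mul_of_nonneg_left (f_le uhat i) hB
          _ = y i * (B * ⟪uhat, x i⟫) := by ring
      calc (1/(n:ℝ)) * ∑ i, ℓ (y i * ⟪B • uhat, x i⟫)
          ≤ (1/(n:ℝ)) * ∑ _i : Fin n, ℓ (γs * B) := by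
            exact mul_le_mul_of_nonneg_left
              (Finset.sum_le_sum (fun i _ => hterm i)) (by positivity)
        _ = ℓ (γs * B) := by
            rw [Finset.sum_const, Finset.card_univ, Fintype.card_fin, nsmul_eq_mul]
            field_simp
    have h6 : (1/(n:ℝ)) * ℓ (f (wbar B)) ≤ ℓ (γs * B) := le_trans hlow (le_trans hRw hup)
    calc ℓ (f (wbar B)) = (n:ℝ) * ((1/(n:ℝ)) * ℓ (f (wbar B))) := by field_simp
      _ ≤ (n:ℝ) * ℓ (γs * B) := mul_le_mul_of_nonneg_left h6 hnn.le
  -- γs * B → ∞ and ℓ (γs B) → 0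
  have hγB : Tendsto (fun B : ℝ => γs * B) atTop atTop :=
    Tendsto.const_mul_atTop γpos tendsto_id
  have hml : Tendsto (fun B : ℝ => ℓ (γs * B)) atTop (nhds 0) := hlim0.comp hγB
  -- margin of wbar B tends to infinity
  have hminf : Tendsto (fun B : ℝ => f (wbar B)) atTop atTop := by
    rw [tendsto_atTop]
    intro C
    have hml' : Tendsto (fun B : ℝ => (n:ℝ) * ℓ (γs * B)) atTop (nhds 0) := by
      simpa using hml.const_mul (n:ℝ)
    have h0 : ∀ᶠ B : ℝ in atTop, (n:ℝ) * ℓ (γs * B) < ℓ C :=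
      hml'.eventually_lt_const (lpos C)
    filter_upwards [h0, eventually_ge_atTop (0:ℝ)] with B hB1 hB2
    by_contra hlt
    push_neg at hlt
    have h2 : ℓ C < ℓ (f (wbar B)) := hanti hlt
    linarith [hcomp B hB2]
  set C0 : ℝ := Real.log (4 * n) / b with hC0
  have hC0pos : 0 ≤ C0 := by
    apply div_nonneg _ hb.le
    apply Real.log_nonneg
    have : (1:ℝ) ≤ (n:ℝ) := by exact_mod_cast hn
    linarith
  -- eventual quantitative bound
  have hbound : ∀ᶠ B : ℝ in atTop,
      ‖B⁻¹ • wbar B - uhat‖ ^ 2 ≤ (4 * C0 / γs) * B⁻¹ := by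
    filter_upwards [eventually_gt_atTop (0:ℝ), hminf.eventually_ge_atTop Z,
      hγB.eventually_ge_atTop Z] with B hB hmZ hgZ
    have h1 : ℓ (f (wbar B)) ≤ n * ℓ (γs * B) := hcomp B hB.le
    have h2 := (hZb _ hmZ).1
    have h3 := (hZb _ hgZ).2
    have h4 : a / 2 * Real.exp (-b * f (wbar B)) ≤ (n:ℝ) * (2 * a * Real.exp (-b * (γs * B))) :=
      le_trans h2 (le_trans h1 (mul_le_mul_of_nonneg_left h3 hnn.le))
    have h5 : Real.exp (-b * f (wbar B)) ≤ Real.exp (Real.log (4 * n) + -b * (γs * B)) := by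
      rw [Real.exp_add, Real.exp_log (by positivity : (0:ℝ) < 4 * n)]
      nlinarith [Real.exp_pos (-b * f (wbar B)), Real.exp_pos (-b * (γs * B))]
    have h6 : -b * f (wbar B) ≤ Real.log (4 * n) + -b * (γs * B) := Real.exp_le_exp.mp h5
    have h7 : γs * B - C0 ≤ f (wbar B) := by
      have hbb : b * (γs * B) - Real.log (4 * n) ≤ b * f (wbar B) := by linarith
      calc γs * B - C0 = (b * (γs * B) - Real.log (4 * n)) / b := by
            rw [hC0]; field_simp
        _ ≤ (b * f (wbar B)) / b := by gcongr
        _ = f (wbar B) := by field_simp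
    have hnorm1 : ‖B⁻¹ • wbar B‖ ≤ 1 := by
      rw [norm_smul, norm_inv, Real.norm_eq_abs, abs_of_pos hB]
      calc B⁻¹ * ‖wbar B‖ ≤ B⁻¹ * B :=
            mul_le_mul_of_nonneg_left (hwbar B hB.le).1 (inv_nonneg.2 hB.le)
        _ = 1 := inv_mul_cancel₀ hB.ne'
    have hfv : γs - C0 / B ≤ f (B⁻¹ • wbar B) := by
      rw [f_smul B⁻¹ (inv_nonneg.2 hB.le)]
      have hmono : B⁻¹ * (γs * B - C0) ≤ B⁻¹ * f (wbar B) :=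
        mul_le_mul_of_nonneg_left h7 (inv_nonneg.2 hB.le)
      calc γs - C0 / B = B⁻¹ * (γs * B - C0) := by field_simp
        _ ≤ B⁻¹ * f (wbar B) := hmono
    have hε : 0 ≤ C0 / B := div_nonneg hC0pos hB.le
    calc ‖B⁻¹ • wbar B - uhat‖ ^ 2 ≤ 4 * (C0 / B) / γs := key _ hnorm1 _ hε hfv
      _ = (4 * C0 / γs) * B⁻¹ := by ring
  have hsq0 : Tendsto (fun B : ℝ => ‖B⁻¹ • wbar B - uhat‖ ^ 2) atTop (nhds 0) := by
    apply tendsto_of_tendsto_of_tendsto_of_le_of_le' tendsto_const_nhds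
      (show Tendsto (fun B : ℝ => (4 * C0 / γs) * B⁻¹) atTop (nhds 0) by
        simpa using tendsto_inv_atTop_zero.const_mul (4 * C0 / γs))
      (Eventually.of_forall (fun B => sq_nonneg _)) hbound
  have hn0 : Tendsto (fun B : ℝ => ‖B⁻¹ • wbar B - uhat‖) atTop (nhds 0) := by
    have h := (Real.continuous_sqrt.tendsto' 0 0 Real.sqrt_zero).comp hsq0
    refine h.congr fun B => ?_
    exact Real.sqrt_sq (norm_nonneg _)
  constructor
  · rw [tendsto_iff_norm_sub_tendsto_zero]
    exact hn0
  · intro v hv1 hveq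
    have hk := key v (le_of_eq hv1) 0 le_rfl (by rw [sub_zero]; exact le_of_eq hveq.symm)
    have h0 : ‖v - uhat‖ ^ 2 ≤ 0 := by simpa using hk
    have h1 : ‖v - uhat‖ ^ 2 = 0 := le_antisymm h0 (sq_nonneg _)
    have h2 : ‖v - uhat‖ = 0 := by
      have := sq_eq_zero_iff.mp h1
      exact this
    exact sub_eq_zero.mp (norm_eq_zero.mp h2)
end

section
/- Suppose the training data is linearly separable and the loss ℓ has a polynomial tail: lim_{z→∞} −ℓ'(z)/(a z^{−b}) = 1 for some a, b > 0. Then the limit lim_{B→∞} w̄(B)/B exists. -/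
open Filter RealInnerProductSpace

set_option maxHeartbeats 1000000

section auxiliary_lemmas

open Set MeasureTheory intervalIntegral

lemma rpow_neg_strictConvexOn' {p : ℝ} (hp : p < 0) :
    StrictConvexOn ℝ (Set.Ioi (0:ℝ)) fun x : ℝ => x ^ p := by
  apply strictConvexOn_of_deriv2_pos (convex_Ioi 0)
  · intro x hx
    exact (Real.continuousAt_rpow_const x p (Or.inl (ne_of_gt hx))).continuousWithinAt
  · intro x hx
    rw [interior_Ioi] at hx
    have hev : deriv (fun y : ℝ => y ^ p) =ᶠ[nhds x] fun y => p * y ^ (p - 1) := by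
      filter_upwards [Ioi_mem_nhds hx] with y hy
      exact Real.deriv_rpow_const y p
    have h2 : deriv^[2] (fun y : ℝ => y ^ p) x = deriv (deriv fun y : ℝ => y ^ p) x := rfl
    rw [h2, hev.deriv_eq]
    have hd : HasDerivAt (fun y : ℝ => y ^ (p - 1)) ((p - 1) * x ^ (p - 1 - 1)) x :=
      Real.hasDerivAt_rpow_const (Or.inl (ne_of_gt hx))
    rw [(hd.const_mul p).deriv]
    have hxp := Real.rpow_pos_of_pos hx (p - 1 - 1)
    have hpp : 0 < p * (p - 1) := mul_pos_of_neg_of_neg hp (by linarith)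
    nlinarith [mul_pos hpp hxp]

lemma rpow_neg_midpoint_le' {p s t : ℝ} (hp : p < 0) (hs : 0 < s) (ht : 0 < t) :
    ((s + t) / 2) ^ p ≤ (s ^ p + t ^ p) / 2 := by
  rcases eq_or_ne s t with rfl | hst
  · have : (s + s) / 2 = s := by ring
    rw [this]; ring_nf; exact le_rfl
  · have h := (rpow_neg_strictConvexOn' hp).2 (Set.mem_Ioi.2 hs) (Set.mem_Ioi.2 ht) hst
      (by norm_num : (0:ℝ) < 1/2) (by norm_num : (0:ℝ) < 1/2) (by norm_num)
    have e1 : (1/2 : ℝ) • s + (1/2 : ℝ) • t = (s + t) / 2 := by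
      simp [smul_eq_mul]; ring
    have e2 : (1/2 : ℝ) • s ^ p + (1/2 : ℝ) • t ^ p = (s ^ p + t ^ p) / 2 := by
      simp [smul_eq_mul]; ring
    rw [e1, e2] at h
    exact le_of_lt h

lemma rpow_neg_midpoint_lt' {p s t : ℝ} (hp : p < 0) (hs : 0 < s) (ht : 0 < t) (hst : s ≠ t) :
    ((s + t) / 2) ^ p < (s ^ p + t ^ p) / 2 := by
  have h := (rpow_neg_strictConvexOn' hp).2 (Set.mem_Ioi.2 hs) (Set.mem_Ioi.2 ht) hst
    (by norm_num : (0:ℝ) < 1/2) (by norm_num : (0:ℝ) < 1/2) (by norm_num)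
  have e1 : (1/2 : ℝ) • s + (1/2 : ℝ) • t = (s + t) / 2 := by
    simp [smul_eq_mul]; ring
  have e2 : (1/2 : ℝ) • s ^ p + (1/2 : ℝ) • t ^ p = (s ^ p + t ^ p) / 2 := by
    simp [smul_eq_mul]; ring
  rw [e1, e2] at h
  exact h

lemma loss_tail_bounds' (ℓ : ℝ → ℝ) (hconv : ConvexOn ℝ Set.univ ℓ)
    (hdiff : Differentiable ℝ ℓ) (hanti : StrictAnti ℓ)
    (hlim0 : Tendsto ℓ atTop (nhds 0)) {a b : ℝ} (ha : 0 < a) (hb : 0 < b)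
    (htail : Tendsto (fun z : ℝ => -deriv ℓ z / (a * z ^ (-b))) atTop (nhds 1)) :
    1 < b ∧ ∀ ε : ℝ, 0 < ε → ∃ Z : ℝ, 1 ≤ Z ∧ ∀ z : ℝ, Z ≤ z →
      (1 - ε) * (a / (b - 1)) * z ^ (1 - b) ≤ ℓ z ∧
      ℓ z ≤ (1 + ε) * (a / (b - 1)) * z ^ (1 - b) := by
  have hℓ0 : ∀ z, 0 ≤ ℓ z := by
    intro z
    refine le_of_tendsto hlim0 ?_
    exact eventually_atTop.2 ⟨z, fun t ht => hanti.antitone ht⟩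
  have hmono : Monotone (deriv ℓ) := by
    have := hconv.monotoneOn_deriv (fun x _ => hdiff x)
    exact monotoneOn_univ.1 this
  have hFTC : ∀ z M : ℝ, (∫ t in z..M, -deriv ℓ t) = ℓ z - ℓ M := by
    intro z M
    rw [intervalIntegral.integral_neg,
      intervalIntegral.integral_deriv_eq_sub (fun t _ => hdiff t) hmono.intervalIntegrable]
    ring
  have hDbound : ∀ ε : ℝ, 0 < ε → ∃ Z : ℝ, 1 ≤ Z ∧ ∀ z, Z ≤ z →
      (1 - ε) * (a * z ^ (-b)) ≤ -deriv ℓ z ∧ -deriv ℓ z ≤ (1 + ε) * (a * z ^ (-b)) := by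
    intro ε hε
    have hmem : Set.Icc (1 - ε) (1 + ε) ∈ nhds (1 : ℝ) :=
      Icc_mem_nhds (by linarith) (by linarith)
    obtain ⟨Z₀, hZ₀⟩ := eventually_atTop.1 (htail.eventually hmem)
    refine ⟨max Z₀ 1, le_max_right _ _, ?_⟩
    intro z hz
    have hz0 : (0:ℝ) < z := lt_of_lt_of_le one_pos (le_trans (le_max_right _ _) hz)
    have hpos : 0 < a * z ^ (-b) := mul_pos ha (Real.rpow_pos_of_pos hz0 _)
    have h := hZ₀ z (le_trans (le_max_left _ _) hz)
    exact ⟨(le_div_iff₀ hpos).1 h.1, (div_le_iff₀ hpos).1 h.2⟩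
  have hb1 : 1 < b := by
    by_contra hb1
    push_neg at hb1
    obtain ⟨Z, hZ1, hZ⟩ := hDbound (1/2) (by norm_num)
    have hZ0 : (0:ℝ) < Z := lt_of_lt_of_le one_pos hZ1
    set M := Z * Real.exp ((2 / a) * (ℓ Z + 1)) with hM
    have hexp1 : (1:ℝ) ≤ Real.exp ((2 / a) * (ℓ Z + 1)) := by
      apply Real.one_le_exp
      have := hℓ0 Z
      positivity
    have hZM : Z ≤ M := le_mul_of_one_le_right hZ0.le hexp1
    have huIcc : Set.uIcc Z M = Set.Icc Z M := Set.uIcc_of_le hZM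
    have hint1 : IntervalIntegrable (fun t => -deriv ℓ t) volume Z M :=
      hmono.intervalIntegrable.neg
    have hint2 : IntervalIntegrable (fun t => (a/2) * t⁻¹) volume Z M := by
      apply ContinuousOn.intervalIntegrable
      apply ContinuousOn.mul continuousOn_const
      apply ContinuousOn.inv₀ continuousOn_id
      intro t ht
      rw [huIcc] at ht
      exact ne_of_gt (lt_of_lt_of_le hZ0 ht.1)
    have hcomp : ∀ t ∈ Set.Icc Z M, (a/2) * t⁻¹ ≤ -deriv ℓ t := by
      intro t ht
      have ht1 : (1:ℝ) ≤ t := le_trans hZ1 ht.1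
      have ht0 : (0:ℝ) < t := lt_of_lt_of_le one_pos ht1
      have h1 := (hZ t ht.1).1
      have h2 : t⁻¹ ≤ t ^ (-b) := by
        rw [← Real.rpow_neg_one t]
        exact Real.rpow_le_rpow_of_exponent_le ht1 (by linarith)
      calc (a/2) * t⁻¹ ≤ (a/2) * t ^ (-b) := by
            apply mul_le_mul_of_nonneg_left h2 (by positivity)
        _ = (1 - 1/2) * (a * t ^ (-b)) := by ring
        _ ≤ -deriv ℓ t := h1
    have hle := intervalIntegral.integral_mono_on hZM hint2 hint1 hcomp
    rw [hFTC Z M] at hle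
    have hinv : (∫ t in Z..M, (a/2) * t⁻¹) = (a/2) * Real.log (M / Z) := by
      rw [intervalIntegral.integral_const_mul, integral_inv]
      rw [huIcc]
      intro h0
      exact absurd h0.1 (not_le.2 hZ0)
    rw [hinv] at hle
    have hMZ : M / Z = Real.exp ((2 / a) * (ℓ Z + 1)) := by
      rw [hM]
      field_simp
    have hlog : Real.log (M / Z) = (2 / a) * (ℓ Z + 1) := by
      rw [hMZ, Real.log_exp]
    rw [hlog] at hle
    have : (a/2) * ((2/a) * (ℓ Z + 1)) = ℓ Z + 1 := by
      field_simp
    rw [this] at hle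
    have := hℓ0 M
    linarith
  refine ⟨hb1, ?_⟩
  intro ε hε
  obtain ⟨Z, hZ1, hZ⟩ := hDbound ε hε
  refine ⟨Z, hZ1, ?_⟩
  intro z hz
  have hz0 : (0:ℝ) < z := lt_of_lt_of_le one_pos (le_trans hZ1 hz)
  have hb1' : (0:ℝ) < b - 1 := by linarith
  have hC0 : 0 < a / (b - 1) := div_pos ha hb1'
  have hIpow : ∀ M, z ≤ M → (∫ t in z..M, a * t ^ (-b)) =
      (a / (b-1)) * (z ^ (1-b) - M ^ (1-b)) := by
    intro M hM
    rw [intervalIntegral.integral_const_mul, integral_rpow]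
    · have h1 : -b + 1 = 1 - b := by ring
      rw [h1, show (1:ℝ) - b = -(b-1) from by ring, div_neg]
      ring
    · refine Or.inr ⟨by intro h; rw [neg_eq_iff_eq_neg] at h; linarith, ?_⟩
      rw [Set.uIcc_of_le hM]
      intro h0
      exact absurd h0.1 (not_le.2 hz0)
  have hintd : ∀ M, IntervalIntegrable (fun t => -deriv ℓ t) volume z M :=
    fun M => hmono.intervalIntegrable.neg
  have hintp : ∀ (c : ℝ) M, z ≤ M →
      IntervalIntegrable (fun t => c * (a * t ^ (-b))) volume z M := by
    intro c M hM
    apply ContinuousOn.intervalIntegrable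
    apply ContinuousOn.mul continuousOn_const
    apply ContinuousOn.mul continuousOn_const
    intro t ht
    rw [Set.uIcc_of_le hM] at ht
    exact (Real.continuousAt_rpow_const t (-b)
      (Or.inl (ne_of_gt (lt_of_lt_of_le hz0 ht.1)))).continuousWithinAt
  have hlow : ∀ M, z ≤ M →
      ℓ M + (1 - ε) * ((a / (b-1)) * (z ^ (1-b) - M ^ (1-b))) ≤ ℓ z := by
    intro M hM
    have hle := intervalIntegral.integral_mono_on hM (hintp (1-ε) M hM) (hintd M)
      (fun t ht => (hZ t (le_trans hz ht.1)).1)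
    rw [hFTC z M, intervalIntegral.integral_const_mul, hIpow M hM] at hle
    linarith
  have hup : ∀ M, z ≤ M →
      ℓ z ≤ ℓ M + (1 + ε) * ((a / (b-1)) * (z ^ (1-b) - M ^ (1-b))) := by
    intro M hM
    have hle := intervalIntegral.integral_mono_on hM (hintd M) (hintp (1+ε) M hM)
      (fun t ht => (hZ t (le_trans hz ht.1)).2)
    rw [hFTC z M, intervalIntegral.integral_const_mul, hIpow M hM] at hle
    linarith
  have hMlim : Tendsto (fun M : ℝ => M ^ (1-b)) atTop (nhds 0) := by
    have h := tendsto_rpow_neg_atTop hb1'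
    have : (fun M : ℝ => M ^ (1-b)) = fun M : ℝ => M ^ (-(b-1)) := by
      funext M; ring_nf
    rw [this]
    exact h
  constructor
  · have hT : Tendsto (fun M : ℝ => ℓ M + (1 - ε) * ((a / (b-1)) * (z ^ (1-b) - M ^ (1-b))))
        atTop (nhds (0 + (1 - ε) * ((a / (b-1)) * (z ^ (1-b) - 0)))) := by
      exact hlim0.add (((tendsto_const_nhds.sub hMlim).const_mul _).const_mul _)
    have h := le_of_tendsto hT (eventually_atTop.2 ⟨z, hlow⟩)
    calc (1 - ε) * (a / (b - 1)) * z ^ (1 - b)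
        = 0 + (1 - ε) * ((a / (b-1)) * (z ^ (1-b) - 0)) := by ring
      _ ≤ ℓ z := h
  · have hT : Tendsto (fun M : ℝ => ℓ M + (1 + ε) * ((a / (b-1)) * (z ^ (1-b) - M ^ (1-b))))
        atTop (nhds (0 + (1 + ε) * ((a / (b-1)) * (z ^ (1-b) - 0)))) := by
      exact hlim0.add (((tendsto_const_nhds.sub hMlim).const_mul _).const_mul _)
    have h := ge_of_tendsto hT (eventually_atTop.2 ⟨z, hup⟩)
    calc ℓ z ≤ 0 + (1 + ε) * ((a / (b-1)) * (z ^ (1-b) - 0)) := h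
      _ = (1 + ε) * (a / (b - 1)) * z ^ (1 - b) := by ring

end auxiliary_lemmas

/-- For linearly separable data and a loss with polynomial
tail `−ℓ'(z) ∼ a z^{−b}`, the regularization-path direction
`lim_{B→∞} w̄(B)/B` exists. -/
theorem polynomial_tail_regularization_direction_exists
    {d n : ℕ} (hn : 0 < n)
    (x : Fin n → EuclideanSpace ℝ (Fin d)) (y : Fin n → ℝ)
    (hx : ∀ i, ‖x i‖ ≤ 1) (hy : ∀ i, y i = 1 ∨ y i = -1)
    (hsep : ∃ (u : EuclideanSpace ℝ (Fin d)) (γ : ℝ), ‖u‖ = 1 ∧ 0 < γ ∧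
      ∀ i, γ ≤ y i * ⟪u, x i⟫)
    (ℓ : ℝ → ℝ)
    (hconv : ConvexOn ℝ Set.univ ℓ)
    (hdiff : Differentiable ℝ ℓ)
    (hanti : StrictAnti ℓ)
    (hlim0 : Tendsto ℓ atTop (nhds 0))
    (a b : ℝ) (ha : 0 < a) (hb : 0 < b)
    (htail : Tendsto (fun z : ℝ => -deriv ℓ z / (a * z ^ (-b))) atTop (nhds 1))
    (R : EuclideanSpace ℝ (Fin d) → ℝ)
    (hR : R = fun w => (1 / (n : ℝ)) * ∑ i, ℓ (y i * ⟪w, x i⟫))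
    (wbar : ℝ → EuclideanSpace ℝ (Fin d))
    (hwbar : ∀ B : ℝ, 0 ≤ B → ‖wbar B‖ ≤ B ∧ ∀ v, ‖v‖ ≤ B → R (wbar B) ≤ R v) :
    ∃ u : EuclideanSpace ℝ (Fin d),
      Tendsto (fun B : ℝ => B⁻¹ • wbar B) atTop (nhds u) := by
  obtain ⟨u₀, γ, hu₀n, hγ, hmarg⟩ := hsep
  obtain ⟨hb1, htb⟩ := loss_tail_bounds' ℓ hconv hdiff hanti hlim0 ha hb htail
  haveI : Nonempty (Fin n) := ⟨⟨0, hn⟩⟩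
  have hℓ0 : ∀ z, 0 ≤ ℓ z := by
    intro z
    refine le_of_tendsto hlim0 ?_
    exact eventually_atTop.2 ⟨z, fun t ht => hanti.antitone ht⟩
  set p : ℝ := 1 - b with hpdef
  have hp0 : p < 0 := by rw [hpdef]; linarith
  set C : ℝ := a / (b - 1) with hCdef
  have hC0 : 0 < C := div_pos ha (by linarith)
  set m : Fin n → EuclideanSpace ℝ (Fin d) → ℝ := fun i w => y i * ⟪w, x i⟫ with hmdef
  have hmcont : ∀ i, Continuous (m i) :=
    fun i => continuous_const.mul (continuous_id.inner continuous_const)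
  have hmadd : ∀ i (w v : EuclideanSpace ℝ (Fin d)), m i (w + v) = m i w + m i v := by
    intro i w v
    simp only [hmdef, inner_add_left]
    ring
  have hmsmul : ∀ i (t : ℝ) (w : EuclideanSpace ℝ (Fin d)), m i (t • w) = t * m i w := by
    intro i t w
    simp only [hmdef, real_inner_smul_left]
    ring
  have hm0 : ∀ i, m i 0 = 0 := by
    intro i
    simp [hmdef]
  set G : EuclideanSpace ℝ (Fin d) → ℝ := fun u => ∑ i, (m i u) ^ p with hGdef
  have hGcont : ContinuousOn G {u | ∀ i, 0 < m i u} := by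
    apply continuousOn_finset_sum
    intro i _
    intro u hu
    exact ((Real.continuousAt_rpow_const _ p (Or.inl (ne_of_gt (hu i)))).comp
      (hmcont i).continuousAt).continuousWithinAt
  set Sf : EuclideanSpace ℝ (Fin d) → ℝ := fun w => ∑ i, ℓ (m i w) with hSfdef
  have hn0 : (0:ℝ) < (n : ℝ) := Nat.cast_pos.2 hn
  have hmin : ∀ B : ℝ, 0 ≤ B → ∀ v, ‖v‖ ≤ B → Sf (wbar B) ≤ Sf v := by
    intro B hB v hv
    have h := (hwbar B hB).2 v hv
    rw [hR] at h
    have h2 : (1 / (n:ℝ)) * Sf (wbar B) ≤ (1 / (n:ℝ)) * Sf v := h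
    exact le_of_mul_le_mul_left h2 (by positivity)
  -- γ₀
  have hn1 : (1:ℝ) ≤ (n:ℝ) := Nat.one_le_cast.2 hn
  set γ₀ : ℝ := γ * (n:ℝ) ^ (1/p) with hγ₀def
  have hγ₀pos : 0 < γ₀ := mul_pos hγ (Real.rpow_pos_of_pos hn0 _)
  have hγ₀γ : γ₀ ≤ γ := by
    have h1 : (n:ℝ) ^ (1/p) ≤ 1 :=
      Real.rpow_le_one_of_one_le_of_nonpos hn1 (by
        apply div_nonpos_of_nonneg_of_nonpos <;> [norm_num; exact hp0.le])
    calc γ₀ = γ * (n:ℝ) ^ (1/p) := rfl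
      _ ≤ γ * 1 := mul_le_mul_of_nonneg_left h1 hγ.le
      _ = γ := mul_one γ
  have hγ₀p : γ₀ ^ p = (n:ℝ) * γ ^ p := by
    rw [hγ₀def, Real.mul_rpow hγ.le (Real.rpow_nonneg hn0.le _), ← Real.rpow_mul hn0.le,
      one_div, inv_mul_cancel₀ (ne_of_lt hp0), Real.rpow_one]
    ring
  have hGu₀ : G u₀ ≤ (n:ℝ) * γ ^ p := by
    calc G u₀ = ∑ i, (m i u₀) ^ p := rfl
      _ ≤ ∑ _i : Fin n, γ ^ p :=
          Finset.sum_le_sum (fun i _ => Real.rpow_le_rpow_of_nonpos hγ (hmarg i) hp0.le)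
      _ = (n:ℝ) * γ ^ p := by
          rw [Finset.sum_const, nsmul_eq_mul, Finset.card_univ, Fintype.card_fin]
  -- the compact set K' and minimizer ub
  set K' : Set (EuclideanSpace ℝ (Fin d)) := {u | ‖u‖ ≤ 1 ∧ ∀ i, γ₀ ≤ m i u} with hK'def
  have hK'sub : K' ⊆ {u | ∀ i, 0 < m i u} :=
    fun u hu i => lt_of_lt_of_le hγ₀pos (hu.2 i)
  have hK'closed : IsClosed K' := by
    have : K' = {u | ‖u‖ ≤ 1} ∩ ⋂ i, {u | γ₀ ≤ m i u} := by
      ext u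
      simp [hK'def, Set.mem_iInter]
    rw [this]
    exact (isClosed_le continuous_norm continuous_const).inter
      (isClosed_iInter fun i => isClosed_le continuous_const (hmcont i))
  have hK'cpt : IsCompact K' := by
    refine (isCompact_closedBall (0 : EuclideanSpace ℝ (Fin d)) 1).of_isClosed_subset
      hK'closed ?_
    intro u hu
    simpa [Metric.mem_closedBall, dist_zero_right] using hu.1
  have hK'ne : K'.Nonempty := ⟨u₀, le_of_eq hu₀n, fun i => le_trans hγ₀γ (hmarg i)⟩
  obtain ⟨ub, hubK, hubmin⟩ := hK'cpt.exists_isMinOn hK'ne (hGcont.mono hK'sub)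
  have hubmin' : ∀ u ∈ K', G ub ≤ G u := fun u hu => hubmin hu
  have hub_norm : ‖ub‖ ≤ 1 := hubK.1
  have hub_pos : ∀ i, 0 < m i ub := hK'sub hubK
  have hGub_pos : 0 < G ub :=
    Finset.sum_pos (fun i _ => Real.rpow_pos_of_pos (hub_pos i) p) Finset.univ_nonempty
  -- global minimality over the unit ball with positive margins
  have hglobal : ∀ u, ‖u‖ ≤ 1 → (∀ i, 0 < m i u) → G ub ≤ G u := by
    intro u hu hpos
    by_cases h : ∀ i, γ₀ ≤ m i u
    · exact hubmin' u ⟨hu, h⟩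
    · push_neg at h
      obtain ⟨i, hi⟩ := h
      have h1 : γ₀ ^ p < (m i u) ^ p := Real.rpow_lt_rpow_of_neg (hpos i) hi hp0
      have h2 : (m i u) ^ p ≤ G u :=
        Finset.single_le_sum (fun j _ => Real.rpow_nonneg (hpos j).le p) (Finset.mem_univ i)
      have h3 : G ub ≤ (n:ℝ) * γ ^ p :=
        le_trans (hubmin' u₀ ⟨le_of_eq hu₀n, fun j => le_trans hγ₀γ (hmarg j)⟩) hGu₀
      rw [hγ₀p] at h1
      linarith
  -- strict gap
  have hgap : ∀ u, ‖u‖ ≤ 1 → (∀ i, 0 < m i u) → u ≠ ub → G ub < G u := by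
    intro u hu hpos hne
    rcases lt_or_ge (G ub) (G u) with h | h
    · exact h
    exfalso
    have hEq : G u = G ub := le_antisymm h (hglobal u hu hpos)
    set v : EuclideanSpace ℝ (Fin d) := (1/2 : ℝ) • u + (1/2 : ℝ) • ub with hvdef
    have hmv : ∀ i, m i v = (m i u + m i ub) / 2 := by
      intro i
      rw [hvdef, hmadd, hmsmul, hmsmul]
      ring
    have hvpos : ∀ i, 0 < m i v := by
      intro i
      rw [hmv]
      have := hpos i
      have := hub_pos i
      linarith
    have hvnorm : ‖v‖ ≤ 1 := by
      calc ‖v‖ ≤ ‖(1/2 : ℝ) • u‖ + ‖(1/2 : ℝ) • ub‖ := norm_add_le _ _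
        _ = (1/2) * ‖u‖ + (1/2) * ‖ub‖ := by
            simp only [norm_smul, Real.norm_eq_abs]
            rw [abs_of_pos (by norm_num : (0:ℝ) < 1/2)]
        _ ≤ 1 := by linarith
    by_cases hall : ∀ i, m i u = m i ub
    · -- all margins equal : use strict convexity of the norm
      have hvmub : ∀ i, m i v = m i ub := by
        intro i
        rw [hmv, hall i]
        ring
      have hsub : u - ub ≠ 0 := sub_ne_zero.2 hne
      have hsubpos : 0 < ‖u - ub‖ := norm_pos_iff.2 hsub
      have hpar := parallelogram_law_with_norm ℝ u ub
      have h2u : ‖u‖ * ‖u‖ ≤ 1 := by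
        have := mul_le_mul hu hu (norm_nonneg u) zero_le_one
        linarith
      have h2ub : ‖ub‖ * ‖ub‖ ≤ 1 := by
        have := mul_le_mul hub_norm hub_norm (norm_nonneg ub) zero_le_one
        linarith
      have h4 : ‖u + ub‖ * ‖u + ub‖ < 4 := by
        linarith [mul_pos hsubpos hsubpos]
      have h5 : ‖u + ub‖ < 2 := by
        by_contra h5
        push_neg at h5
        have := mul_le_mul h5 h5 (by norm_num) (norm_nonneg _)
        linarith
      have hvlt : ‖v‖ < 1 := by
        have : v = (1/2 : ℝ) • (u + ub) := by rw [hvdef, smul_add]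
        rw [this, norm_smul, Real.norm_eq_abs]
        rw [abs_of_pos (by norm_num : (0:ℝ) < 1/2)]
        linarith
      have hv0 : 0 < ‖v‖ := by
        rcases eq_or_ne v 0 with h0 | h0
        · exfalso
          have := hvpos ⟨0, hn⟩
          rw [h0, hm0] at this
          exact lt_irrefl 0 this
        · exact norm_pos_iff.2 h0
      set w : EuclideanSpace ℝ (Fin d) := ‖v‖⁻¹ • v with hwdef
      have hwnorm : ‖w‖ = 1 := by
        rw [hwdef, norm_smul, Real.norm_eq_abs, abs_of_pos (inv_pos.2 hv0),
          inv_mul_cancel₀ (ne_of_gt hv0)]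
      have hwpos : ∀ i, 0 < m i w := by
        intro i
        rw [hwdef, hmsmul]
        exact mul_pos (inv_pos.2 hv0) (hvpos i)
      have hinv1 : 1 < ‖v‖⁻¹ := (one_lt_inv₀ hv0).2 hvlt
      have hGw : G w = (‖v‖⁻¹) ^ p * G v := by
        have h1 : ∀ i, m i w ^ p = (‖v‖⁻¹) ^ p * (m i v) ^ p := by
          intro i
          rw [hwdef, hmsmul, Real.mul_rpow (inv_pos.2 hv0).le (hvpos i).le]
        calc G w = ∑ i, m i w ^ p := rfl
          _ = ∑ i, (‖v‖⁻¹) ^ p * (m i v) ^ p := Finset.sum_congr rfl (fun i _ => h1 i)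
          _ = (‖v‖⁻¹) ^ p * ∑ i, (m i v) ^ p := (Finset.mul_sum _ _ _).symm
          _ = (‖v‖⁻¹) ^ p * G v := rfl
      have hGvpos : 0 < G v :=
        Finset.sum_pos (fun i _ => Real.rpow_pos_of_pos (hvpos i) p) Finset.univ_nonempty
      have hppow : (‖v‖⁻¹) ^ p < 1 := Real.rpow_lt_one_of_one_lt_of_neg hinv1 hp0
      have hGvub : G v = G ub :=
        Finset.sum_congr rfl (fun i _ => by rw [hvmub i])
      have hGwlt : G w < G v := by
        calc G w = (‖v‖⁻¹) ^ p * G v := hGw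
          _ < 1 * G v := mul_lt_mul_of_pos_right hppow hGvpos
          _ = G v := one_mul _
      have := hglobal w (le_of_eq hwnorm) hwpos
      rw [hGvub] at hGwlt
      linarith
    · push_neg at hall
      obtain ⟨i₀, hi₀⟩ := hall
      have hterm_le : ∀ i ∈ Finset.univ, (m i v) ^ p ≤ ((m i u) ^ p + (m i ub) ^ p) / 2 := by
        intro i _
        rw [hmv]
        exact rpow_neg_midpoint_le' hp0 (hpos i) (hub_pos i)
      have hterm_lt : (m i₀ v) ^ p < ((m i₀ u) ^ p + (m i₀ ub) ^ p) / 2 := by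
        rw [hmv]
        exact rpow_neg_midpoint_lt' hp0 (hpos i₀) (hub_pos i₀) hi₀
      have hGv : G v < (G u + G ub) / 2 := by
        calc G v = ∑ i, (m i v) ^ p := rfl
          _ < ∑ i, ((m i u) ^ p + (m i ub) ^ p) / 2 :=
              Finset.sum_lt_sum hterm_le ⟨i₀, Finset.mem_univ i₀, hterm_lt⟩
          _ = ((∑ i, (m i u) ^ p) + ∑ i, (m i ub) ^ p) / 2 := by
              rw [← Finset.sum_div, Finset.sum_add_distrib]
          _ = (G u + G ub) / 2 := rfl
      have := hglobal v hvnorm hvpos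
      rw [hEq] at hGv
      linarith
  -- main convergence
  refine ⟨ub, ?_⟩
  rw [Metric.tendsto_atTop]
  intro ε hε
  -- threshold θ
  set θ : ℝ := min γ₀ ((4 * G ub) ^ (1/p)) with hθdef
  have hθpos : 0 < θ := lt_min hγ₀pos (Real.rpow_pos_of_pos (by linarith) _)
  have hθγ₀ : θ ≤ γ₀ := min_le_left _ _
  have hθp : 4 * G ub ≤ θ ^ p := by
    have h1 : θ ≤ (4 * G ub) ^ (1/p) := min_le_right _ _
    have h2 := Real.rpow_le_rpow_of_nonpos hθpos h1 hp0.le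
    rwa [← Real.rpow_mul (by linarith : (0:ℝ) ≤ 4 * G ub), one_div,
      inv_mul_cancel₀ (ne_of_lt hp0), Real.rpow_one] at h2
  -- quantitative gap constant c
  obtain ⟨c, hc1, hc2⟩ : ∃ c : ℝ, G ub < c ∧
      ∀ u, ‖u‖ ≤ 1 → (∀ i, θ ≤ m i u) → ε ≤ ‖u - ub‖ → c ≤ G u := by
    set Kθ : Set (EuclideanSpace ℝ (Fin d)) :=
      {u | ‖u‖ ≤ 1 ∧ (∀ i, θ ≤ m i u) ∧ ε ≤ ‖u - ub‖} with hKθdef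
    by_cases hKθne : Kθ.Nonempty
    · have hKθsub : Kθ ⊆ {u | ∀ i, 0 < m i u} :=
        fun u hu i => lt_of_lt_of_le hθpos (hu.2.1 i)
      have hKθclosed : IsClosed Kθ := by
        have : Kθ = ({u | ‖u‖ ≤ 1} ∩ ⋂ i, {u | θ ≤ m i u}) ∩ {u | ε ≤ ‖u - ub‖} := by
          ext u
          simp [hKθdef, Set.mem_iInter]
          tauto
        rw [this]
        exact (((isClosed_le continuous_norm continuous_const).inter
          (isClosed_iInter fun i => isClosed_le continuous_const (hmcont i))).inter
          (isClosed_le continuous_const ((continuous_id.sub continuous_const).norm)))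
      have hKθcpt : IsCompact Kθ := by
        refine (isCompact_closedBall (0 : EuclideanSpace ℝ (Fin d)) 1).of_isClosed_subset
          hKθclosed ?_
        intro u hu
        simpa [Metric.mem_closedBall, dist_zero_right] using hu.1
      obtain ⟨u₂, hu₂K, hu₂min⟩ := hKθcpt.exists_isMinOn hKθne (hGcont.mono hKθsub)
      have hu₂ne : u₂ ≠ ub := by
        intro h
        have := hu₂K.2.2
        rw [h, sub_self, norm_zero] at this
        linarith
      refine ⟨G u₂, hgap u₂ hu₂K.1 (hKθsub hu₂K) hu₂ne, ?_⟩
      intro u h1 h2 h3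
      exact hu₂min (⟨h1, h2, h3⟩ : u ∈ Kθ)
    · refine ⟨G ub + 1, by linarith, ?_⟩
      intro u h1 h2 h3
      exact absurd ⟨u, h1, h2, h3⟩ hKθne
  have hcub : 0 < c + G ub := by linarith
  -- accuracy ε'
  set ε' : ℝ := min (1/2) ((c - G ub) / (2 * (c + G ub))) with hε'def
  have hε'pos : 0 < ε' := lt_min (by norm_num) (div_pos (by linarith) (by linarith))
  have hε'half : ε' ≤ 1/2 := min_le_left _ _
  have hε'c : ε' * (2 * (c + G ub)) ≤ c - G ub := by
    have h1 : ε' ≤ (c - G ub) / (2 * (c + G ub)) := min_le_right _ _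
    exact (le_div_iff₀ (by linarith)).1 h1
  obtain ⟨Z, hZ1, hZ⟩ := htb ε' hε'pos
  refine ⟨max (Z/θ) 1, ?_⟩
  intro B hB
  have hB1 : (1:ℝ) ≤ B := le_trans (le_max_right _ _) hB
  have hB0 : (0:ℝ) < B := lt_of_lt_of_le one_pos hB1
  have hBθZ : Z ≤ B * θ := by
    have h1 : Z/θ ≤ B := le_trans (le_max_left _ _) hB
    calc Z = (Z/θ) * θ := by field_simp
      _ ≤ B * θ := mul_le_mul_of_nonneg_right h1 hθpos.le
  have hBp0 : 0 < B ^ p := Real.rpow_pos_of_pos hB0 p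
  set uB : EuclideanSpace ℝ (Fin d) := B⁻¹ • wbar B with huBdef
  have hwB : wbar B = B • uB := by
    rw [huBdef, smul_smul, mul_inv_cancel₀ (ne_of_gt hB0), one_smul]
  have hwnorm : ‖wbar B‖ ≤ B := (hwbar B hB0.le).1
  have huBnorm : ‖uB‖ ≤ 1 := by
    rw [huBdef, norm_smul, Real.norm_eq_abs, abs_of_pos (inv_pos.2 hB0)]
    calc B⁻¹ * ‖wbar B‖ ≤ B⁻¹ * B := mul_le_mul_of_nonneg_left hwnorm (inv_pos.2 hB0).le
      _ = 1 := inv_mul_cancel₀ (ne_of_gt hB0)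
  rw [dist_eq_norm]
  by_contra hcon
  push_neg at hcon
  -- upper bound via comparison point B • ub
  have hmub : ∀ i, Z ≤ B * m i ub := by
    intro i
    calc Z ≤ B * θ := hBθZ
      _ ≤ B * m i ub := mul_le_mul_of_nonneg_left
          (le_trans hθγ₀ (hubK.2 i)) hB0.le
  have hupper : Sf (wbar B) ≤ (1 + ε') * C * (B ^ p * G ub) := by
    have hcomp : Sf (wbar B) ≤ Sf (B • ub) := by
      apply hmin B hB0.le
      rw [norm_smul, Real.norm_eq_abs, abs_of_pos hB0]
      calc B * ‖ub‖ ≤ B * 1 := mul_le_mul_of_nonneg_left hub_norm hB0.le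
        _ = B := mul_one B
    refine le_trans hcomp ?_
    have hterm : ∀ i, ℓ (m i (B • ub)) ≤ (1 + ε') * C * (B ^ p * (m i ub) ^ p) := by
      intro i
      rw [hmsmul]
      have h1 := (hZ (B * m i ub) (hmub i)).2
      rwa [Real.mul_rpow hB0.le (hub_pos i).le] at h1
    calc Sf (B • ub) = ∑ i, ℓ (m i (B • ub)) := rfl
      _ ≤ ∑ i, (1 + ε') * C * (B ^ p * (m i ub) ^ p) :=
          Finset.sum_le_sum (fun i _ => hterm i)
      _ = ∑ i, ((1 + ε') * C * B ^ p) * (m i ub) ^ p := by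
          apply Finset.sum_congr rfl
          intro i _
          ring
      _ = ((1 + ε') * C * B ^ p) * ∑ i, (m i ub) ^ p := (Finset.mul_sum _ _ _).symm
      _ = (1 + ε') * C * (B ^ p * G ub) := by
          simp only [hGdef]
          ring
  have hmwB : ∀ i, m i (wbar B) = B * m i uB := by
    intro i
    rw [hwB, hmsmul]
  by_cases hcase : ∀ i, θ ≤ m i uB
  · -- all margins large but direction far from ub : contradicts the gap
    have hcB : c ≤ G uB := hc2 uB huBnorm hcase hcon
    have huBpos : ∀ i, 0 < m i uB := fun i => lt_of_lt_of_le hθpos (hcase i)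
    have hlower : (1 - ε') * C * (B ^ p * G uB) ≤ Sf (wbar B) := by
      have hterm : ∀ i, (1 - ε') * C * B ^ p * (m i uB) ^ p ≤ ℓ (m i (wbar B)) := by
        intro i
        rw [hmwB i]
        have hZle : Z ≤ B * m i uB :=
          le_trans hBθZ (mul_le_mul_of_nonneg_left (hcase i) hB0.le)
        have h1 := (hZ (B * m i uB) hZle).1
        rwa [Real.mul_rpow hB0.le (huBpos i).le, ← mul_assoc] at h1
      calc (1 - ε') * C * (B ^ p * G uB)
          = ((1 - ε') * C * B ^ p) * ∑ i, (m i uB) ^ p := by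
            simp only [hGdef]
            ring
        _ = ∑ i, (1 - ε') * C * B ^ p * (m i uB) ^ p := Finset.mul_sum _ _ _
        _ ≤ ∑ i, ℓ (m i (wbar B)) := Finset.sum_le_sum (fun i _ => hterm i)
        _ = Sf (wbar B) := rfl
    have hGuB : (1 - ε') * C * (B ^ p * c) ≤ (1 - ε') * C * (B ^ p * G uB) := by
      apply mul_le_mul_of_nonneg_left _ (by nlinarith : (0:ℝ) ≤ (1 - ε') * C)
      exact mul_le_mul_of_nonneg_left hcB hBp0.le
    have hkey : (1 - ε') * C * (B ^ p * c) ≤ (1 + ε') * C * (B ^ p * G ub) := by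
      linarith
    have hCB : 0 < C * B ^ p := mul_pos hC0 hBp0
    have hq : (1 - ε') * c ≤ (1 + ε') * G ub := by
      have h1 : (C * B ^ p) * ((1 - ε') * c) ≤ (C * B ^ p) * ((1 + ε') * G ub) := by
        calc (C * B ^ p) * ((1 - ε') * c) = (1 - ε') * C * (B ^ p * c) := by ring
          _ ≤ (1 + ε') * C * (B ^ p * G ub) := hkey
          _ = (C * B ^ p) * ((1 + ε') * G ub) := by ring
      exact le_of_mul_le_mul_left h1 hCB
    nlinarith
  · -- some margin small : loss too large
    push_neg at hcase
    obtain ⟨i₀, hi₀⟩ := hcase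
    have h1 : ℓ (B * θ) ≤ Sf (wbar B) := by
      have h2 : ℓ (B * θ) ≤ ℓ (m i₀ (wbar B)) := by
        rw [hmwB i₀]
        exact hanti.antitone (mul_le_mul_of_nonneg_left hi₀.le hB0.le)
      calc ℓ (B * θ) ≤ ℓ (m i₀ (wbar B)) := h2
        _ ≤ ∑ i, ℓ (m i (wbar B)) :=
            Finset.single_le_sum (f := fun i => ℓ (m i (wbar B)))
              (fun j _ => hℓ0 _) (Finset.mem_univ i₀)
        _ = Sf (wbar B) := rfl
    have h3 := (hZ (B * θ) hBθZ).1
    rw [Real.mul_rpow hB0.le hθpos.le] at h3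
    -- combine : (1-ε') C B^p θ^p ≤ Sf(wbar B) ≤ (1+ε') C B^p G ub, θ^p ≥ 4 G ub
    have hCBp : 0 < C * B ^ p := mul_pos hC0 hBp0
    have h4 : (1 - ε') * C * (B ^ p * θ ^ p) ≤ (1 + ε') * C * (B ^ p * G ub) := by
      calc (1 - ε') * C * (B ^ p * θ ^ p) = (1 - ε') * C * (B ^ p * θ ^ p) := rfl
        _ ≤ Sf (wbar B) := by
            refine le_trans (le_of_eq (by ring)) (le_trans h3 h1)
        _ ≤ (1 + ε') * C * (B ^ p * G ub) := hupper
    have h5 : (C * B ^ p) * ((1 - ε') * θ ^ p) ≤ (C * B ^ p) * ((1 + ε') * G ub) := by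
      calc (C * B ^ p) * ((1 - ε') * θ ^ p) = (1 - ε') * C * (B ^ p * θ ^ p) := by ring
        _ ≤ (1 + ε') * C * (B ^ p * G ub) := h4
        _ = (C * B ^ p) * ((1 + ε') * G ub) := by ring
    have h6 : (1 - ε') * θ ^ p ≤ (1 + ε') * G ub := le_of_mul_le_mul_left h5 hCBp
    nlinarith
end
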